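/- arXiv:2004.10367 — 5 statements merged into one kernel-verified Lean document; each statement's English description precedes it below -/
import Mathlib

section
/- Let t be a positive integer and let G be a graph with n = v(G) ≥ 9t vertices. Let q = 1 − e(G)/(n choose 2) and l = ⌊n/(9t)⌋. If 6t·(70q)^{l²} ≤ 1, then G has a K_t minor. -/
open Real

section DenseMinorHelpers

open Finset
set_option linter.unusedSectionVars false
set_option linter.unusedVariables false
variable {V : Type} [Fintype V] [DecidableEq V] (G : SimpleGraph V)

lemma induce_singleton_connected (v : V) : (G.induce ({v} : Set V)).Connected := by
  haveI : Nonempty (({v} : Set V)) := ⟨⟨v, rfl⟩⟩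
  constructor
  intro a b
  have : a = b := Subsingleton.elim a b
  exact this ▸ SimpleGraph.Reachable.refl a

lemma induce_insert_connected {s : Finset V} {v w : V} (hv : v ∉ s) (hw : w ∈ s)
    (hadj : G.Adj v w) (hconn : (G.induce (↑s : Set V)).Connected) :
    (G.induce (↑(insert v s) : Set V)).Connected := by
  have h : (↑(insert v s) : Set V) = {v} ∪ ↑s := by
    rw [Finset.coe_insert, Set.insert_eq]
  rw [h]
  exact SimpleGraph.connected_induce_union (induce_singleton_connected G v).preconnected hconn.preconnected rfl hw hadj

lemma sum_card_filter_comm {α β : Type} [DecidableEq α] [DecidableEq β]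
    (C : Finset α) (Y : Finset β) (r : α → β → Prop) [∀ a b, Decidable (r a b)] :
    ∑ v ∈ C, (Y.filter (fun u => r v u)).card = ∑ u ∈ Y, (C.filter (fun v => r v u)).card := by
  simp_rw [Finset.card_filter]
  exact Finset.sum_comm

lemma third_bound {α : Type} (C : Finset α) (x : α → ℝ) (hx : ∀ v ∈ C, 0 ≤ x v)
    (X : ℝ) (hX : ∑ v ∈ C, x v ≤ X) [DecidablePred (fun v => 3 * X < (C.card : ℝ) * x v)] :
    3 * ((C.filter (fun v => 3 * X < (C.card : ℝ) * x v)).card : ℝ) ≤ (C.card : ℝ) := by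
  set bad := C.filter (fun v => 3 * X < (C.card : ℝ) * x v) with hbad
  have hX0 : 0 ≤ X := le_trans (Finset.sum_nonneg hx) hX
  rcases eq_or_lt_of_le hX0 with h0 | hpos
  · -- X = 0 : bad is empty
    have : ∀ v ∈ C, x v = 0 := by
      intro v hv
      have h1 : ∑ w ∈ C, x w = 0 := le_antisymm (h0 ▸ hX) (Finset.sum_nonneg hx)
      exact (Finset.sum_eq_zero_iff_of_nonneg hx).mp h1 v hv
    have : bad = ∅ := by
      rw [hbad, Finset.filter_eq_empty_iff]
      intro v hv
      rw [this v hv, ← h0]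
      simp
    simp [this]
  · have hlow : ((bad.card : ℝ)) * (3 * X) ≤ ∑ v ∈ bad, (C.card : ℝ) * x v := by
      have h : ∑ _v ∈ bad, (3 * X) ≤ ∑ v ∈ bad, (C.card : ℝ) * x v :=
        Finset.sum_le_sum (fun v hv => le_of_lt (Finset.mem_filter.mp hv).2)
      simpa [Finset.sum_const, nsmul_eq_mul, mul_comm] using h
    have hhigh : ∑ v ∈ bad, (C.card : ℝ) * x v ≤ (C.card : ℝ) * X := by
      rw [← Finset.mul_sum]
      refine mul_le_mul_of_nonneg_left ?_ (Nat.cast_nonneg _)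
      exact le_trans (Finset.sum_le_sum_of_subset_of_nonneg (Finset.filter_subset _ _)
        (fun v hv _ => hx v hv)) hX
    nlinarith [le_trans hlow hhigh]

lemma exists_le_three_avg {α : Type} [DecidableEq α] (C : Finset α) (hC : C.Nonempty)
    (x z : α → ℝ) (hx : ∀ v ∈ C, 0 ≤ x v) (hz : ∀ v ∈ C, 0 ≤ z v)
    (X Z : ℝ) (hX : ∑ v ∈ C, x v ≤ X) (hZ : ∑ v ∈ C, z v ≤ Z) :
    ∃ v ∈ C, (C.card : ℝ) * x v ≤ 3 * X ∧ (C.card : ℝ) * z v ≤ 3 * Z := by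
  classical
  set bad1 := C.filter (fun v => 3 * X < (C.card : ℝ) * x v)
  set bad2 := C.filter (fun v => 3 * Z < (C.card : ℝ) * z v)
  have h1 := third_bound C x hx X hX
  have h2 := third_bound C z hz Z hZ
  have hcard : ((bad1 ∪ bad2).card : ℝ) < C.card := by
    have := Finset.card_union_le bad1 bad2
    have hc1 : 0 < (C.card : ℝ) := by
      have := Finset.card_pos.mpr hC
      exact_mod_cast this
    calc ((bad1 ∪ bad2).card : ℝ) ≤ (bad1.card : ℝ) + bad2.card := by exact_mod_cast this
    _ ≤ (C.card : ℝ)/3 + (C.card : ℝ)/3 := by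
          have a1 : (bad1.card : ℝ) ≤ (C.card : ℝ)/3 := by linarith
          have a2 : (bad2.card : ℝ) ≤ (C.card : ℝ)/3 := by linarith
          linarith
    _ < C.card := by linarith
  have hne : ¬ (C ⊆ bad1 ∪ bad2) := by
    intro hsub
    have : (C.card : ℝ) ≤ ((bad1 ∪ bad2).card : ℝ) := by
      exact_mod_cast Finset.card_le_card hsub
    linarith
  obtain ⟨v, hvC, hvb⟩ := Finset.not_subset.mp hne
  refine ⟨v, hvC, ?_, ?_⟩
  · by_contra h
    exact hvb (Finset.mem_union_left _ (Finset.mem_filter.mpr ⟨hvC, lt_of_not_ge h⟩))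
  · by_contra h
    exact hvb (Finset.mem_union_right _ (Finset.mem_filter.mpr ⟨hvC, lt_of_not_ge h⟩))
set_option linter.unusedVariables false
set_option maxHeartbeats 1000000

variable {V : Type} [Fintype V] [DecidableEq V]


lemma point_bound {N w S : ℝ} (hN : 0 < N) (hS : 0 ≤ S)
    (h : (27/140) * N * w ≤ 12 * N * S) : w ≤ 63 * S := by
  nlinarith [mul_nonneg hN.le hS]

lemma builder (G : SimpleGraph V) [DecidableRel G.Adj]
    (Q : ℝ) (hQ0 : 0 ≤ Q) (hQ1 : 70 * Q ≤ 1)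
    (b : ℕ) (hb1 : 1 ≤ b)
    (A : Finset V)
    (hN : (0:ℝ) < (Fintype.card V : ℝ))
    (hA : (5/12 : ℝ) * (Fintype.card V : ℝ) ≤ A.card)
    (hdeg : ∀ v ∈ A, ((Gᶜ.degree v : ℝ)) ≤ 4 * Q * (Fintype.card V : ℝ))
    (hbN : (b : ℝ) ≤ (Fintype.card V : ℝ) / 6)
    (s : ℕ) (Ys : ℕ → Finset V)
    (hYs : ∀ j, j < s → ((Ys j).card : ℝ) ≤
      4 * Q * (Fintype.card V : ℝ) * (63 * Q) ^ (b - 1))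
    (hs : (s : ℝ) * ((63 * Q) ^ b) ^ (b - 1) < 1) :
    ∃ B : Finset V, B ⊆ A ∧ B.card = b ∧ (G.induce (↑B : Set V)).Connected ∧
      (∀ j, j < s → ∃ v ∈ B, v ∉ Ys j) ∧
      ((((A \ B).filter (fun u => ¬ ∃ w ∈ B, G.Adj u w)).card : ℝ) ≤
        4 * Q * (Fintype.card V : ℝ) * (63 * Q) ^ (b - 1)) := by
  set N : ℝ := (Fintype.card V : ℝ) with hNdef
  have hQ63 : 0 ≤ 63 * Q := by linarith
  have hQ63le : 63 * Q ≤ 1 := by linarith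
  have hQNle : 4 * Q * N ≤ 4 * N / 70 := by nlinarith
  -- main induction
  have main : ∀ k, 1 ≤ k → k ≤ b →
      ∃ B : Finset V, B ⊆ A ∧ B.card = k ∧ (G.induce (↑B : Set V)).Connected ∧
        ((((A \ B).filter (fun u => ¬ ∃ w ∈ B, G.Adj u w)).card : ℝ) ≤
          4 * Q * N * (63 * Q) ^ (k - 1)) ∧
        ((((Finset.range s).filter (fun j => ∀ v ∈ B, v ∈ Ys j)).card : ℝ) ≤
          (s : ℝ) * ((63 * Q) ^ b) ^ (k - 1)) := by
    intro k hk1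
    induction k, hk1 using Nat.le_induction with
    | base =>
      intro _
      -- pick any vertex of A
      have hAne : A.Nonempty := by
        rw [← Finset.card_pos]
        have h0 : (0:ℝ) < (A.card : ℝ) := lt_of_lt_of_le (by nlinarith) hA
        exact_mod_cast h0
      obtain ⟨v, hv⟩ := hAne
      refine ⟨{v}, Finset.singleton_subset_iff.mpr hv, Finset.card_singleton v, ?_, ?_, ?_⟩
      · rw [Finset.coe_singleton]
        exact induce_singleton_connected G v
      · -- blind spot of {v} is inside compl-neighborhood of v
        have hsub : (A \ {v}).filter (fun u => ¬ ∃ w ∈ ({v} : Finset V), G.Adj u w) ⊆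
            Gᶜ.neighborFinset v := by
          intro u hu
          simp only [Finset.mem_filter, Finset.mem_sdiff, Finset.mem_singleton] at hu
          obtain ⟨⟨huA, huv⟩, hne⟩ := hu
          rw [SimpleGraph.mem_neighborFinset, SimpleGraph.compl_adj]
          push_neg at hne
          exact ⟨fun h => huv h.symm, fun h => hne v rfl h.symm⟩
        calc ((((A \ {v}).filter (fun u => ¬ ∃ w ∈ ({v} : Finset V), G.Adj u w)).card : ℝ))
            ≤ ((Gᶜ.neighborFinset v).card : ℝ) := by exact_mod_cast Finset.card_le_card hsub
          _ = (Gᶜ.degree v : ℝ) := by rw [SimpleGraph.card_neighborFinset_eq_degree]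
          _ ≤ 4 * Q * N := hdeg v hv
          _ = 4 * Q * N * (63 * Q) ^ (1 - 1) := by norm_num
      · calc ((((Finset.range s).filter (fun j => ∀ u ∈ ({v} : Finset V), u ∈ Ys j)).card : ℝ))
            ≤ ((Finset.range s).card : ℝ) := by
              exact_mod_cast Finset.card_le_card (Finset.filter_subset _ _)
          _ = (s : ℝ) := by rw [Finset.card_range]
          _ = (s : ℝ) * ((63 * Q) ^ b) ^ (1 - 1) := by norm_num
    | succ k hk1 IH =>
      intro hkb
      obtain ⟨B, hBA, hBcard, hBconn, hYb, hJb⟩ := IH (le_trans (Nat.le_succ k) hkb)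
      set Y : Finset V := (A \ B).filter (fun u => ¬ ∃ w ∈ B, G.Adj u w) with hYdef
      set C : Finset V := (A \ B).filter (fun u => ∃ w ∈ B, G.Adj u w) with hCdef
      set J : Finset ℕ := (Finset.range s).filter (fun j => ∀ v ∈ B, v ∈ Ys j) with hJdef
      have hYb4 : (Y.card : ℝ) ≤ 4 * Q * N := by
        refine le_trans hYb ?_
        have h1 : (63 * Q) ^ (k - 1) ≤ 1 := pow_le_one₀ hQ63 hQ63le
        nlinarith [mul_le_mul_of_nonneg_left h1 (by positivity : (0:ℝ) ≤ 4*Q*N)]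
      -- C ∪ Y = A \ B
      have hCY : C.card + Y.card = (A \ B).card := by
        rw [hCdef, hYdef]
        exact Finset.card_filter_add_card_filter_not _
      have hABcard : (A \ B).card = A.card - k := by
        rw [Finset.card_sdiff_of_subset hBA, hBcard]
      have hkN : (k : ℝ) ≤ N / 6 := by
        have : (k : ℝ) ≤ (b : ℝ) := by exact_mod_cast le_trans (Nat.le_succ k) hkb
        linarith
      have hAk : (k : ℝ) ≤ (A.card : ℝ) := by
        have h18 : (0:ℝ) < N := hN
        nlinarith
      have hCcard : (27 / 140 : ℝ) * N ≤ (C.card : ℝ) := by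
        have h1 : ((A \ B).card : ℝ) = (A.card : ℝ) - k := by
          rw [hABcard]
          rw [Nat.cast_sub]
          exact_mod_cast hAk
        have h2 : (C.card : ℝ) = ((A \ B).card : ℝ) - Y.card := by
          have := hCY
          push_cast [← this]
          ring
        rw [h2, h1]
        nlinarith
      have hCpos : (0:ℝ) < (C.card : ℝ) := by nlinarith
      have hCne : C.Nonempty := by
        rw [← Finset.card_pos]
        exact_mod_cast hCpos
      -- the two weight functions
      set x : V → ℝ := fun v => (((Y.filter (fun u => ¬ G.Adj v u)).card : ℝ)) with hxdef
      set z : V → ℝ := fun v => (((J.filter (fun j => v ∈ Ys j)).card : ℝ)) with hzdef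
      have hXsum : ∑ v ∈ C, x v ≤ (4 * Q * N * (63 * Q) ^ (k - 1)) * (4 * Q * N) := by
        have hswap : ∑ v ∈ C, ((Y.filter (fun u => ¬ G.Adj v u)).card) =
            ∑ u ∈ Y, ((C.filter (fun v => ¬ G.Adj v u)).card) :=
          sum_card_filter_comm C Y (fun v u => ¬ G.Adj v u)
        have hper : ∀ u ∈ Y, ((C.filter (fun v => ¬ G.Adj v u)).card : ℝ) ≤ 4 * Q * N := by
          intro u hu
          have hsub : C.filter (fun v => ¬ G.Adj v u) ⊆ Gᶜ.neighborFinset u := by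
            intro v hv
            simp only [Finset.mem_filter] at hv
            obtain ⟨hvC, hnadj⟩ := hv
            rw [SimpleGraph.mem_neighborFinset, SimpleGraph.compl_adj]
            have hvY : v ∉ Y := by
              rw [hYdef]
              simp only [Finset.mem_filter, not_and, not_not]
              intro _
              rw [hCdef] at hvC
              exact (Finset.mem_filter.mp hvC).2
            constructor
            · intro h; exact hvY (h ▸ hu)
            · intro h; exact hnadj h.symm
          have huA : u ∈ A := by
            rw [hYdef] at hu
            exact (Finset.mem_sdiff.mp (Finset.mem_filter.mp hu).1).1
          calc ((C.filter (fun v => ¬ G.Adj v u)).card : ℝ)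
              ≤ ((Gᶜ.neighborFinset u).card : ℝ) := by exact_mod_cast Finset.card_le_card hsub
            _ = (Gᶜ.degree u : ℝ) := by rw [SimpleGraph.card_neighborFinset_eq_degree]
            _ ≤ 4 * Q * N := hdeg u huA
        calc ∑ v ∈ C, x v = ∑ u ∈ Y, ((C.filter (fun v => ¬ G.Adj v u)).card : ℝ) := by
              simp only [hxdef]; exact_mod_cast hswap
          _ ≤ ∑ _u ∈ Y, (4 * Q * N) := Finset.sum_le_sum hper
          _ = (Y.card : ℝ) * (4 * Q * N) := by rw [Finset.sum_const, nsmul_eq_mul]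
          _ ≤ (4 * Q * N * (63 * Q) ^ (k - 1)) * (4 * Q * N) := by
              have h40 : (0:ℝ) ≤ 4 * Q * N := by positivity
              exact mul_le_mul_of_nonneg_right hYb h40
      have hZsum : ∑ v ∈ C, z v ≤
          ((s : ℝ) * ((63 * Q) ^ b) ^ (k - 1)) * (4 * Q * N * (63 * Q) ^ (b - 1)) := by
        have hswap : ∑ v ∈ C, ((J.filter (fun j => v ∈ Ys j)).card) =
            ∑ j ∈ J, ((C.filter (fun v => v ∈ Ys j)).card) :=
          sum_card_filter_comm C J (fun v j => v ∈ Ys j)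
        have hper : ∀ j ∈ J, ((C.filter (fun v => v ∈ Ys j)).card : ℝ) ≤
            4 * Q * N * (63 * Q) ^ (b - 1) := by
          intro j hj
          have hjs : j < s := by
            rw [hJdef] at hj
            exact Finset.mem_range.mp (Finset.mem_filter.mp hj).1
          refine le_trans ?_ (hYs j hjs)
          have : C.filter (fun v => v ∈ Ys j) ⊆ Ys j := fun v hv => (Finset.mem_filter.mp hv).2
          exact_mod_cast Finset.card_le_card this
        calc ∑ v ∈ C, z v = ∑ j ∈ J, ((C.filter (fun v => v ∈ Ys j)).card : ℝ) := by
              simp only [hzdef]; exact_mod_cast hswap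
          _ ≤ ∑ _j ∈ J, (4 * Q * N * (63 * Q) ^ (b - 1)) := Finset.sum_le_sum hper
          _ = (J.card : ℝ) * (4 * Q * N * (63 * Q) ^ (b - 1)) := by
              rw [Finset.sum_const, nsmul_eq_mul]
          _ ≤ ((s : ℝ) * ((63 * Q) ^ b) ^ (k - 1)) * (4 * Q * N * (63 * Q) ^ (b - 1)) := by
              have h40 : (0:ℝ) ≤ 4 * Q * N * (63 * Q) ^ (b - 1) := by positivity
              exact mul_le_mul_of_nonneg_right hJb h40
      obtain ⟨v, hvC, hxv, hzv⟩ := exists_le_three_avg C hCne x z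
        (fun v _ => by positivity) (fun v _ => by positivity) _ _ hXsum hZsum
      -- derive pointwise bounds
      have hxv' : x v ≤ 63 * Q * (4 * Q * N * (63 * Q) ^ (k - 1)) := by
        have hx0 : 0 ≤ x v := by positivity
        have hS0 : (0:ℝ) ≤ Q * (4 * Q * N * (63 * Q) ^ (k - 1)) := by positivity
        have h1 : (27/140) * N * (x v) ≤ 12 * N * (Q * (4 * Q * N * (63 * Q) ^ (k - 1))) := by
          have h2 := mul_le_mul_of_nonneg_right hCcard hx0
          nlinarith [h2, hxv]
        have := point_bound hN hS0 h1
        linarith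
      have hzv' : z v ≤ (63 * Q) ^ b * ((s : ℝ) * ((63 * Q) ^ b) ^ (k - 1)) := by
        have hz0 : 0 ≤ z v := by positivity
        have hbsplit : (63 * Q) ^ b = 63 * Q * (63 * Q) ^ (b - 1) := by
          nth_rewrite 1 [show b = (b-1)+1 from by omega]
          rw [pow_succ]
          ring
        have hS0 : (0:ℝ) ≤ Q * ((63 * Q) ^ (b-1) * ((s : ℝ) * ((63 * Q) ^ b) ^ (k - 1))) := by
          positivity
        have h1 : (27/140) * N * (z v) ≤
            12 * N * (Q * ((63 * Q) ^ (b-1) * ((s : ℝ) * ((63 * Q) ^ b) ^ (k - 1)))) := by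
          have h2 := mul_le_mul_of_nonneg_right hCcard hz0
          nlinarith [h2, hzv]
        have h3 := point_bound hN hS0 h1
        calc z v ≤ 63 * (Q * ((63 * Q) ^ (b-1) * ((s : ℝ) * ((63 * Q) ^ b) ^ (k - 1)))) := h3
          _ = (63 * Q) ^ b * ((s : ℝ) * ((63 * Q) ^ b) ^ (k - 1)) := by rw [hbsplit]; ring
      -- build the new block
      have hvAB : v ∈ A \ B := by
        rw [hCdef] at hvC
        exact (Finset.mem_filter.mp hvC).1
      have hvA : v ∈ A := (Finset.mem_sdiff.mp hvAB).1
      have hvB : v ∉ B := (Finset.mem_sdiff.mp hvAB).2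
      obtain ⟨w, hwB, hadj⟩ := by
        rw [hCdef] at hvC
        exact (Finset.mem_filter.mp hvC).2
      refine ⟨insert v B, ?_, ?_, ?_, ?_, ?_⟩
      · exact Finset.insert_subset hvA hBA
      · rw [Finset.card_insert_of_notMem hvB, hBcard]
      · exact induce_insert_connected G hvB hwB hadj hBconn
      · -- new blind spot bound
        have hsub : (A \ insert v B).filter (fun u => ¬ ∃ w ∈ insert v B, G.Adj u w) ⊆
            Y.filter (fun u => ¬ G.Adj v u) := by
          intro u hu
          simp only [Finset.mem_filter, Finset.mem_sdiff, Finset.mem_insert] at hu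
          obtain ⟨⟨huA, huB⟩, hne⟩ := hu
          push_neg at hne huB
          rw [Finset.mem_filter, hYdef, Finset.mem_filter, Finset.mem_sdiff]
          refine ⟨⟨⟨huA, huB.2⟩, ?_⟩, fun h => hne v (Or.inl rfl) h.symm⟩
          push_neg
          intro w' hw'
          exact hne w' (Or.inr hw')
        calc ((((A \ insert v B).filter (fun u => ¬ ∃ w ∈ insert v B, G.Adj u w)).card : ℝ))
            ≤ x v := by simp only [hxdef]; exact_mod_cast Finset.card_le_card hsub
          _ ≤ 63 * Q * (4 * Q * N * (63 * Q) ^ (k - 1)) := hxv'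
          _ = 4 * Q * N * (63 * Q) ^ (k + 1 - 1) := by
              have : k + 1 - 1 = (k - 1) + 1 := by omega
              rw [this, pow_succ]
              ring
      · -- new J bound
        have hsub : (Finset.range s).filter (fun j => ∀ u ∈ insert v B, u ∈ Ys j) ⊆
            J.filter (fun j => v ∈ Ys j) := by
          intro j hj
          simp only [Finset.mem_filter, Finset.mem_range, Finset.mem_insert] at hj
          obtain ⟨hjs, hall⟩ := hj
          rw [Finset.mem_filter, hJdef, Finset.mem_filter, Finset.mem_range]
          exact ⟨⟨hjs, fun u hu => hall u (Or.inr hu)⟩, hall v (Or.inl rfl)⟩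
        calc ((((Finset.range s).filter (fun j => ∀ u ∈ insert v B, u ∈ Ys j)).card : ℝ))
            ≤ z v := by simp only [hzdef]; exact_mod_cast Finset.card_le_card hsub
          _ ≤ (63 * Q) ^ b * ((s : ℝ) * ((63 * Q) ^ b) ^ (k - 1)) := hzv'
          _ = (s : ℝ) * ((63 * Q) ^ b) ^ (k + 1 - 1) := by
              have : k + 1 - 1 = (k - 1) + 1 := by omega
              rw [this, pow_succ]
              ring
  -- conclude from k = b
  obtain ⟨B, hBA, hBcard, hBconn, hYb, hJb⟩ := main b hb1 le_rfl
  refine ⟨B, hBA, hBcard, hBconn, ?_, hYb⟩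
  intro j hjs
  by_contra h
  push_neg at h
  have hjJ : j ∈ (Finset.range s).filter (fun j => ∀ v ∈ B, v ∈ Ys j) :=
    Finset.mem_filter.mpr ⟨Finset.mem_range.mpr hjs, h⟩
  have h1 : (1 : ℝ) ≤ (((Finset.range s).filter (fun j => ∀ v ∈ B, v ∈ Ys j)).card : ℝ) := by
    have := Finset.card_pos.mpr ⟨j, hjJ⟩
    exact_mod_cast this
  linarith [lt_of_le_of_lt (le_trans h1 hJb) hs]
lemma outer (G : SimpleGraph V) [DecidableRel G.Adj]
    (Q : ℝ) (hQ0 : 0 ≤ Q) (hQ1 : 70 * Q ≤ 1)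
    (t l : ℕ) (ht : 2 ≤ t) (hl : 1 ≤ l)
    (h9 : 9 * t * l ≤ Fintype.card V)
    (hN : (0:ℝ) < (Fintype.card V : ℝ))
    (W : Finset V)
    (hW : (3/4 : ℝ) * (Fintype.card V : ℝ) ≤ W.card)
    (hWdeg : ∀ v ∈ W, (Gᶜ.degree v : ℝ) ≤ 4 * Q * (Fintype.card V : ℝ))
    (hfinal : ∀ i : ℕ, i ≤ t → (i : ℝ) * ((63 * Q) ^ (3 * l)) ^ (3 * l - 1) < 1) :
    ∃ B : ℕ → Finset V,
      (∀ j, j < t → (B j).card = 3 * l ∧ (G.induce (↑(B j) : Set V)).Connected) ∧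
      (∀ j1 j2, j1 < j2 → j2 < t → Disjoint (B j1) (B j2)) ∧
      (∀ j1 j2, j1 < j2 → j2 < t → ∃ v ∈ B j2, ∃ w ∈ B j1, G.Adj v w) := by
  set N : ℝ := (Fintype.card V : ℝ) with hNdef
  have h3lt : (3 * l * t : ℝ) ≤ N / 3 := by
    have h : ((9 * t * l : ℕ) : ℝ) ≤ N := by rw [hNdef]; exact_mod_cast h9
    push_cast at h
    nlinarith
  have h3l6 : ((3 * l : ℕ) : ℝ) ≤ N / 6 := by
    have h1 : (18 * l : ℝ) ≤ 9 * (t : ℝ) * l := by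
      have : (2:ℝ) ≤ (t:ℝ) := by exact_mod_cast ht
      have : (0:ℝ) ≤ (l:ℝ) := Nat.cast_nonneg l
      nlinarith
    have h2 : ((9 * t * l : ℕ) : ℝ) ≤ N := by rw [hNdef]; exact_mod_cast h9
    push_cast at h2 ⊢
    nlinarith
  have main : ∀ i, i ≤ t →
      ∃ B : ℕ → Finset V,
        (∀ j, j < i → (B j) ⊆ W ∧ (B j).card = 3 * l ∧ (G.induce (↑(B j) : Set V)).Connected) ∧
        (∀ j1 j2, j1 < j2 → j2 < i → Disjoint (B j1) (B j2)) ∧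
        (∀ j1 j2, j1 < j2 → j2 < i → ∃ v ∈ B j2, ∃ w ∈ B j1, G.Adj v w) ∧
        (∀ j, j < i →
          ((((W \ (Finset.range i).biUnion B).filter
              (fun u => ¬ ∃ w ∈ B j, G.Adj u w)).card : ℝ) ≤
            4 * Q * N * (63 * Q) ^ (3 * l - 1))) := by
    intro i
    induction i with
    | zero =>
      intro _
      exact ⟨fun _ => ∅, fun j hj => absurd hj (Nat.not_lt_zero j),
        fun j1 j2 _ hj2 => absurd hj2 (Nat.not_lt_zero j2),
        fun j1 j2 _ hj2 => absurd hj2 (Nat.not_lt_zero j2),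
        fun j hj => absurd hj (Nat.not_lt_zero j)⟩
    | succ i IH =>
      intro hit
      obtain ⟨B, hBprop, hBdisj, hBjoin, hBY⟩ := IH (le_trans (Nat.le_succ i) hit)
      set U : Finset V := (Finset.range i).biUnion B with hUdef
      set A : Finset V := W \ U with hAdef
      have hUcard : (U.card : ℝ) ≤ 3 * l * i := by
        have h1 : U.card ≤ ∑ j ∈ Finset.range i, (B j).card := Finset.card_biUnion_le
        have h2 : ∑ j ∈ Finset.range i, (B j).card = 3 * l * i := by
          rw [Finset.sum_congr rfl (fun j hj => (hBprop j (Finset.mem_range.mp hj)).2.1)]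
          rw [Finset.sum_const, Finset.card_range, smul_eq_mul, mul_comm]
        calc (U.card : ℝ) ≤ ((∑ j ∈ Finset.range i, (B j).card : ℕ) : ℝ) := by
              exact_mod_cast h1
          _ = ((3 * l * i : ℕ) : ℝ) := by rw [h2]
          _ = 3 * l * i := by push_cast; ring
      have hAcard : (5/12 : ℝ) * N ≤ (A.card : ℝ) := by
        have h1 : W.card ≤ A.card + U.card := Finset.card_le_card_sdiff_add_card
        have h2 : (W.card : ℝ) ≤ (A.card : ℝ) + (U.card : ℝ) := by exact_mod_cast h1
        have hiT : (i : ℝ) ≤ (t : ℝ) := by exact_mod_cast le_trans (Nat.le_succ i) hit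
        have hl0 : (0:ℝ) ≤ 3 * (l:ℝ) := by positivity
        have : (3 * (l:ℝ) * i) ≤ 3 * l * t := by nlinarith
        nlinarith
      have hAdeg : ∀ v ∈ A, (Gᶜ.degree v : ℝ) ≤ 4 * Q * N := fun v hv =>
        hWdeg v (Finset.mem_sdiff.mp hv).1
      -- apply the builder
      obtain ⟨Bi, hBiA, hBicard, hBiconn, hBijoin, hBiY⟩ :=
        builder G Q hQ0 hQ1 (3 * l) (by omega) A hN hAcard hAdeg h3l6
          i (fun j => A.filter (fun u => ¬ ∃ w ∈ B j, G.Adj u w))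
          (fun j hj => hBY j hj) (hfinal i (le_trans (Nat.le_succ i) hit))
      refine ⟨Function.update B i Bi, ?_, ?_, ?_, ?_⟩
      · intro j hj
        by_cases hji : j = i
        · subst hji
          rw [Function.update_self]
          exact ⟨le_trans hBiA (Finset.sdiff_subset), hBicard, hBiconn⟩
        · rw [Function.update_of_ne hji]
          exact hBprop j (by omega)
      · intro j1 j2 hj12 hj2
        have hj1i : j1 ≠ i := by omega
        rw [Function.update_of_ne hj1i]
        by_cases hj2i : j2 = i
        · subst hj2i
          rw [Function.update_self]
          have hBj1U : B j1 ⊆ U := by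
            rw [hUdef]
            exact Finset.subset_biUnion_of_mem B (Finset.mem_range.mpr (by omega))
          have hd : Disjoint Bi (B j1) :=
            Finset.disjoint_of_subset_right hBj1U
              (Finset.disjoint_of_subset_left hBiA Finset.sdiff_disjoint)
          exact hd.symm
        · rw [Function.update_of_ne hj2i]
          exact hBdisj j1 j2 hj12 (by omega)
      · intro j1 j2 hj12 hj2
        have hj1i : j1 ≠ i := by omega
        rw [Function.update_of_ne hj1i]
        by_cases hj2i : j2 = i
        · subst hj2i
          rw [Function.update_self]
          obtain ⟨v, hvBi, hvY⟩ := hBijoin j1 (by omega)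
          have hvA : v ∈ A := hBiA hvBi
          have hh : ¬ (¬ ∃ w ∈ B j1, G.Adj v w) := by
            intro hcon
            exact hvY (Finset.mem_filter.mpr ⟨hvA, hcon⟩)
          push_neg at hh
          obtain ⟨w, hw, hadj⟩ := hh
          exact ⟨v, hvBi, w, hw, hadj⟩
        · rw [Function.update_of_ne hj2i]
          exact hBjoin j1 j2 hj12 (by omega)
      · intro j hj
        have hUsub : U ⊆ (Finset.range (i+1)).biUnion (Function.update B i Bi) := by
          rw [hUdef]
          intro u hu
          obtain ⟨j', hj', hu'⟩ := Finset.mem_biUnion.mp hu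
          have hj'i : j' ≠ i := by
            have := Finset.mem_range.mp hj'
            omega
          refine Finset.mem_biUnion.mpr ⟨j', ?_, ?_⟩
          · exact Finset.mem_range.mpr (by have := Finset.mem_range.mp hj'; omega)
          · rw [Function.update_of_ne hj'i]; exact hu'
        by_cases hji : j = i
        · -- new block: use builder's blind-spot bound
          rw [hji, Function.update_self]
          refine le_trans ?_ hBiY
          have hsub : (W \ (Finset.range (i+1)).biUnion (Function.update B i Bi)).filter
              (fun u => ¬ ∃ w ∈ Bi, G.Adj u w) ⊆
              (A \ Bi).filter (fun u => ¬ ∃ w ∈ Bi, G.Adj u w) := by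
            intro u hu
            obtain ⟨hu1, hu2⟩ := Finset.mem_filter.mp hu
            obtain ⟨huW, huU'⟩ := Finset.mem_sdiff.mp hu1
            refine Finset.mem_filter.mpr ⟨Finset.mem_sdiff.mpr ⟨?_, ?_⟩, hu2⟩
            · exact Finset.mem_sdiff.mpr ⟨huW, fun h => huU' (hUsub h)⟩
            · intro h
              refine huU' (Finset.mem_biUnion.mpr ⟨i, Finset.mem_range.mpr (by omega), ?_⟩)
              rw [Function.update_self]
              exact h
          exact_mod_cast Finset.card_le_card hsub
        · rw [Function.update_of_ne hji]
          refine le_trans ?_ (hBY j (by omega))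
          have hsub : (W \ (Finset.range (i+1)).biUnion (Function.update B i Bi)).filter
              (fun u => ¬ ∃ w ∈ B j, G.Adj u w) ⊆
              (W \ U).filter (fun u => ¬ ∃ w ∈ B j, G.Adj u w) := by
            refine Finset.filter_subset_filter _ ?_
            intro u hu
            obtain ⟨huW, huU'⟩ := Finset.mem_sdiff.mp hu
            exact Finset.mem_sdiff.mpr ⟨huW, fun h => huU' (hUsub h)⟩
          exact_mod_cast Finset.card_le_card hsub
  obtain ⟨B, hBprop, hBdisj, hBjoin, _⟩ := main t le_rfl
  exact ⟨B, fun j hj => ⟨(hBprop j hj).2.1, (hBprop j hj).2.2⟩, hBdisj, hBjoin⟩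

end DenseMinorHelpers

set_option maxHeartbeats 1000000

/-- `G.HasMinor H` means `H` is a minor of `G`, witnessed by a model: a family of
pairwise disjoint connected branch sets in `G` indexed by the vertices of `H`, with an
edge of `G` between the branch sets of any two adjacent vertices of `H`. -/
def SimpleGraph.HasMinor {V W : Type*} (G : SimpleGraph V) (H : SimpleGraph W) : Prop :=
  ∃ X : W → Set V,
    (∀ w, (G.induce (X w)).Connected) ∧
    (Pairwise fun w₁ w₂ => Disjoint (X w₁) (X w₂)) ∧
    ∀ ⦃w₁ w₂⦄, H.Adj w₁ w₂ → ∃ u ∈ X w₁, ∃ v ∈ X w₂, G.Adj u v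

/-- Let `t ≥ 1`, let `G` be a graph with `n = v(G) ≥ 9t` vertices, let
`q = 1 - e(G)/(n choose 2)` and `l = ⌊n/(9t)⌋`. If `6t·(70q)^(l²) ≤ 1` then `G` has a
`K_t` minor. -/
theorem dense_graph_has_Kt_minor (t : ℕ) (ht : 0 < t)
    (V : Type) [Fintype V] (G : SimpleGraph V)
    (hn : 9 * t ≤ Fintype.card V)
    (hq : 6 * (t : ℝ) *
        (70 * (1 - (G.edgeSet.ncard : ℝ) / ((Fintype.card V).choose 2))) ^
          ((Fintype.card V / (9 * t)) ^ 2) ≤ 1) :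
    G.HasMinor (⊤ : SimpleGraph (Fin t)) := by
  classical
  letI : DecidableEq V := Classical.decEq V
  letI : DecidableRel G.Adj := Classical.decRel _
  have hnpos : 0 < Fintype.card V := by omega
  haveI : Nonempty V := Fintype.card_pos_iff.mp hnpos
  by_cases ht1 : t = 1
  · -- trivial case
    subst ht1
    obtain ⟨v0⟩ := ‹Nonempty V›
    refine ⟨fun _ => ({v0} : Set V), fun _ => induce_singleton_connected G v0, ?_, ?_⟩
    · intro a b hab
      exact absurd (Subsingleton.elim a b) hab
    · intro w1 w2 hadj
      rw [SimpleGraph.top_adj] at hadj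
      exact absurd (Subsingleton.elim w1 w2) hadj
  · have ht2 : 2 ≤ t := by omega
    set n : ℕ := Fintype.card V with hndef
    set N : ℝ := (n : ℝ) with hNdef
    set l : ℕ := n / (9 * t) with hldef
    set m : ℕ := Gᶜ.edgeFinset.card with hmdef
    set Q : ℝ := (m : ℝ) / ((n.choose 2 : ℕ) : ℝ) with hQdef
    have hn18 : 18 ≤ n := by omega
    have hNpos : (0:ℝ) < N := by rw [hNdef]; exact_mod_cast hnpos
    have hNN : (18:ℝ) ≤ N := by rw [hNdef]; exact_mod_cast hn18
    have hchoose_pos : 0 < n.choose 2 := Nat.choose_pos (by omega)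
    have hchooseR : ((n.choose 2 : ℕ) : ℝ) = N * (N - 1) / 2 := by
      rw [Nat.cast_choose_two, hNdef]
    have hchoose_posR : (0:ℝ) < ((n.choose 2 : ℕ) : ℝ) := by exact_mod_cast hchoose_pos
    have hQ0 : 0 ≤ Q := by rw [hQdef]; positivity
    -- edge counts
    have hedge : G.edgeFinset.card + m = n.choose 2 := by
      rw [hmdef]
      have hdis : Disjoint G.edgeFinset Gᶜ.edgeFinset :=
        SimpleGraph.disjoint_edgeFinset.mpr disjoint_compl_right
      have hunion : G.edgeFinset ∪ Gᶜ.edgeFinset = (⊤ : SimpleGraph V).edgeFinset := by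
        ext e
        refine Sym2.ind (fun a b => ?_) e
        simp only [Finset.mem_union, SimpleGraph.mem_edgeFinset, SimpleGraph.mem_edgeSet,
          SimpleGraph.compl_adj, SimpleGraph.top_adj]
        constructor
        · rintro (h | ⟨h1, h2⟩)
          · exact h.ne
          · exact h1
        · intro h
          by_cases hadj : G.Adj a b
          · exact Or.inl hadj
          · exact Or.inr ⟨h, hadj⟩
      rw [← Finset.card_union_of_disjoint hdis, hunion,
        SimpleGraph.card_edgeFinset_top_eq_card_choose_two]
    have hncard : (G.edgeSet.ncard : ℝ) = (G.edgeFinset.card : ℝ) := by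
      congr 1
      rw [Set.ncard_eq_toFinset_card']
      simp only [SimpleGraph.edgeFinset]
    have hQrw : (1 : ℝ) - (G.edgeSet.ncard : ℝ) / ((n.choose 2 : ℕ) : ℝ) = Q := by
      rw [hncard, hQdef]
      have he : (G.edgeFinset.card : ℝ) = ((n.choose 2 : ℕ) : ℝ) - (m : ℝ) := by
        have := hedge
        have h2 : ((G.edgeFinset.card + m : ℕ) : ℝ) = ((n.choose 2 : ℕ) : ℝ) := by
          exact_mod_cast congrArg (fun x : ℕ => (x : ℝ)) this
        push_cast at h2
        linarith
      rw [he]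
      field_simp
      ring
    have hl1 : 1 ≤ l := by
      rw [hldef]
      rw [Nat.one_le_div_iff (by omega)]
      exact hn
    have h9tl : 9 * t * l ≤ n := by
      rw [hldef]
      exact Nat.mul_div_le n (9 * t)
    -- rewrite the hypothesis
    have hq' : 6 * (t : ℝ) * (70 * Q) ^ (l ^ 2) ≤ 1 := by
      rw [← hQrw]
      exact hq
    have hQ1 : 70 * Q ≤ 1 := by
      by_contra hlt
      push_neg at hlt
      have hl2 : l ^ 2 ≠ 0 := by
        intro h
        rw [Nat.pow_eq_zero] at h
        omega
      have h1 : (1:ℝ) < (70 * Q) ^ (l ^ 2) := one_lt_pow₀ hlt hl2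
      have ht2R : (2:ℝ) ≤ (t : ℝ) := by exact_mod_cast ht2
      nlinarith
    -- sum of degrees and the set W
    have hmR : (m : ℝ) = Q * ((n.choose 2 : ℕ) : ℝ) := by
      rw [hQdef]
      field_simp
    have h2m : ((2 * m : ℕ) : ℝ) ≤ Q * N * N := by
      push_cast
      rw [hmR, hchooseR]
      nlinarith
    have hdegsum : ∑ v : V, Gᶜ.degree v = 2 * m := by
      rw [hmdef]
      exact SimpleGraph.sum_degrees_eq_twice_card_edges Gᶜ
    set W : Finset V := Finset.univ.filter (fun v => (Gᶜ.degree v : ℝ) ≤ 4 * Q * N) with hWdef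
    have hWdeg : ∀ v ∈ W, (Gᶜ.degree v : ℝ) ≤ 4 * Q * N := by
      intro v hv
      exact (Finset.mem_filter.mp hv).2
    have hW : (3/4 : ℝ) * N ≤ (W.card : ℝ) := by
      rcases eq_or_lt_of_le hQ0 with hQz | hQpos
      · -- Q = 0 : all degrees are 0
        have hm0 : m = 0 := by
          have : (m : ℝ) = 0 := by
            rw [hmR, ← hQz]; ring
          exact_mod_cast this
        have hd0 : ∀ v : V, Gᶜ.degree v = 0 := by
          intro v
          have hsz : ∑ v : V, Gᶜ.degree v = 0 := by rw [hdegsum, hm0]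
          have := (Finset.sum_eq_zero_iff_of_nonneg (fun w _ => Nat.zero_le _)).mp hsz
          exact this v (Finset.mem_univ v)
        have : W = Finset.univ := by
          rw [hWdef]
          apply Finset.filter_true_of_mem
          intro v _
          rw [hd0 v, ← hQz]
          norm_num
        rw [this]
        have huniv : ((Finset.univ : Finset V).card : ℝ) = N := by
          simp [Finset.card_univ, hNdef, hndef]
        rw [huniv]
        nlinarith
      · set Wc : Finset V :=
          Finset.univ.filter (fun v => ¬ ((Gᶜ.degree v : ℝ) ≤ 4 * Q * N)) with hWcdef
        have hcards : W.card + Wc.card = n := by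
          rw [hWdef, hWcdef, Finset.card_filter_add_card_filter_not, Finset.card_univ]
        have hlow : (Wc.card : ℝ) * (4 * Q * N) ≤ ((2 * m : ℕ) : ℝ) := by
          have h1 : ∀ v ∈ Wc, (4 * Q * N) ≤ (Gᶜ.degree v : ℝ) := by
            intro v hv
            exact le_of_lt (lt_of_not_ge (Finset.mem_filter.mp hv).2)
          have h2 : (Wc.card : ℝ) * (4 * Q * N) ≤ ∑ v ∈ Wc, (Gᶜ.degree v : ℝ) := by
            have := Finset.sum_le_sum h1
            simpa [Finset.sum_const, nsmul_eq_mul] using this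
          have h3 : ∑ v ∈ Wc, (Gᶜ.degree v : ℝ) ≤ ∑ v : V, (Gᶜ.degree v : ℝ) :=
            Finset.sum_le_sum_of_subset_of_nonneg (Finset.subset_univ _)
              (fun v _ _ => Nat.cast_nonneg _)
          have h4 : ∑ v : V, (Gᶜ.degree v : ℝ) = ((2 * m : ℕ) : ℝ) := by
            rw [← hdegsum]
            push_cast
            rfl
          linarith
        have hWc : (Wc.card : ℝ) ≤ N / 4 := by
          have hkey : (Wc.card : ℝ) * (4 * Q * N) ≤ Q * N * N := le_trans hlow h2m
          nlinarith [mul_pos hQpos hNpos]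
        have hWn : (W.card : ℝ) = N - Wc.card := by
          have : ((W.card + Wc.card : ℕ) : ℝ) = N := by
            rw [hcards, hNdef]
          push_cast at this
          linarith
        rw [hWn]
        linarith
    -- the final numeric bound
    have hfinal : ∀ i : ℕ, i ≤ t → (i : ℝ) * ((63 * Q) ^ (3 * l)) ^ (3 * l - 1) < 1 := by
      intro i hi
      have hE : ((63 * Q) ^ (3 * l)) ^ (3 * l - 1) = (63 * Q) ^ (3 * l * (3 * l - 1)) :=
        (pow_mul _ _ _).symm
      have h63 : (0:ℝ) ≤ 63 * Q := by linarith
      have h63_70 : (63 * Q : ℝ) ≤ 70 * Q := by linarith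
      have h70 : (0:ℝ) ≤ 70 * Q := by linarith
      have hEle : (63 * Q) ^ (3 * l * (3 * l - 1)) ≤ (70 * Q) ^ (3 * l * (3 * l - 1)) :=
        pow_le_pow_left₀ h63 h63_70 _
      have hexp : l ^ 2 ≤ 3 * l * (3 * l - 1) := by
        have h1 : l ≤ 3 * l := by omega
        have h2 : l ≤ 3 * l - 1 := by omega
        calc l ^ 2 = l * l := sq l
          _ ≤ (3 * l) * (3 * l - 1) := Nat.mul_le_mul h1 h2
      have hmono : (70 * Q) ^ (3 * l * (3 * l - 1)) ≤ (70 * Q) ^ (l ^ 2) :=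
        pow_le_pow_of_le_one h70 hQ1 hexp
      have hiT : (i : ℝ) ≤ (t : ℝ) := by exact_mod_cast hi
      have hp0 : (0:ℝ) ≤ ((63 * Q) ^ (3 * l)) ^ (3 * l - 1) := pow_nonneg (pow_nonneg h63 _) _
      have ht0 : (0:ℝ) ≤ (t : ℝ) := by positivity
      have hc : (i : ℝ) * ((63 * Q) ^ (3 * l)) ^ (3 * l - 1) ≤ (t : ℝ) * (70 * Q) ^ (l ^ 2) := by
        rw [hE]
        apply mul_le_mul hiT (le_trans hEle hmono) (pow_nonneg h63 _) ht0
      have : (t : ℝ) * (70 * Q) ^ (l ^ 2) ≤ 1 / 6 := by linarith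
      linarith
    -- apply the outer construction
    obtain ⟨B, hBprop, hBdisj, hBjoin⟩ :=
      outer G Q hQ0 hQ1 t l ht2 hl1 h9tl hNpos W hW hWdeg hfinal
    refine ⟨fun w => (↑(B w.val) : Set V), ?_, ?_, ?_⟩
    · intro w
      exact (hBprop w.val w.isLt).2
    · intro a b hab
      rcases lt_trichotomy a.val b.val with h | h | h
      · exact Finset.disjoint_coe.mpr (hBdisj a.val b.val h b.isLt)
      · exact absurd (Fin.ext h) hab
      · exact (Finset.disjoint_coe.mpr (hBdisj b.val a.val h a.isLt)).symm
    · intro w1 w2 hadj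
      rw [SimpleGraph.top_adj] at hadj
      rcases lt_trichotomy w1.val w2.val with h | h | h
      · obtain ⟨v, hv, w, hw, hvw⟩ := hBjoin w1.val w2.val h w2.isLt
        exact ⟨w, Finset.mem_coe.mpr hw, v, Finset.mem_coe.mpr hv, hvw.symm⟩
      · exact absurd (Fin.ext h) hadj
      · obtain ⟨v, hv, w, hw, hvw⟩ := hBjoin w2.val w1.val h w1.isLt
        exact ⟨v, Finset.mem_coe.mpr hv, w, Finset.mem_coe.mpr hw, hvw⟩
end

section
/- There exists a constant C > 0 such that the following holds: for every real ρ ≥ 3 and every graph G whose Hall ratio is at most ρ and whose number of vertices n = v(G) satisfies n ≥ 2ρ, the list chromatic number of G is at most C·ρ·(log(n/ρ))². -/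
open Real

/-- `G` is `k`-list-colorable: for every assignment of lists of at least `k` colors to the
vertices there is a proper coloring choosing each vertex's color from its list. -/
def SimpleGraph.ListColorable {V : Type*} (G : SimpleGraph V) (k : ℕ) : Prop :=
  ∀ L : V → Finset ℕ, (∀ v, k ≤ (L v).card) →
    ∃ c : V → ℕ, (∀ v, c v ∈ L v) ∧ ∀ ⦃u v⦄, G.Adj u v → c u ≠ c v
/-- The list chromatic number of `G`: the least `k` such that `G` is `k`-list-colorable. -/
noncomputable def SimpleGraph.listChromaticNumber {V : Type*} (G : SimpleGraph V) : ℕ :=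
  sInf {k | G.ListColorable k}
/-- The independence number of the subgraph of `H` induced on `s`: the largest size of a
subset of `s` that is pairwise non-adjacent in `H`. -/
noncomputable def SimpleGraph.indepNumOn {V : Type*} (H : SimpleGraph V) (s : Set V) : ℕ :=
  sSup {n | ∃ I : Set V, I ⊆ s ∧ I.Pairwise (fun u v => ¬ H.Adj u v) ∧ I.ncard = n}

/-- The Hall ratio of `G` is at most `ρ`: every non-null subgraph `H` of `G` (a subgraph
is given by a vertex set `s` and an edge-subgraph `H ≤ G`) satisfies `⌈v(H)/α(H)⌉ ≤ ρ`. -/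
def SimpleGraph.HallRatioLE {V : Type*} (G : SimpleGraph V) (ρ : ℝ) : Prop :=
  ∀ H : SimpleGraph V, H ≤ G → ∀ s : Set V, s.Nonempty →
    ((⌈(s.ncard : ℝ) / (H.indepNumOn s : ℝ)⌉ : ℤ) : ℝ) ≤ ρ

open Finset

set_option linter.unusedSectionVars false
set_option linter.unusedVariables false
set_option maxHeartbeats 1000000

lemma hall_extract {V : Type} [Fintype V] (G : SimpleGraph V) (ρ : ℝ)
    (hHall : G.HallRatioLE ρ) (s : Finset V) (hs : s.Nonempty) :
    ∃ I : Finset V, I ⊆ s ∧ I.Nonempty ∧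
      (∀ u ∈ I, ∀ v ∈ I, u ≠ v → ¬ G.Adj u v) ∧ (s.card : ℝ) ≤ ρ * I.card := by
  classical
  set T : Set ℕ := {n | ∃ I : Set V, I ⊆ (↑s : Set V) ∧
      I.Pairwise (fun u v => ¬ G.Adj u v) ∧ I.ncard = n} with hT
  have hbdd : BddAbove T := by
    refine ⟨s.card, fun m hm => ?_⟩
    obtain ⟨I, hIs, -, hcard⟩ := hm
    calc m = I.ncard := hcard.symm
    _ ≤ (↑s : Set V).ncard := Set.ncard_le_ncard hIs (s.finite_toSet)
    _ = s.card := Set.ncard_coe_finset s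
  have hne : T.Nonempty := ⟨0, ∅, Set.empty_subset _, Set.pairwise_empty _, Set.ncard_empty _⟩
  have hmem : G.indepNumOn ↑s ∈ T := Nat.sSup_mem hne hbdd
  obtain ⟨I₀, hI₀s, hpair, hIcard⟩ := hmem
  obtain ⟨v, hv⟩ := hs
  have hα1 : 1 ≤ G.indepNumOn ↑s := by
    apply le_csSup hbdd
    exact ⟨{v}, by simpa using hv, Set.pairwise_singleton _ _, Set.ncard_singleton _⟩
  have hH := hHall G le_rfl ↑s ⟨v, hv⟩
  rw [Set.ncard_coe_finset] at hH
  have hαpos : (0:ℝ) < (G.indepNumOn ↑s : ℝ) := by exact_mod_cast hα1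
  have hdiv : (s.card : ℝ) / (G.indepNumOn ↑s : ℝ) ≤ ρ := le_trans (Int.le_ceil _) hH
  have hcard_le : (s.card : ℝ) ≤ ρ * (G.indepNumOn ↑s : ℝ) := by
    rw [div_le_iff₀ hαpos] at hdiv; linarith
  have hfin : I₀.Finite := Set.Finite.subset s.finite_toSet hI₀s
  refine ⟨hfin.toFinset, ?_, ?_, ?_, ?_⟩
  · intro x hx
    have : x ∈ I₀ := hfin.mem_toFinset.1 hx
    exact_mod_cast hI₀s this
  · rw [← Finset.card_pos]
    have : hfin.toFinset.card = G.indepNumOn ↑s := by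
      rw [Set.ncard_eq_toFinset_card _ hfin] at hIcard
      exact hIcard
    omega
  · intro u hu v hv huv
    exact hpair (hfin.mem_toFinset.1 hu) (hfin.mem_toFinset.1 hv) huv
  · have : hfin.toFinset.card = G.indepNumOn ↑s := by
      rw [Set.ncard_eq_toFinset_card _ hfin] at hIcard
      exact hIcard
    rw [this]; exact hcard_le


lemma exists_partition {V : Type} [Fintype V] [DecidableEq V] (G : SimpleGraph V) (ρ : ℝ)
    (hρ : 1 < ρ)
    (hex : ∀ s : Finset V, s.Nonempty → ∃ I : Finset V, I ⊆ s ∧ I.Nonempty ∧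
      (∀ u ∈ I, ∀ v ∈ I, u ≠ v → ¬ G.Adj u v) ∧ (s.card : ℝ) ≤ ρ * I.card) :
    ∀ (n : ℕ) (s : Finset V), s.card = n →
      ∃ (M : ℕ) (P : V → ℕ),
        (∀ u ∈ s, ∀ v ∈ s, P u = P v → P u < M → u ≠ v → ¬ G.Adj u v) ∧
        (((s.filter (fun v => ¬ P v < M)).card : ℝ) ≤ ρ) ∧
        (M = 0 ∨ ρ * ((1 - 1/ρ)⁻¹) ^ (M - 1) < s.card) := by
  intro n
  induction n using Nat.strong_induction_on with
  | _ n IH =>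
    intro s hsn
    by_cases hbig : ρ < (s.card : ℝ)
    · have hsne : s.Nonempty := by
        rw [← Finset.card_pos]
        by_contra h
        push_neg at h
        interval_cases hc : s.card
        · simp [hc] at hbig; linarith
      obtain ⟨I, hIs, hIne, hIind, hIcard⟩ := hex s hsne
      have hcardlt : (s \ I).card < n := by
        rw [← hsn]
        have h1 : (s \ I).card = s.card - I.card := Finset.card_sdiff_of_subset hIs
        have h2 : 0 < I.card := Finset.card_pos.2 hIne
        have h3 : I.card ≤ s.card := Finset.card_le_card hIs
        omega
      obtain ⟨M', P', hind', htail', hsize'⟩ := IH (s \ I).card hcardlt (s \ I) rfl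
      refine ⟨M' + 1, fun v => if v ∈ I then 0 else P' v + 1, ?_, ?_, ?_⟩
      · intro u hu v hv hPuv hPu huv
        by_cases hui : u ∈ I <;> by_cases hvi : v ∈ I
        · exact hIind u hui v hvi huv
        · simp [hui, hvi] at hPuv
        · simp [hui, hvi] at hPuv
        · simp only [hui, hvi, if_neg, ite_false] at hPuv hPu
          exact hind' u (Finset.mem_sdiff.2 ⟨hu, hui⟩) v (Finset.mem_sdiff.2 ⟨hv, hvi⟩)
            (by omega) (by omega) huv
      · have hset : s.filter (fun v => ¬ (if v ∈ I then 0 else P' v + 1) < M' + 1)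
            = (s \ I).filter (fun v => ¬ P' v < M') := by
          ext x
          simp only [Finset.mem_filter, Finset.mem_sdiff]
          by_cases hxi : x ∈ I
          · rw [if_pos hxi]
            constructor
            · intro h; exact (h.2 (Nat.succ_pos M')).elim
            · intro h; exact (h.1.2 hxi).elim
          · rw [if_neg hxi]
            constructor
            · intro h; exact ⟨⟨h.1, hxi⟩, by omega⟩
            · intro h; refine ⟨h.1.1, by have := h.2; omega⟩
        rw [hset]; exact htail'
      · right
        have hρ0 : (0:ℝ) < ρ := by linarith
        have hq0 : (0:ℝ) < 1 - 1/ρ := by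
          have : 1/ρ < 1 := by rw [div_lt_one hρ0]; linarith
          linarith
        have hsplit : ((s \ I).card : ℝ) ≤ (s.card : ℝ) * (1 - 1/ρ) := by
          have h1 : (s \ I).card = s.card - I.card := Finset.card_sdiff_of_subset hIs
          have h3 : I.card ≤ s.card := Finset.card_le_card hIs
          have h4 : ((s \ I).card : ℝ) = (s.card : ℝ) - I.card := by
            rw [h1]; push_cast [h3]; ring
          rw [h4]
          have : (s.card : ℝ) * (1/ρ) ≤ (I.card : ℝ) := by
            rw [div_eq_mul_inv, ← mul_assoc]
            rw [mul_comm ρ _] at hIcard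
            calc (s.card:ℝ) * 1 * ρ⁻¹ ≤ ((I.card:ℝ) * ρ) * ρ⁻¹ := by
                  apply mul_le_mul_of_nonneg_right _ (by positivity)
                  simpa using hIcard
            _ = I.card := by field_simp
          nlinarith
        rcases hsize' with h0 | hlt
        · subst h0
          simpa using hbig
        · set q : ℝ := (1 - 1/ρ)⁻¹ with hqdef
          have hqpos : 0 < q := by positivity
          have hqmul : (1 - 1/ρ) * q = 1 := mul_inv_cancel₀ (ne_of_gt hq0)
          simp only [Nat.add_sub_cancel]
          rcases Nat.eq_zero_or_pos M' with h0 | hMpos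
          · rw [h0] at hlt ⊢
            simp only [Nat.zero_sub, pow_zero, mul_one] at hlt ⊢
            have hle : ((s \ I).card : ℝ) ≤ (s.card : ℝ) := by
              exact_mod_cast Nat.cast_le.2 (Finset.card_le_card (Finset.sdiff_subset))
            exact lt_of_lt_of_le hlt hle
          · obtain ⟨m, hm⟩ : ∃ m, M' = m + 1 := ⟨M' - 1, by omega⟩
            subst hm
            simp only [Nat.add_sub_cancel] at hlt
            have step : ρ * q ^ m * q < ((s.card : ℝ) * (1 - 1/ρ)) * q := by
              apply mul_lt_mul_of_pos_right _ hqpos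
              exact lt_of_lt_of_le hlt hsplit
            calc ρ * q ^ (m+1) = ρ * q ^ m * q := by ring
            _ < ((s.card : ℝ) * (1 - 1/ρ)) * q := step
            _ = (s.card : ℝ) := by rw [mul_assoc, hqmul, mul_one]
    · refine ⟨0, fun _ => 0, ?_, ?_, Or.inl rfl⟩
      · intro u _ v _ _ h; omega
      · push_neg at hbig
        calc ((s.filter (fun v => ¬ (0:ℕ) < 0)).card : ℝ) ≤ (s.card : ℝ) := by
              exact_mod_cast Nat.cast_le.2 (Finset.card_le_card (Finset.filter_subset _ _))
        _ ≤ ρ := hbig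


section Potential

variable {V : Type} [Fintype V]

/-- weight of part `j` when there are `M` real parts (index `M` = reserve). -/
noncomputable def wt (M : ℕ) (j : ℕ) : ℝ := if j = M then 1/2 else 1/(2*M)

/-- Main-coloring weight of vertex `v`. -/
noncomputable def w1 (P : V → ℕ) (M : ℕ) (Ls : V → Finset ℕ) (f : ℕ → ℕ) (D : Finset ℕ)
    (v : V) : ℝ :=
  if P v < M ∧ ∃ c ∈ Ls v ∩ D, f c = P v then 0
  else if P v < M then (1 - 1/(2*M)) ^ ((Ls v \ D).card) else 1

/-- Reserve weight of vertex `v`. -/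
noncomputable def w2 (M τ : ℕ) (Ls : V → Finset ℕ) (f : ℕ → ℕ) (D : Finset ℕ) (v : V) : ℝ :=
  (2:ℝ) ^ ((τ : ℤ) - (((Ls v ∩ D).filter (fun c => f c = M)).card : ℤ))
    * (3/4 : ℝ) ^ ((Ls v \ D).card)

noncomputable def pot (P : V → ℕ) (M τ : ℕ) (Ls : V → Finset ℕ) (ρ : ℝ)
    (f : ℕ → ℕ) (D : Finset ℕ) : ℝ :=
  ∑ v, (1/(4*ρ) * w1 P M Ls f D v + w2 M τ Ls f D v)

lemma wt_pos {M : ℕ} (hM : 1 ≤ M) (j : ℕ) : 0 < wt M j := by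
  unfold wt
  split
  · norm_num
  · have : (0:ℝ) < M := by exact_mod_cast hM
    positivity

lemma sum_wt {M : ℕ} (hM : 1 ≤ M) : ∑ j ∈ Finset.range (M+1), wt M j = 1 := by
  rw [Finset.sum_range_succ]
  have h1 : ∀ j ∈ Finset.range M, wt M j = 1/(2*M) := by
    intro j hj
    rw [Finset.mem_range] at hj
    unfold wt
    rw [if_neg (by omega)]
  rw [Finset.sum_congr rfl h1, Finset.sum_const, Finset.card_range]
  have hM0 : (M:ℝ) ≠ 0 := by positivity
  unfold wt
  rw [if_pos rfl]
  field_simp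
  rw [nsmul_eq_mul, mul_one_div, div_mul_cancel_right₀ hM0]; norm_num

lemma w1_nonneg (P : V → ℕ) (M : ℕ) (hM : 1 ≤ M) (Ls : V → Finset ℕ) (f : ℕ → ℕ)
    (D : Finset ℕ) (v : V) : 0 ≤ w1 P M Ls f D v := by
  have hM1 : (1:ℝ) ≤ M := by exact_mod_cast hM
  have hq : (0:ℝ) ≤ 1 - 1/(2*M) := by
    have : 1/(2*(M:ℝ)) ≤ 1/2 := by
      apply div_le_div_of_nonneg_left <;> linarith
    linarith
  unfold w1
  split
  · exact le_refl 0
  · split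
    · positivity
    · norm_num


lemma w2_nonneg (M τ : ℕ) (Ls : V → Finset ℕ) (f : ℕ → ℕ) (D : Finset ℕ) (v : V) :
    0 ≤ w2 M τ Ls f D v := by
  unfold w2
  positivity

lemma mem_ne_of_not_mem {c : ℕ} {D : Finset ℕ} (hc : c ∉ D) {x : ℕ} (hx : x ∈ D) : x ≠ c :=
  fun h => hc (h ▸ hx)

lemma w1_step (P : V → ℕ) (M : ℕ) (hM : 1 ≤ M) (Ls : V → Finset ℕ)
    {c : ℕ} {D : Finset ℕ} (hc : c ∉ D) (f : ℕ → ℕ) (v : V) :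
    ∑ j ∈ Finset.range (M+1),
        wt M j * w1 P M Ls (Function.update f c j) (insert c D) v
      = w1 P M Ls f D v := by
  have hconst : ∀ A : ℝ, ∑ j ∈ Finset.range (M+1), wt M j * A = A := by
    intro A
    rw [← Finset.sum_mul, sum_wt hM, one_mul]
  by_cases hPv : P v < M
  · by_cases hhap : ∃ c' ∈ Ls v ∩ D, f c' = P v
    · -- already happy : all terms are 0
      obtain ⟨c₀, hc₀, hfc₀⟩ := hhap
      have hz : ∀ j, w1 P M Ls (Function.update f c j) (insert c D) v = 0 := by
        intro j
        have hc₀' : c₀ ∈ Ls v ∩ insert c D := by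
          rw [Finset.mem_inter] at hc₀ ⊢
          exact ⟨hc₀.1, Finset.mem_insert_of_mem hc₀.2⟩
        have : Function.update f c j c₀ = P v := by
          rw [Function.update_of_ne (mem_ne_of_not_mem hc (Finset.mem_inter.1 hc₀).2)]
          exact hfc₀
        unfold w1
        rw [if_pos ⟨hPv, c₀, hc₀', this⟩]
      simp only [hz, mul_zero, Finset.sum_const, smul_zero]
      unfold w1
      rw [if_pos ⟨hPv, c₀, hc₀, hfc₀⟩]
    · by_cases hcL : c ∈ Ls v
      · -- the interesting case
        have hcsd : c ∈ Ls v \ D := Finset.mem_sdiff.2 ⟨hcL, hc⟩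
        have hr : 1 ≤ (Ls v \ D).card := Finset.card_pos.2 ⟨c, hcsd⟩
        have hsd : Ls v \ insert c D = (Ls v \ D).erase c := by
          ext x
          simp only [Finset.mem_sdiff, Finset.mem_insert, Finset.mem_erase, not_or]
          tauto
        have hcard : (Ls v \ insert c D).card = (Ls v \ D).card - 1 := by
          rw [hsd, Finset.card_erase_of_mem hcsd]
        set q : ℝ := 1 - 1/(2*(M:ℝ)) with hqdef
        have hw : ∀ j, w1 P M Ls (Function.update f c j) (insert c D) v
            = if j = P v then 0 else q ^ ((Ls v \ D).card - 1) := by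
          intro j
          by_cases hj : j = P v
          · rw [if_pos hj]
            unfold w1
            rw [if_pos ⟨hPv, c, Finset.mem_inter.2 ⟨hcL, Finset.mem_insert_self c D⟩,
              by rw [Function.update_self]; exact hj⟩]
          · rw [if_neg hj]
            unfold w1
            rw [if_neg, if_pos hPv, hcard]
            rintro ⟨-, c', hc', he'⟩
            rw [Finset.mem_inter, Finset.mem_insert] at hc'
            rcases hc'.2 with h | h
            · subst h
              rw [Function.update_self] at he'
              exact hj he'
            · rw [Function.update_of_ne (mem_ne_of_not_mem hc h)] at he'
              exact hhap ⟨c', Finset.mem_inter.2 ⟨hc'.1, h⟩, he'⟩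
        have hPmem : P v ∈ Finset.range (M+1) := Finset.mem_range.2 (by omega)
        rw [Finset.sum_congr rfl (fun j _ => by rw [hw j])]
        rw [← Finset.add_sum_erase _ _ hPmem]
        rw [if_pos rfl, mul_zero, zero_add]
        have herase : ∀ j ∈ (Finset.range (M+1)).erase (P v),
            wt M j * (if j = P v then 0 else q ^ ((Ls v \ D).card - 1))
              = wt M j * q ^ ((Ls v \ D).card - 1) := by
          intro j hj
          rw [if_neg (Finset.mem_erase.1 hj).1]
        rw [Finset.sum_congr rfl herase, ← Finset.sum_mul]
        have hsum_erase : ∑ j ∈ (Finset.range (M+1)).erase (P v), wt M j = 1 - 1/(2*M) := by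
          have := Finset.add_sum_erase _ (wt M) hPmem
          rw [sum_wt hM] at this
          have hwtP : wt M (P v) = 1/(2*M) := by
            unfold wt
            rw [if_neg (by omega)]
          linarith [this, hwtP.symm ▸ this]
        rw [hsum_erase]
        unfold w1
        rw [if_neg (fun h => hhap h.2), if_pos hPv]
        rw [← hqdef]
        calc (1 - 1/(2*(M:ℝ))) * q ^ ((Ls v \ D).card - 1)
            = q ^ ((Ls v \ D).card - 1) * q := by rw [hqdef]; ring
        _ = q ^ (((Ls v \ D).card - 1) + 1) := (pow_succ q _).symm
        _ = q ^ ((Ls v \ D).card) := by rw [Nat.sub_add_cancel hr]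
      · -- c not in the list : nothing changes
        have h1 : Ls v ∩ insert c D = Ls v ∩ D := by
          ext x
          simp only [Finset.mem_inter, Finset.mem_insert]
          constructor
          · rintro ⟨hx, h | h⟩
            · exact absurd (h ▸ hx) hcL
            · exact ⟨hx, h⟩
          · rintro ⟨hx, h⟩; exact ⟨hx, Or.inr h⟩
        have h2 : Ls v \ insert c D = Ls v \ D := by
          ext x
          simp only [Finset.mem_sdiff, Finset.mem_insert, not_or]
          constructor
          · rintro ⟨hx, -, h⟩; exact ⟨hx, h⟩
          · rintro ⟨hx, h⟩; exact ⟨hx, fun he => hcL (he ▸ hx), h⟩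
        have hfe : ∀ j, w1 P M Ls (Function.update f c j) (insert c D) v = w1 P M Ls f D v := by
          intro j
          unfold w1
          rw [h1, h2]
          have : (∃ c' ∈ Ls v ∩ D, Function.update f c j c' = P v)
              ↔ (∃ c' ∈ Ls v ∩ D, f c' = P v) := by
            constructor <;> rintro ⟨c', hm, he⟩ <;> refine ⟨c', hm, ?_⟩
            · rwa [Function.update_of_ne (mem_ne_of_not_mem hc (Finset.mem_inter.1 hm).2)] at he
            · rwa [Function.update_of_ne (mem_ne_of_not_mem hc (Finset.mem_inter.1 hm).2)]
          simp only [this]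
        rw [Finset.sum_congr rfl (fun j _ => by rw [hfe j])]
        exact hconst _
  · -- tail vertex : weight is constantly 1
    have hone : ∀ (g : ℕ → ℕ) (D' : Finset ℕ), w1 P M Ls g D' v = 1 := by
      intro g D'
      unfold w1
      rw [if_neg (fun h => hPv h.1), if_neg hPv]
    rw [Finset.sum_congr rfl (fun j _ => by rw [hone])]
    rw [hone]
    exact hconst 1


lemma w2_step (M : ℕ) (hM : 1 ≤ M) (τ : ℕ) (Ls : V → Finset ℕ)
    {c : ℕ} {D : Finset ℕ} (hc : c ∉ D) (f : ℕ → ℕ) (v : V) :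
    ∑ j ∈ Finset.range (M+1),
        wt M j * w2 M τ Ls (Function.update f c j) (insert c D) v
      = w2 M τ Ls f D v := by
  have hconst : ∀ A : ℝ, ∑ j ∈ Finset.range (M+1), wt M j * A = A := by
    intro A
    rw [← Finset.sum_mul, sum_wt hM, one_mul]
  by_cases hcL : c ∈ Ls v
  · have hcsd : c ∈ Ls v \ D := Finset.mem_sdiff.2 ⟨hcL, hc⟩
    have hr : 1 ≤ (Ls v \ D).card := Finset.card_pos.2 ⟨c, hcsd⟩
    have hsd : Ls v \ insert c D = (Ls v \ D).erase c := by
      ext x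
      simp only [Finset.mem_sdiff, Finset.mem_insert, Finset.mem_erase, not_or]
      tauto
    have hcard : (Ls v \ insert c D).card = (Ls v \ D).card - 1 := by
      rw [hsd, Finset.card_erase_of_mem hcsd]
    have hins : Ls v ∩ insert c D = insert c (Ls v ∩ D) := by
      ext x
      simp only [Finset.mem_inter, Finset.mem_insert]
      constructor
      · rintro ⟨hx, h | h⟩
        · exact Or.inl h
        · exact Or.inr ⟨hx, h⟩
      · rintro (h | ⟨hx, h⟩)
        · exact ⟨h ▸ hcL, Or.inl h⟩
        · exact ⟨hx, Or.inr h⟩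
    set s₀ : ℕ := ((Ls v ∩ D).filter (fun c' => f c' = M)).card with hs₀
    have hcnotin : c ∉ Ls v ∩ D := fun h => hc (Finset.mem_inter.1 h).2
    have hfilfix : ∀ j, (Ls v ∩ D).filter (fun c' => Function.update f c j c' = M)
        = (Ls v ∩ D).filter (fun c' => f c' = M) := by
      intro j
      apply Finset.filter_congr
      intro x hx
      rw [Function.update_of_ne (mem_ne_of_not_mem hc (Finset.mem_inter.1 hx).2)]
    have hscard : ∀ j, (((Ls v ∩ insert c D).filter
          (fun c' => Function.update f c j c' = M)).card : ℤ)
        = if j = M then (s₀ : ℤ) + 1 else (s₀ : ℤ) := by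
      intro j
      rw [hins, Finset.filter_insert]
      by_cases hj : j = M
      · rw [if_pos (by rw [Function.update_self]; exact hj), hfilfix,
          Finset.card_insert_of_notMem (fun h => hcnotin (Finset.filter_subset _ _ h)),
          if_pos hj]
        push_cast
        ring
      · rw [if_neg (by rw [Function.update_self]; exact hj), hfilfix, if_neg hj]
    have hw : ∀ j, w2 M τ Ls (Function.update f c j) (insert c D) v
        = (if j = M then (2:ℝ) ^ ((τ:ℤ) - s₀ - 1) else (2:ℝ) ^ ((τ:ℤ) - s₀))
            * (3/4:ℝ) ^ ((Ls v \ D).card - 1) := by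
      intro j
      unfold w2
      rw [hscard j, hcard]
      by_cases hj : j = M
      · rw [if_pos hj, if_pos hj]
        congr 1
        congr 1
        ring
      · rw [if_neg hj, if_neg hj]
    rw [Finset.sum_congr rfl (fun j _ => by rw [hw j])]
    rw [Finset.sum_range_succ]
    have hlast : wt M M = 1/2 := by unfold wt; rw [if_pos rfl]
    have hinner : ∀ j ∈ Finset.range M,
        wt M j * ((if j = M then (2:ℝ) ^ ((τ:ℤ) - s₀ - 1) else (2:ℝ) ^ ((τ:ℤ) - s₀))
            * (3/4:ℝ) ^ ((Ls v \ D).card - 1))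
          = 1/(2*M) * ((2:ℝ) ^ ((τ:ℤ) - s₀) * (3/4:ℝ) ^ ((Ls v \ D).card - 1)) := by
      intro j hj
      rw [Finset.mem_range] at hj
      rw [if_neg (by omega)]
      unfold wt
      rw [if_neg (by omega)]
    rw [Finset.sum_congr rfl hinner, Finset.sum_const, Finset.card_range, hlast, if_pos rfl]
    have hM0 : (M:ℝ) ≠ 0 := by
      have : (0:ℝ) < M := by exact_mod_cast hM
      linarith
    have hsub : (2:ℝ) ^ ((τ:ℤ) - s₀ - 1) = (2:ℝ) ^ ((τ:ℤ) - s₀) / 2 := by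
      rw [zpow_sub_one₀ (two_ne_zero)]
      ring
    have hpow : (3/4:ℝ) ^ ((Ls v \ D).card) = (3/4:ℝ) ^ ((Ls v \ D).card - 1) * (3/4) := by
      rw [← pow_succ, Nat.sub_add_cancel hr]
    unfold w2
    rw [hpow, hsub, nsmul_eq_mul]
    field_simp
    ring
  · -- c ∉ Ls v : unchanged
    have h1 : Ls v ∩ insert c D = Ls v ∩ D := by
      ext x
      simp only [Finset.mem_inter, Finset.mem_insert]
      constructor
      · rintro ⟨hx, h | h⟩
        · exact absurd (h ▸ hx) hcL
        · exact ⟨hx, h⟩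
      · rintro ⟨hx, h⟩; exact ⟨hx, Or.inr h⟩
    have h2 : Ls v \ insert c D = Ls v \ D := by
      ext x
      simp only [Finset.mem_sdiff, Finset.mem_insert, not_or]
      constructor
      · rintro ⟨hx, -, h⟩; exact ⟨hx, h⟩
      · rintro ⟨hx, h⟩; exact ⟨hx, fun he => hcL (he ▸ hx), h⟩
    have hfilfix : ∀ j, (Ls v ∩ D).filter (fun c' => Function.update f c j c' = M)
        = (Ls v ∩ D).filter (fun c' => f c' = M) := by
      intro j
      apply Finset.filter_congr
      intro x hx
      rw [Function.update_of_ne (mem_ne_of_not_mem hc (Finset.mem_inter.1 hx).2)]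
    have hfe : ∀ j, w2 M τ Ls (Function.update f c j) (insert c D) v = w2 M τ Ls f D v := by
      intro j
      unfold w2
      rw [h1, h2, hfilfix]
    rw [Finset.sum_congr rfl (fun j _ => by rw [hfe j])]
    exact hconst _


lemma pot_step (P : V → ℕ) (M τ : ℕ) (hM : 1 ≤ M) (Ls : V → Finset ℕ) (ρ : ℝ) (hρ : 0 < ρ)
    {c : ℕ} {D : Finset ℕ} (hc : c ∉ D) (f : ℕ → ℕ) :
    ∃ j, pot P M τ Ls ρ (Function.update f c j) (insert c D) ≤ pot P M τ Ls ρ f D := by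
  have key : ∑ j ∈ Finset.range (M+1),
      wt M j * pot P M τ Ls ρ (Function.update f c j) (insert c D) = pot P M τ Ls ρ f D := by
    unfold pot
    have hswap : ∑ j ∈ Finset.range (M+1), wt M j *
        (∑ v, (1/(4*ρ) * w1 P M Ls (Function.update f c j) (insert c D) v
          + w2 M τ Ls (Function.update f c j) (insert c D) v))
        = ∑ v, ∑ j ∈ Finset.range (M+1), wt M j *
            (1/(4*ρ) * w1 P M Ls (Function.update f c j) (insert c D) v
              + w2 M τ Ls (Function.update f c j) (insert c D) v) := by
      rw [Finset.sum_comm]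
      apply Finset.sum_congr rfl
      intro j _
      rw [Finset.mul_sum]
    rw [hswap]
    apply Finset.sum_congr rfl
    intro v _
    have hdist : ∑ j ∈ Finset.range (M+1), wt M j *
        (1/(4*ρ) * w1 P M Ls (Function.update f c j) (insert c D) v
          + w2 M τ Ls (Function.update f c j) (insert c D) v)
        = 1/(4*ρ) * (∑ j ∈ Finset.range (M+1),
            wt M j * w1 P M Ls (Function.update f c j) (insert c D) v)
          + ∑ j ∈ Finset.range (M+1),
            wt M j * w2 M τ Ls (Function.update f c j) (insert c D) v := by
      rw [Finset.mul_sum, ← Finset.sum_add_distrib]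
      apply Finset.sum_congr rfl
      intro j _
      ring
    rw [hdist, w1_step P M hM Ls hc f v, w2_step M hM τ Ls hc f v]
  by_contra h
  push_neg at h
  have h1 : ∑ j ∈ Finset.range (M+1), wt M j * pot P M τ Ls ρ f D = pot P M τ Ls ρ f D := by
    rw [← Finset.sum_mul, sum_wt hM, one_mul]
  have h2 : ∑ j ∈ Finset.range (M+1), wt M j * pot P M τ Ls ρ f D
      < ∑ j ∈ Finset.range (M+1),
          wt M j * pot P M τ Ls ρ (Function.update f c j) (insert c D) := by
    apply Finset.sum_lt_sum_of_nonempty Finset.nonempty_range_add_one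
    intro j _
    exact mul_lt_mul_of_pos_left (h j) (wt_pos hM j)
  have hlt : pot P M τ Ls ρ f D < pot P M τ Ls ρ f D := by
    calc pot P M τ Ls ρ f D
        = ∑ j ∈ Finset.range (M+1), wt M j * pot P M τ Ls ρ f D := h1.symm
    _ < ∑ j ∈ Finset.range (M+1),
          wt M j * pot P M τ Ls ρ (Function.update f c j) (insert c D) := h2
    _ = pot P M τ Ls ρ f D := key
  exact lt_irrefl _ hlt

lemma pot_process (P : V → ℕ) (M τ : ℕ) (hM : 1 ≤ M) (Ls : V → Finset ℕ) (ρ : ℝ)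
    (hρ : 0 < ρ) (𝒞 : Finset ℕ) :
    ∀ (N : ℕ) (f : ℕ → ℕ) (D : Finset ℕ), (𝒞 \ D).card = N → D ⊆ 𝒞 →
      ∃ g : ℕ → ℕ, pot P M τ Ls ρ g 𝒞 ≤ pot P M τ Ls ρ f D := by
  intro N
  induction N with
  | zero =>
    intro f D hcard hsub
    have : 𝒞 = D := by
      apply Finset.Subset.antisymm _ hsub
      intro x hx
      by_contra hxD
      have : x ∈ 𝒞 \ D := Finset.mem_sdiff.2 ⟨hx, hxD⟩
      rw [Finset.card_eq_zero] at hcard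
      rw [hcard] at this
      exact absurd this (Finset.notMem_empty x)
    exact ⟨f, by rw [this]⟩
  | succ N IH =>
    intro f D hcard hsub
    have hne : (𝒞 \ D).Nonempty := by
      rw [← Finset.card_pos, hcard]; omega
    obtain ⟨c, hcm⟩ := hne
    rw [Finset.mem_sdiff] at hcm
    obtain ⟨j, hj⟩ := pot_step P M τ hM Ls ρ hρ hcm.2 f
    have hstep : (𝒞 \ insert c D).card = N := by
      have : 𝒞 \ insert c D = (𝒞 \ D).erase c := by
        ext x
        simp only [Finset.mem_sdiff, Finset.mem_insert, Finset.mem_erase, not_or]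
        tauto
      rw [this, Finset.card_erase_of_mem (Finset.mem_sdiff.2 hcm), hcard]
      omega
    obtain ⟨g, hg⟩ := IH (Function.update f c j) (insert c D) hstep
      (Finset.insert_subset hcm.1 hsub)
    exact ⟨g, le_trans hg hj⟩


lemma exists_greedy {V : Type} [DecidableEq V] (A : V → Finset ℕ) (τ : ℕ)
    (hA : ∀ v, τ ≤ (A v).card) :
    ∀ (N : ℕ) (F : Finset V), F.card = N → F.card ≤ τ →
      ∃ cF : V → ℕ, (∀ v ∈ F, cF v ∈ A v) ∧ Set.InjOn cF ↑F := by
  intro N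
  induction N with
  | zero =>
    intro F hF _
    rw [Finset.card_eq_zero] at hF
    subst hF
    exact ⟨fun _ => 0, fun v hv => absurd hv (Finset.notMem_empty v), by simp⟩
  | succ N IH =>
    intro F hF hFτ
    have hne : F.Nonempty := Finset.card_pos.1 (by omega)
    obtain ⟨v₀, hv₀⟩ := hne
    set F' := F.erase v₀ with hF'
    have hF'card : F'.card = N := by
      rw [hF', Finset.card_erase_of_mem hv₀, hF]
      omega
    obtain ⟨c', h1, h2⟩ := IH F' hF'card (by omega)
    set used := F'.image c' with hused
    have husedcard : used.card ≤ N := by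
      calc used.card ≤ F'.card := Finset.card_image_le
      _ = N := hF'card
    have hAv : τ ≤ (A v₀).card := hA v₀
    have hnonempty : (A v₀ \ used).Nonempty := by
      rw [← Finset.card_pos]
      have := Finset.card_le_card_sdiff_add_card (s := A v₀) (t := used)
      omega
    obtain ⟨c₀, hc₀⟩ := hnonempty
    rw [Finset.mem_sdiff] at hc₀
    refine ⟨Function.update c' v₀ c₀, ?_, ?_⟩
    · intro v hv
      by_cases hvv : v = v₀
      · subst hvv
        rw [Function.update_self]
        exact hc₀.1
      · rw [Function.update_of_ne hvv]
        exact h1 v (Finset.mem_erase.2 ⟨hvv, hv⟩)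
    · intro x hx y hy hxy
      rw [Finset.mem_coe] at hx hy
      by_cases hxv : x = v₀ <;> by_cases hyv : y = v₀
      · rw [hxv, hyv]
      · exfalso
        rw [hxv, Function.update_self, Function.update_of_ne hyv] at hxy
        exact hc₀.2 (hxy ▸ Finset.mem_image_of_mem c' (Finset.mem_erase.2 ⟨hyv, hy⟩))
      · exfalso
        rw [hyv, Function.update_self, Function.update_of_ne hxv] at hxy
        exact hc₀.2 (hxy ▸ Finset.mem_image_of_mem c' (Finset.mem_erase.2 ⟨hxv, hx⟩))
      · rw [Function.update_of_ne hxv, Function.update_of_ne hyv] at hxy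
        exact h2 (Finset.mem_coe.2 (Finset.mem_erase.2 ⟨hxv, hx⟩))
          (Finset.mem_coe.2 (Finset.mem_erase.2 ⟨hyv, hy⟩)) hxy

end Potential

section Init
variable {V : Type} [Fintype V]

lemma pot_init_le (P : V → ℕ) (M τ : ℕ) (hM : 1 ≤ M) (Ls : V → Finset ℕ) (ρ : ℝ)
    (hρ : 0 < ρ) (k : ℕ) (hLs : ∀ v, k ≤ (Ls v).card)
    (htail : (((univ : Finset V).filter (fun v => ¬ P v < M)).card : ℝ) ≤ ρ)
    (hn0 : (0:ℝ) < (Fintype.card V : ℝ))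
    (hk1 : 2*(M:ℝ)*Real.log ((Fintype.card V : ℝ)/ρ) ≤ (k:ℝ))
    (hk2 : Real.log (4*(Fintype.card V : ℝ)) + (τ:ℝ)*Real.log 2 ≤ (k:ℝ)/4) :
    pot P M τ Ls ρ (fun _ => 0) ∅ ≤ 3/4 := by
  set n : ℝ := (Fintype.card V : ℝ) with hn
  have hM0 : (0:ℝ) < (M:ℝ) := by exact_mod_cast hM
  set q : ℝ := 1 - 1/(2*(M:ℝ)) with hqdef
  have hM1 : (1:ℝ) ≤ (M:ℝ) := by exact_mod_cast hM
  have hq0 : 0 ≤ q := by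
    rw [hqdef]
    have : 1/(2*(M:ℝ)) ≤ 1 := by
      rw [div_le_one (by linarith)]
      linarith
    linarith
  have hq1 : q ≤ 1 := by
    rw [hqdef]
    have : 0 < 1/(2*(M:ℝ)) := by positivity
    linarith
  -- bound q^k ≤ ρ/n
  have hqk : q ^ k ≤ ρ / n := by
    have hstep : q ≤ Real.exp (-(1/(2*(M:ℝ)))) := by
      have := Real.add_one_le_exp (-(1/(2*(M:ℝ))))
      rw [hqdef]; linarith
    have h1 : q ^ k ≤ Real.exp (-(1/(2*(M:ℝ)))) ^ k := pow_le_pow_left₀ hq0 hstep k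
    have h2 : Real.exp (-(1/(2*(M:ℝ)))) ^ k = Real.exp ((k:ℝ) * -(1/(2*(M:ℝ)))) := by
      rw [← Real.exp_nat_mul]
    have h3 : Real.exp ((k:ℝ) * -(1/(2*(M:ℝ)))) ≤ Real.exp (-(Real.log (n/ρ))) := by
      apply Real.exp_le_exp.2
      have hdiv : Real.log (n/ρ) ≤ (k:ℝ)/(2*(M:ℝ)) := by
        rw [le_div_iff₀ (by linarith)]
        calc Real.log (n/ρ) * (2*(M:ℝ)) = 2*(M:ℝ)*Real.log (n/ρ) := by ring
        _ ≤ (k:ℝ) := hk1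
      have : (k:ℝ) * -(1/(2*(M:ℝ))) = -((k:ℝ)/(2*(M:ℝ))) := by ring
      rw [this]
      linarith
    have h4 : Real.exp (-(Real.log (n/ρ))) = ρ/n := by
      rw [Real.exp_neg, Real.exp_log (by positivity)]
      rw [inv_div]
    calc q ^ k ≤ Real.exp (-(1/(2*(M:ℝ)))) ^ k := h1
    _ = Real.exp ((k:ℝ) * -(1/(2*(M:ℝ)))) := h2
    _ ≤ Real.exp (-(Real.log (n/ρ))) := h3
    _ = ρ/n := h4
  -- bound on the reserve part
  have hres : n * ((2:ℝ) ^ (τ:ℤ) * (3/4:ℝ) ^ k) ≤ 1/4 := by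
    have e1 : (2:ℝ) ^ (τ:ℤ) = Real.exp ((τ:ℝ) * Real.log 2) := by
      conv_lhs => rw [zpow_natCast, ← Real.exp_log (by norm_num : (0:ℝ) < 2)]
      exact (Real.exp_nat_mul _ τ).symm
    have e2 : ((3:ℝ)/4) ^ k = Real.exp ((k:ℝ) * Real.log (3/4)) := by
      conv_lhs => rw [← Real.exp_log (by norm_num : (0:ℝ) < 3/4)]
      exact (Real.exp_nat_mul _ k).symm
    have e3 : n = Real.exp (Real.log n) := (Real.exp_log hn0).symm
    have hlog34 : Real.log (3/4) ≤ -(1/4 : ℝ) := by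
      have := Real.log_le_sub_one_of_pos (by norm_num : (0:ℝ) < 3/4)
      linarith
    have hklog : (k:ℝ) * Real.log (3/4) ≤ -((k:ℝ)/4) := by
      have hk0 : (0:ℝ) ≤ (k:ℝ) := Nat.cast_nonneg k
      nlinarith
    have hsplit4 : Real.log (4*n) = Real.log 4 + Real.log n :=
      Real.log_mul (by norm_num) (ne_of_gt hn0)
    have hquarter : Real.log ((1:ℝ)/4) = -(Real.log 4) := by
      rw [one_div, Real.log_inv]
    have hexp : Real.log n + ((τ:ℝ) * Real.log 2 + (k:ℝ) * Real.log (3/4))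
        ≤ Real.log ((1:ℝ)/4) := by
      rw [hquarter]
      linarith
    calc n * ((2:ℝ) ^ (τ:ℤ) * (3/4:ℝ) ^ k)
        = Real.exp (Real.log n) * (Real.exp ((τ:ℝ) * Real.log 2)
            * Real.exp ((k:ℝ) * Real.log (3/4))) := by rw [← e1, ← e2, ← e3]
    _ = Real.exp (Real.log n + ((τ:ℝ) * Real.log 2 + (k:ℝ) * Real.log (3/4))) := by
        rw [← Real.exp_add, ← Real.exp_add]
    _ ≤ Real.exp (Real.log ((1:ℝ)/4)) := Real.exp_le_exp.2 hexp
    _ = 1/4 := Real.exp_log (by norm_num)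
  -- assemble
  unfold pot
  rw [Finset.sum_add_distrib]
  have hbound1 : ∑ v : V, 1/(4*ρ) * w1 P M Ls (fun _ => 0) ∅ v ≤ 1/2 := by
    have hw1 : ∀ v : V, w1 P M Ls (fun _ => 0) ∅ v
        ≤ q ^ k + (if ¬ P v < M then (1:ℝ) else 0) := by
      intro v
      unfold w1
      rw [if_neg (by rintro ⟨-, c, hc, -⟩; simp at hc)]
      by_cases hPv : P v < M
      · rw [if_pos hPv, if_neg (not_not_intro hPv), Finset.sdiff_empty]
        have : q ^ ((Ls v).card) ≤ q ^ k := pow_le_pow_of_le_one hq0 hq1 (hLs v)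
        linarith
      · rw [if_neg hPv, if_pos hPv]
        have : (0:ℝ) ≤ q ^ k := pow_nonneg hq0 k
        linarith
    have hsum1 : ∑ v : V, w1 P M Ls (fun _ => 0) ∅ v
        ≤ ∑ v : V, (q ^ k + (if ¬ P v < M then (1:ℝ) else 0)) :=
      Finset.sum_le_sum (fun v _ => hw1 v)
    have hsum2 : ∑ v : V, (q ^ k + (if ¬ P v < M then (1:ℝ) else 0))
        = n * q ^ k + (((univ : Finset V).filter (fun v => ¬ P v < M)).card : ℝ) := by
      rw [Finset.sum_add_distrib, Finset.sum_const, Finset.card_univ, Finset.sum_boole]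
      rw [nsmul_eq_mul, hn]
    have hsum3 : ∑ v : V, w1 P M Ls (fun _ => 0) ∅ v ≤ 2 * ρ := by
      have hnq : n * q ^ k ≤ ρ := by
        calc n * q ^ k ≤ n * (ρ/n) := mul_le_mul_of_nonneg_left hqk (le_of_lt hn0)
        _ = ρ := by field_simp
      rw [hsum2] at hsum1
      linarith
    calc ∑ v : V, 1/(4*ρ) * w1 P M Ls (fun _ => 0) ∅ v
        = 1/(4*ρ) * ∑ v : V, w1 P M Ls (fun _ => 0) ∅ v := by rw [Finset.mul_sum]
    _ ≤ 1/(4*ρ) * (2*ρ) := by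
        apply mul_le_mul_of_nonneg_left hsum3 (by positivity)
    _ = 1/2 := by field_simp; ring
  have hbound2 : ∑ v : V, w2 M τ Ls (fun _ => 0) ∅ v ≤ 1/4 := by
    have hw2 : ∀ v : V, w2 M τ Ls (fun _ => 0) ∅ v ≤ (2:ℝ) ^ (τ:ℤ) * (3/4:ℝ) ^ k := by
      intro v
      unfold w2
      rw [Finset.inter_empty, Finset.filter_empty, Finset.card_empty, Finset.sdiff_empty]
      push_cast
      rw [sub_zero]
      apply mul_le_mul_of_nonneg_left _ (by positivity)
      exact pow_le_pow_of_le_one (by norm_num) (by norm_num) (hLs v)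
    calc ∑ v : V, w2 M τ Ls (fun _ => 0) ∅ v
        ≤ ∑ v : V, (2:ℝ) ^ (τ:ℤ) * (3/4:ℝ) ^ k := Finset.sum_le_sum (fun v _ => hw2 v)
    _ = n * ((2:ℝ) ^ (τ:ℤ) * (3/4:ℝ) ^ k) := by
        rw [Finset.sum_const, Finset.card_univ, nsmul_eq_mul, hn]
    _ ≤ 1/4 := hres
  linarith
end Init

lemma main_colorable {V : Type} [Fintype V] [DecidableEq V] (G : SimpleGraph V) (ρ : ℝ)
    (hρ3 : 3 ≤ ρ) (P : V → ℕ) (M : ℕ) (hM : 1 ≤ M)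
    (hind : ∀ u v : V, P u = P v → P u < M → u ≠ v → ¬ G.Adj u v)
    (htail : (((univ : Finset V).filter (fun v => ¬ P v < M)).card : ℝ) ≤ ρ)
    (k τ : ℕ) (hτ4 : 4*ρ ≤ (τ:ℝ))
    (hn0 : (0:ℝ) < (Fintype.card V : ℝ))
    (hk1 : 2*(M:ℝ)*Real.log ((Fintype.card V : ℝ)/ρ) ≤ (k:ℝ))
    (hk2 : Real.log (4*(Fintype.card V : ℝ)) + (τ:ℝ)*Real.log 2 ≤ (k:ℝ)/4) :
    G.ListColorable k := by
  intro Ls hLs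
  have hρ0 : (0:ℝ) < ρ := by linarith
  set 𝒞 : Finset ℕ := univ.biUnion Ls with h𝒞
  have hLsub : ∀ v, Ls v ⊆ 𝒞 := fun v => Finset.subset_biUnion_of_mem Ls (mem_univ v)
  obtain ⟨g, hg⟩ := pot_process P M τ hM Ls ρ hρ0 𝒞 ((𝒞 \ ∅).card) (fun _ => 0) ∅ rfl
    (Finset.empty_subset 𝒞)
  have hinit : pot P M τ Ls ρ (fun _ => 0) ∅ ≤ 3/4 :=
    pot_init_le P M τ hM Ls ρ hρ0 k hLs htail hn0 hk1 hk2
  have hpot : pot P M τ Ls ρ g 𝒞 ≤ 3/4 := le_trans hg hinit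
  have hend_inter : ∀ v, Ls v ∩ 𝒞 = Ls v := fun v => Finset.inter_eq_left.2 (hLsub v)
  have hend_sdiff : ∀ v, Ls v \ 𝒞 = ∅ := fun v => Finset.sdiff_eq_empty_iff_subset.2 (hLsub v)
  have hterm_nonneg : ∀ v, 0 ≤ 1/(4*ρ) * w1 P M Ls g 𝒞 v + w2 M τ Ls g 𝒞 v := by
    intro v
    have h1 := w1_nonneg P M hM Ls g 𝒞 v
    have h2 := w2_nonneg M τ Ls g 𝒞 v
    have : (0:ℝ) ≤ 1/(4*ρ) := by positivity
    nlinarith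
  have hsingle : ∀ v, 1/(4*ρ) * w1 P M Ls g 𝒞 v + w2 M τ Ls g 𝒞 v ≤ 3/4 := by
    intro v
    refine le_trans ?_ hpot
    exact Finset.single_le_sum (fun u _ => hterm_nonneg u) (mem_univ v)
  -- every vertex has at least τ reserved colors
  have hRes : ∀ v, τ ≤ ((Ls v).filter (fun c => g c = M)).card := by
    intro v
    by_contra hlt
    push_neg at hlt
    have hw2v : w2 M τ Ls g 𝒞 v
        = (2:ℝ) ^ ((τ:ℤ) - (((Ls v).filter (fun c => g c = M)).card : ℤ)) := by
      unfold w2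
      rw [hend_inter, hend_sdiff, Finset.card_empty, pow_zero, mul_one]
    have hge2 : (2:ℝ) ≤ w2 M τ Ls g 𝒞 v := by
      rw [hw2v]
      have h1 : (1:ℤ) ≤ (τ:ℤ) - (((Ls v).filter (fun c => g c = M)).card : ℤ) := by
        have : (((Ls v).filter (fun c => g c = M)).card : ℤ) < (τ:ℤ) := by exact_mod_cast hlt
        omega
      calc (2:ℝ) = (2:ℝ) ^ (1:ℤ) := (zpow_one 2).symm
      _ ≤ (2:ℝ) ^ ((τ:ℤ) - (((Ls v).filter (fun c => g c = M)).card : ℤ)) :=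
        zpow_le_zpow_right₀ one_le_two h1
    have h1 := w1_nonneg P M hM Ls g 𝒞 v
    have h2 := hsingle v
    have : (0:ℝ) ≤ 1/(4*ρ) := by positivity
    nlinarith
  -- the failed set is small
  set F : Finset V := univ.filter (fun v => ¬ (P v < M ∧ ∃ c ∈ Ls v ∩ 𝒞, g c = P v)) with hF
  have hFw1 : ∀ v ∈ F, w1 P M Ls g 𝒞 v = 1 := by
    intro v hv
    rw [hF, Finset.mem_filter] at hv
    unfold w1
    rw [if_neg hv.2]
    by_cases hPv : P v < M
    · rw [if_pos hPv, hend_sdiff, Finset.card_empty, pow_zero]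
    · rw [if_neg hPv]
  have hFcard : (F.card : ℝ) ≤ 3 * ρ := by
    have hsub : ∑ v ∈ F, (1/(4*ρ) * w1 P M Ls g 𝒞 v + w2 M τ Ls g 𝒞 v)
        ≤ pot P M τ Ls ρ g 𝒞 := by
      unfold pot
      exact Finset.sum_le_sum_of_subset_of_nonneg (Finset.subset_univ F)
        (fun v _ _ => hterm_nonneg v)
    have hlower : (F.card : ℝ) * (1/(4*ρ))
        ≤ ∑ v ∈ F, (1/(4*ρ) * w1 P M Ls g 𝒞 v + w2 M τ Ls g 𝒞 v) := by
      calc (F.card : ℝ) * (1/(4*ρ)) = ∑ _v ∈ F, 1/(4*ρ) := by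
            rw [Finset.sum_const, nsmul_eq_mul]
      _ ≤ ∑ v ∈ F, (1/(4*ρ) * w1 P M Ls g 𝒞 v + w2 M τ Ls g 𝒞 v) := by
          apply Finset.sum_le_sum
          intro v hv
          have h2 := w2_nonneg M τ Ls g 𝒞 v
          rw [hFw1 v hv]
          linarith
    have hchain : (F.card : ℝ) * (1/(4*ρ)) ≤ 3/4 := le_trans hlower (le_trans hsub hpot)
    have hmul := mul_le_mul_of_nonneg_right hchain (by positivity : (0:ℝ) ≤ 4*ρ)
    have hL : (F.card:ℝ) * (1/(4*ρ)) * (4*ρ) = F.card := by field_simp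
    rw [hL] at hmul
    linarith
  have hFτ : F.card ≤ τ := by
    have h1 : (F.card : ℝ) ≤ (τ : ℝ) := by linarith [hFcard, hτ4]
    exact_mod_cast h1
  -- greedy coloring of the failed vertices from the reserve
  obtain ⟨cF, hcF, hinj⟩ := exists_greedy (fun v => (Ls v).filter (fun c => g c = M)) τ
    hRes F.card F rfl hFτ
  -- colors of the successful vertices
  have hch : ∀ v : V, ∃ cv : ℕ, v ∉ F → cv ∈ Ls v ∧ g cv = P v ∧ P v < M := by
    intro v
    by_cases hv : v ∈ F
    · exact ⟨0, fun h => absurd hv h⟩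
    · rw [hF, Finset.mem_filter, not_and] at hv
      have := not_not.1 (hv (mem_univ v))
      obtain ⟨hPv, c, hcm, hgc⟩ := this
      exact ⟨c, fun _ => ⟨(Finset.mem_inter.1 hcm).1, hgc, hPv⟩⟩
  choose ch hchs using hch
  refine ⟨fun v => if v ∈ F then cF v else ch v, ?_, ?_⟩
  · intro v
    show (if v ∈ F then cF v else ch v) ∈ Ls v
    by_cases hv : v ∈ F
    · rw [if_pos hv]
      exact (Finset.mem_filter.1 (hcF v hv)).1
    · rw [if_neg hv]
      exact (hchs v hv).1
  · intro u v hadj hceq₀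
    have hceq : (if u ∈ F then cF u else ch u) = (if v ∈ F then cF v else ch v) := hceq₀
    clear hceq₀
    have hne : u ≠ v := G.ne_of_adj hadj
    by_cases hu : u ∈ F <;> by_cases hv : v ∈ F
    · rw [if_pos hu, if_pos hv] at hceq
      exact hne (hinj (Finset.mem_coe.2 hu) (Finset.mem_coe.2 hv) hceq)
    · rw [if_pos hu, if_neg hv] at hceq
      have h1 : g (cF u) = M := (Finset.mem_filter.1 (hcF u hu)).2
      have h2 : g (ch v) = P v := (hchs v hv).2.1
      have h3 : P v < M := (hchs v hv).2.2
      rw [hceq, h2] at h1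
      omega
    · rw [if_neg hu, if_pos hv] at hceq
      have h1 : g (cF v) = M := (Finset.mem_filter.1 (hcF v hv)).2
      have h2 : g (ch u) = P u := (hchs u hu).2.1
      have h3 : P u < M := (hchs u hu).2.2
      rw [← hceq, h2] at h1
      omega
    · rw [if_neg hu, if_neg hv] at hceq
      have h2u : g (ch u) = P u := (hchs u hu).2.1
      have h2v : g (ch v) = P v := (hchs v hv).2.1
      have h3u : P u < M := (hchs u hu).2.2
      have hPuv : P u = P v := by rw [← h2u, ← h2v, hceq]
      exact hind u v hPuv h3u hne hadj


/-- There is a constant `C > 0` such that every graph `G` with Hall ratio at most `ρ`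
(`ρ ≥ 3`) and `n = v(G) ≥ 2ρ` vertices has list chromatic number at most
`C·ρ·(log(n/ρ))²`. -/
theorem list_chromatic_number_of_hall_ratio :
    ∃ C : ℝ, 0 < C ∧ ∀ ρ : ℝ, 3 ≤ ρ →
      ∀ (V : Type) [Fintype V] (G : SimpleGraph V),
        G.HallRatioLE ρ → 2 * ρ ≤ (Fintype.card V : ℝ) →
        (G.listChromaticNumber : ℝ) ≤
          C * ρ * Real.log ((Fintype.card V : ℝ) / ρ) ^ 2 := by
  refine ⟨100, by norm_num, ?_⟩
  intro ρ hρ3 V _ G hHall hn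
  classical
  set n : ℝ := (Fintype.card V : ℝ) with hndef
  have hρ0 : (0:ℝ) < ρ := by linarith
  have hn0 : (0:ℝ) < n := by rw [hndef]; linarith
  have hnnat0 : 0 < Fintype.card V := by rw [hndef] at hn0; exact_mod_cast hn0
  set Lg : ℝ := Real.log (n / ρ) with hLgdef
  have hdiv2 : (2:ℝ) ≤ n / ρ := by
    rw [le_div_iff₀ hρ0]
    linarith
  have hLg2 : Real.log 2 ≤ Lg := Real.log_le_log (by norm_num) hdiv2
  have hlog2pos : (0:ℝ) < Real.log 2 := Real.log_pos (by norm_num)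
  have hLgpos : 0 < Lg := lt_of_lt_of_le hlog2pos hLg2
  -- extraction of independent sets
  have hex : ∀ s : Finset V, s.Nonempty → ∃ I : Finset V, I ⊆ s ∧ I.Nonempty ∧
      (∀ u ∈ I, ∀ v ∈ I, u ≠ v → ¬ G.Adj u v) ∧ (s.card : ℝ) ≤ ρ * I.card :=
    fun s hs => hall_extract G ρ hHall s hs
  obtain ⟨M, P, hind, htail, hsize⟩ :=
    exists_partition G ρ (by linarith) hex (univ : Finset V).card univ rfl
  have hind' : ∀ u v : V, P u = P v → P u < M → u ≠ v → ¬ G.Adj u v :=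
    fun u v => hind u (mem_univ u) v (mem_univ v)
  have hucard : ((univ : Finset V).card : ℝ) = n := by
    rw [Finset.card_univ, hndef]
  have hM1 : 1 ≤ M := by
    by_contra hM0
    have hMeq : M = 0 := by omega
    have hfull : (univ : Finset V).filter (fun v => ¬ P v < M) = univ := by
      apply Finset.filter_true_of_mem
      intro v _
      omega
    rw [hfull, hucard] at htail
    linarith
  -- bound on number of parts
  have hMb : (M:ℝ) ≤ ρ * Lg + 1 := by
    rcases hsize with h0 | hlt
    · omega
    · rw [hucard] at hlt
      have hq1 : (0:ℝ) < 1 - 1/ρ := by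
        have : 1/ρ ≤ 1/3 := by
          apply div_le_div_of_nonneg_left <;> linarith
        linarith
      have hqe : Real.exp (1/ρ) ≤ (1 - 1/ρ)⁻¹ := by
        have h1 : 1 - 1/ρ ≤ Real.exp (-(1/ρ)) := by
          have := Real.add_one_le_exp (-(1/ρ))
          linarith
        have h2 : (Real.exp (-(1/ρ)))⁻¹ ≤ (1 - 1/ρ)⁻¹ := inv_anti₀ hq1 h1
        rwa [Real.exp_neg, inv_inv] at h2
      have hpow : Real.exp (((M-1:ℕ):ℝ)/ρ) ≤ ((1 - 1/ρ)⁻¹) ^ (M-1) := by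
        have h3 : Real.exp (((M-1:ℕ):ℝ)/ρ) = Real.exp (1/ρ) ^ (M-1) := by
          rw [← Real.exp_nat_mul]
          congr 1
          ring
        rw [h3]
        exact pow_le_pow_left₀ (le_of_lt (Real.exp_pos _)) hqe (M-1)
      have h4 : ρ * Real.exp (((M-1:ℕ):ℝ)/ρ) < n := by
        calc ρ * Real.exp (((M-1:ℕ):ℝ)/ρ) ≤ ρ * ((1 - 1/ρ)⁻¹) ^ (M-1) :=
          mul_le_mul_of_nonneg_left hpow (le_of_lt hρ0)
        _ < n := hlt
      have h5 : Real.exp (((M-1:ℕ):ℝ)/ρ) < n/ρ := by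
        rw [lt_div_iff₀ hρ0]
        calc Real.exp (((M-1:ℕ):ℝ)/ρ) * ρ = ρ * Real.exp (((M-1:ℕ):ℝ)/ρ) := by ring
        _ < n := h4
      have h6 : ((M-1:ℕ):ℝ)/ρ < Lg := by
        rw [hLgdef]
        exact (Real.lt_log_iff_exp_lt (by positivity)).2 h5
      have h7 : ((M-1:ℕ):ℝ) = (M:ℝ) - 1 := by
        push_cast [hM1]
        ring
      rw [h7] at h6
      rw [div_lt_iff₀ hρ0] at h6
      nlinarith
  -- define τ and k
  set τ : ℕ := ⌈4*ρ⌉₊ with hτdef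
  have hτ4 : 4*ρ ≤ (τ:ℝ) := Nat.le_ceil _
  have hτub : (τ:ℝ) ≤ 4*ρ + 1 := le_of_lt (Nat.ceil_lt_add_one (by positivity))
  set K : ℝ := 2*(M:ℝ)*Lg + 16*ρ + 4*Real.log (4*n) + 8 with hKdef
  have hlog4n : Real.log (4*n) = Real.log 4 + Real.log n :=
    Real.log_mul (by norm_num) (ne_of_gt hn0)
  have hlogn0 : 0 ≤ Real.log n := Real.log_nonneg (by linarith)
  have hlog4 : Real.log 4 = 2 * Real.log 2 := by
    rw [show (4:ℝ) = 2^2 by norm_num, Real.log_pow]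
    push_cast
    ring
  have hlog4n0 : 0 ≤ Real.log (4*n) := by
    rw [hlog4n, hlog4]
    positivity
  have hK0 : 0 ≤ K := by
    rw [hKdef]
    have hMnn : (0:ℝ) ≤ (M:ℝ) := Nat.cast_nonneg M
    nlinarith [mul_nonneg (mul_nonneg (by norm_num : (0:ℝ) ≤ 2) hMnn) (le_of_lt hLgpos)]
  set k : ℕ := ⌈K⌉₊ with hkdef
  have hkK : K ≤ (k:ℝ) := Nat.le_ceil K
  have hkub : (k:ℝ) ≤ K + 1 := le_of_lt (Nat.ceil_lt_add_one hK0)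
  have hlog2ub : Real.log 2 < 0.6931471808 := Real.log_two_lt_d9
  -- the two requirements on k
  have hk1 : 2*(M:ℝ)*Real.log (n/ρ) ≤ (k:ℝ) := by
    rw [← hLgdef]
    have : 0 ≤ 16*ρ + 4*Real.log (4*n) + 8 := by positivity
    rw [hKdef] at hkK
    linarith
  have hk2 : Real.log (4*n) + (τ:ℝ)*Real.log 2 ≤ (k:ℝ)/4 := by
    have h1 : (τ:ℝ)*Real.log 2 ≤ (4*ρ+1) * Real.log 2 :=
      mul_le_mul_of_nonneg_right hτub (le_of_lt hlog2pos)
    have h2 : (4*ρ+1) * Real.log 2 ≤ (4*ρ+1) * 0.6931471808 := by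
      apply mul_le_mul_of_nonneg_left (le_of_lt hlog2ub)
      linarith
    have h3 : 16*ρ + 4*Real.log (4*n) + 8 ≤ K := by
      rw [hKdef]
      nlinarith [mul_nonneg (mul_nonneg (by norm_num : (0:ℝ) ≤ 2) (Nat.cast_nonneg M : (0:ℝ) ≤ (M:ℝ))) (le_of_lt hLgpos)]
    nlinarith
  -- colorability
  have hcolor : G.ListColorable k :=
    main_colorable G ρ hρ3 P M hM1 hind' htail k τ hτ4 hn0 hk1 hk2
  have hchrom : G.listChromaticNumber ≤ k := Nat.sInf_le hcolor
  have hchromR : (G.listChromaticNumber : ℝ) ≤ (k:ℝ) := by exact_mod_cast hchrom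
  -- final numeric bound
  have hlogn : Real.log n = Lg + Real.log ρ := by
    rw [hLgdef, Real.log_div (ne_of_gt hn0) (ne_of_gt hρ0)]
    ring
  have hlogρ : Real.log ρ ≤ ρ - 1 := by
    have := Real.log_le_sub_one_of_pos hρ0
    linarith
  have hlog2lb : (0.6931471803:ℝ) < Real.log 2 := Real.log_two_gt_d9
  have hfinal : K + 1 ≤ 100 * ρ * Lg^2 := by
    rw [hKdef, hlog4n, hlog4, hlogn]
    have hLglb : (0.69:ℝ) ≤ Lg := by linarith
    have hsq : (0.47:ℝ) ≤ Lg^2 := by nlinarith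
    have hLgsq : 0.69 * Lg ≤ Lg^2 := by nlinarith
    have hMuse : 2*(M:ℝ)*Lg ≤ 2*(ρ*Lg+1)*Lg := by
      apply mul_le_mul_of_nonneg_right _ (le_of_lt hLgpos)
      linarith
    nlinarith [mul_le_mul_of_nonneg_left hsq (by linarith : (0:ℝ) ≤ ρ - 3),
      mul_le_mul_of_nonneg_left hsq (le_of_lt hρ0), hLgsq, hlog2ub, hlog2pos,
      mul_le_mul_of_nonneg_left hLgsq (le_of_lt hρ0)]
  calc (G.listChromaticNumber : ℝ) ≤ (k:ℝ) := hchromR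
  _ ≤ K + 1 := hkub
  _ ≤ 100 * ρ * Lg^2 := hfinal
end

section
/- Let k ≥ 1 be an integer. If G is a non-empty graph of minimum degree d ≥ 6k, then there exist a non-empty subset X ⊆ V(G) and a matching M from the coboundary Y of X to X that saturates Y, such that |Y| ≤ 3k and the graph G[X ∪ Y]/M (obtained from the subgraph of G induced on X ∪ Y by contracting every edge of M) is k-connected. -/
open Real

/-- `G` is `k`-connected: it has more than `k` vertices and removing any set of fewer
than `k` vertices leaves it connected. -/
def SimpleGraph.IsKConnected {V : Type*} [Fintype V] (G : SimpleGraph V) (k : ℕ) : Prop :=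
  k < Fintype.card V ∧ ∀ s : Finset V, s.card < k → (G.induce ((↑s : Set V)ᶜ)).Connected

/-- The vertex connectivity of `G`: the largest `k` such that `G` is `k`-connected. -/
noncomputable def SimpleGraph.vertexConnectivity {V : Type*} [Fintype V]
    (G : SimpleGraph V) : ℕ :=
  sSup {k | G.IsKConnected k}
/-- The coboundary of `X` in `G`: all vertices outside `X` with a neighbor in `X`. -/
def SimpleGraph.coboundary {V : Type*} (G : SimpleGraph V) (X : Set V) : Set V :=
  (⋃ v ∈ X, G.neighborSet v) \ X

/-- The graph `G[X ∪ Y]/M` obtained from the subgraph of `G` induced on `X ∪ Y` by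
contracting the matching `M = {{y, f y} : y ∈ Y}` from `Y` into `X`; its vertices are the
elements of `X`, and two of them are adjacent if some edge of `G` joins their bags, the
bag of `x ∈ X` being `{x} ∪ {y ∈ Y | f y = x}`. -/
def SimpleGraph.contractMatching {V : Type*} (G : SimpleGraph V) (X : Finset V)
    (Y : Set V) (f : V → V) : SimpleGraph {x // x ∈ X} where
  Adj x₁ x₂ := x₁ ≠ x₂ ∧ ∃ u v : V, G.Adj u v ∧
    (u = ↑x₁ ∨ (u ∈ Y ∧ f u = ↑x₁)) ∧ (v = ↑x₂ ∨ (v ∈ Y ∧ f v = ↑x₂))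
  symm := by
    constructor
    rintro x₁ x₂ ⟨hne, u, v, hadj, hu, hv⟩
    exact ⟨hne.symm, v, u, hadj.symm, hv, hu⟩
  loopless := by constructor; rintro x ⟨hne, -⟩; exact hne rfl

lemma mem_coboundary {V : Type*} (G : SimpleGraph V) (X : Set V) (w : V) :
    w ∈ G.coboundary X ↔ w ∉ X ∧ ∃ x ∈ X, G.Adj x w := by
  simp [SimpleGraph.coboundary, SimpleGraph.mem_neighborSet, and_comm]

/-- Minimum degree `6k` together with a small coboundary forces `X` to be large. -/
lemma coboundary_card_lb {V : Type*} [Fintype V] (k : ℕ) (G : SimpleGraph V)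
    (hdeg : ∀ v : V, 6 * k ≤ (G.neighborSet v).ncard)
    (X : Finset V) (hne : X.Nonempty) (hcob : (G.coboundary ↑X).ncard ≤ 3 * k) :
    3 * k + 1 ≤ X.card := by
  obtain ⟨v, hv⟩ := hne
  have hsub : G.neighborSet v ⊆ ((↑X : Set V) \ {v}) ∪ G.coboundary ↑X := by
    intro w hw
    by_cases wX : w ∈ (↑X : Set V)
    · exact Or.inl ⟨wX, by rintro rfl; exact G.loopless.irrefl _ hw⟩
    · exact Or.inr ((mem_coboundary G ↑X w).mpr ⟨wX, v, by simpa using hv, hw⟩)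
  have h1 : (G.neighborSet v).ncard ≤ ((↑X : Set V) \ {v}).ncard + (G.coboundary ↑X).ncard :=
    le_trans (Set.ncard_le_ncard hsub (Set.toFinite _)) (Set.ncard_union_le _ _)
  have h2 : ((↑X : Set V) \ {v}).ncard = X.card - 1 := by
    rw [Set.ncard_diff (by simpa using hv), Set.ncard_coe_finset, Set.ncard_singleton]
  have h3 := hdeg v
  have h4 : 1 ≤ X.card := Finset.card_pos.mpr ⟨v, hv⟩
  omega

/-- Main connectivity step: if `X` is vertex-minimal among nonempty sets with coboundary
of size at most `3k`, then the contraction is `k`-connected. -/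
lemma contractMatching_kconnected (k : ℕ) (V : Type) [Fintype V] (G : SimpleGraph V)
    (X : Finset V) (f : V → V)
    (hmin : ∀ X' : Finset V, X'.Nonempty → (G.coboundary ↑X').ncard ≤ 3 * k →
      X.card ≤ X'.card)
    (hXlb : 3 * k + 1 ≤ X.card)
    (hXcob : (G.coboundary ↑X).ncard ≤ 3 * k)
    (hfadj : ∀ y ∈ G.coboundary ↑X, G.Adj y (f y) ∧ f y ∈ X)
    (hfinj : Set.InjOn f (G.coboundary ↑X)) :
    (G.contractMatching X (G.coboundary ↑X) f).IsKConnected k := by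
  classical
  set H := G.contractMatching X (G.coboundary ↑X) f with hH
  refine ⟨by rw [Fintype.card_coe]; omega, ?_⟩
  intro s hs
  by_contra hnc
  rw [SimpleGraph.connected_iff] at hnc
  push_neg at hnc
  have hne2 : Nonempty ↥((↑s : Set ↥X)ᶜ) := by
    have hex2 : ∃ a : ↥X, a ∉ s := by
      by_contra hall2
      push_neg at hall2
      have h1 : (Finset.univ : Finset ↥X) ⊆ s := fun a _ => hall2 a
      have h2 := Finset.card_le_card h1
      rw [Finset.card_univ, Fintype.card_coe] at h2
      omega
    obtain ⟨a0, ha0⟩ := hex2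
    exact ⟨⟨a0, by simpa using ha0⟩⟩
  have hnp : ¬ (H.induce ((↑s : Set ↥X)ᶜ)).Preconnected := fun h => (hnc h).false hne2.some
  rw [SimpleGraph.Preconnected] at hnp
  push_neg at hnp
  obtain ⟨u, v, huv⟩ := hnp
  obtain ⟨⟨ux, huxX⟩, hux⟩ := u
  obtain ⟨⟨vx, hvxX⟩, hvx⟩ := v
  set W := H.induce ((↑s : Set ↥X)ᶜ) with hW
  set u0 : ↥((↑s : Set ↥X)ᶜ) := ⟨⟨ux, huxX⟩, hux⟩ with hu0
  set Aset : Set V := {x : V | ∃ (hx : x ∈ X) (hs' : (⟨x, hx⟩ : ↥X) ∈ ((↑s : Set ↥X)ᶜ)),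
    W.Reachable u0 ⟨⟨x, hx⟩, hs'⟩} with hAdef
  set Sset : Set V := Subtype.val '' (↑s : Set ↥X) with hSdef
  set Bset : Set V := ((↑X : Set V) \ Sset) \ Aset with hBdef
  -- separation
  have hsepV : ∀ x (hx : x ∈ X), x ∈ Aset → ∀ z (hz : z ∈ X), z ∈ Bset →
      ¬ H.Adj ⟨x, hx⟩ ⟨z, hz⟩ := by
    intro x hx hxA z hz hzB hadj
    obtain ⟨hx', hs', hr⟩ := hxA
    have hzs : (⟨z, hz⟩ : ↥X) ∈ ((↑s : Set ↥X)ᶜ) := by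
      intro hmem
      exact hzB.1.2 ⟨⟨z, hz⟩, hmem, rfl⟩
    have hadj2 : W.Adj ⟨⟨x, hx'⟩, hs'⟩ ⟨⟨z, hz⟩, hzs⟩ := hadj
    exact hzB.2 ⟨hz, hzs, hr.trans hadj2.reachable⟩
  have huA : ux ∈ Aset := ⟨huxX, hux, SimpleGraph.Reachable.refl _⟩
  have hvB : vx ∈ Bset := by
    refine ⟨⟨by simpa using hvxX, ?_⟩, ?_⟩
    · rintro ⟨⟨z, hz⟩, hzs, rfl⟩
      exact hvx hzs
    · rintro ⟨hx', hs', hr⟩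
      exact huv hr
  have hAX : Aset ⊆ (↑X : Set V) := by
    rintro x ⟨hx, -, -⟩
    simpa using hx
  -- the Y-parts
  set YA : Set V := {y | y ∈ G.coboundary ↑X ∧ f y ∈ Aset} with hYAdef
  set YS : Set V := {y | y ∈ G.coboundary ↑X ∧ f y ∈ Sset} with hYSdef
  set YB : Set V := {y | y ∈ G.coboundary ↑X ∧ f y ∈ Bset} with hYBdef
  have hSnotA : ∀ x, x ∈ Sset → x ∉ Aset := by
    rintro x ⟨⟨z, hz⟩, hzs, rfl⟩ ⟨hx', hs', -⟩
    exact hs' hzs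
  have hcobA : G.coboundary Aset ⊆ Sset ∪ YS ∪ YA := by
    intro w hw
    obtain ⟨hwA, x, hxA, hadj⟩ := (mem_coboundary _ _ _).mp hw
    have hxX : x ∈ X := by simpa using hAX hxA
    by_cases hwX : w ∈ X
    · by_cases hwS : w ∈ Sset
      · exact Or.inl (Or.inl hwS)
      · exfalso
        have hwB : w ∈ Bset := ⟨⟨by simpa using hwX, hwS⟩, hwA⟩
        have hne : (⟨x, hxX⟩ : ↥X) ≠ ⟨w, hwX⟩ := by
          intro h
          apply hwA
          have hxw : x = w := congrArg Subtype.val h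
          exact hxw ▸ hxA
        exact hsepV x hxX hxA w hwX hwB ⟨hne, x, w, hadj, Or.inl rfl, Or.inl rfl⟩
    · have hwY : w ∈ G.coboundary ↑X :=
        (mem_coboundary _ _ _).mpr ⟨by simpa using hwX, x, by simpa using hxX, hadj⟩
      have hfwX : f w ∈ X := (hfadj w hwY).2
      by_cases h1 : f w ∈ Sset
      · exact Or.inl (Or.inr ⟨hwY, h1⟩)
      by_cases h2 : f w ∈ Aset
      · exact Or.inr ⟨hwY, h2⟩
      exfalso
      have hfwB : f w ∈ Bset := ⟨⟨by simpa using hfwX, h1⟩, h2⟩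
      have hne : (⟨x, hxX⟩ : ↥X) ≠ ⟨f w, hfwX⟩ := by
        intro h
        apply h2
        have hxw : x = f w := congrArg Subtype.val h
        exact hxw ▸ hxA
      exact hsepV x hxX hxA (f w) hfwX hfwB
        ⟨hne, x, w, hadj, Or.inl rfl, Or.inr ⟨hwY, rfl⟩⟩
  have hcobB : G.coboundary Bset ⊆ Sset ∪ YS ∪ YB := by
    intro w hw
    obtain ⟨hwB, x, hxB, hadj⟩ := (mem_coboundary _ _ _).mp hw
    have hxX : x ∈ X := by simpa using hxB.1.1
    by_cases hwX : w ∈ X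
    · by_cases hwS : w ∈ Sset
      · exact Or.inl (Or.inl hwS)
      · exfalso
        have hwA : w ∈ Aset := by
          by_contra hwA
          exact hwB ⟨⟨by simpa using hwX, hwS⟩, hwA⟩
        have hne : (⟨w, hwX⟩ : ↥X) ≠ ⟨x, hxX⟩ := by
          intro h
          apply hxB.2
          have hxw : w = x := congrArg Subtype.val h
          exact hxw ▸ hwA
        exact hsepV w hwX hwA x hxX hxB ⟨hne, w, x, hadj.symm, Or.inl rfl, Or.inl rfl⟩
    · have hwY : w ∈ G.coboundary ↑X :=
        (mem_coboundary _ _ _).mpr ⟨by simpa using hwX, x, by simpa using hxX, hadj⟩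
      have hfwX : f w ∈ X := (hfadj w hwY).2
      by_cases h1 : f w ∈ Sset
      · exact Or.inl (Or.inr ⟨hwY, h1⟩)
      by_cases h2 : f w ∈ Bset
      · exact Or.inr ⟨hwY, h2⟩
      exfalso
      have hfwA : f w ∈ Aset := by
        by_contra h3
        exact h2 ⟨⟨by simpa using hfwX, h1⟩, h3⟩
      have hne : (⟨f w, hfwX⟩ : ↥X) ≠ ⟨x, hxX⟩ := by
        intro h
        apply hxB.2
        have hxw : f w = x := congrArg Subtype.val h
        exact hxw ▸ hfwA
      exact hsepV (f w) hfwX hfwA x hxX hxB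
        ⟨hne, w, x, hadj.symm, Or.inr ⟨hwY, rfl⟩, Or.inl rfl⟩
  -- cardinalities
  have hSn : Sset.ncard = s.card := by
    rw [hSdef, Set.ncard_image_of_injective _ Subtype.val_injective, Set.ncard_coe_finset]
  have hYSle : YS.ncard ≤ Sset.ncard := by
    have himg : f '' YS ⊆ Sset := by
      rintro _ ⟨y, ⟨hy, hfy⟩, rfl⟩
      exact hfy
    calc YS.ncard = (f '' YS).ncard :=
          (Set.ncard_image_of_injOn (hfinj.mono (fun y hy => hy.1))).symm
      _ ≤ Sset.ncard := Set.ncard_le_ncard himg (Set.toFinite _)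
  have hsum3 : YA.ncard + YB.ncard + YS.ncard ≤ 3 * k := by
    have hd1 : Disjoint YA YB := by
      rw [Set.disjoint_left]
      rintro y ⟨hy, hfy⟩ ⟨hy', hfy'⟩
      exact hfy'.2 hfy
    have hd2 : Disjoint (YA ∪ YB) YS := by
      rw [Set.disjoint_left]
      rintro y (⟨hy, hfy⟩ | ⟨hy, hfy⟩) ⟨hy', hfy'⟩
      · exact hSnotA _ hfy' hfy
      · exact hfy.1.2 hfy'
    have he1 : (YA ∪ YB).ncard = YA.ncard + YB.ncard := Set.ncard_union_eq hd1
    have he2 : ((YA ∪ YB) ∪ YS).ncard = (YA ∪ YB).ncard + YS.ncard := Set.ncard_union_eq hd2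
    have hsub : (YA ∪ YB) ∪ YS ⊆ G.coboundary ↑X := by
      rintro y ((⟨hy, -⟩ | ⟨hy, -⟩) | ⟨hy, -⟩) <;> exact hy
    have := (Set.ncard_le_ncard hsub (Set.toFinite _)).trans hXcob
    omega
  have hcA : (G.coboundary Aset).ncard ≤ Sset.ncard + YS.ncard + YA.ncard := by
    refine (Set.ncard_le_ncard hcobA (Set.toFinite _)).trans ?_
    refine (Set.ncard_union_le _ _).trans ?_
    exact Nat.add_le_add_right (Set.ncard_union_le _ _) _
  have hcB : (G.coboundary Bset).ncard ≤ Sset.ncard + YS.ncard + YB.ncard := by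
    refine (Set.ncard_le_ncard hcobB (Set.toFinite _)).trans ?_
    refine (Set.ncard_union_le _ _).trans ?_
    exact Nat.add_le_add_right (Set.ncard_union_le _ _) _
  have hkey : (G.coboundary Aset).ncard ≤ 3 * k ∨ (G.coboundary Bset).ncard ≤ 3 * k := by
    omega
  have hfinal : ∀ C : Set V, C ⊆ (↑X : Set V) → (∃ c, c ∈ C) → (∃ m, m ∈ (↑X : Set V) ∧ m ∉ C) →
      (G.coboundary C).ncard ≤ 3 * k → False := by
    rintro C hCX ⟨c, hc⟩ ⟨m, hmX, hmC⟩ hCcob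
    have hCfin : C.Finite := Set.toFinite _
    set XC : Finset V := hCfin.toFinset with hXC
    have hcoe : (↑XC : Set V) = C := Set.Finite.coe_toFinset _
    have hXCne : XC.Nonempty := ⟨c, (Set.Finite.mem_toFinset _).mpr hc⟩
    have hcob' : (G.coboundary ↑XC).ncard ≤ 3 * k := by rw [hcoe]; exact hCcob
    have hm := hmin XC hXCne hcob'
    have hcard : XC.card = C.ncard := (Set.ncard_eq_toFinset_card _ _).symm
    have hsubC : C ⊆ (↑X : Set V) \ {m} := by
      intro x hx
      exact ⟨hCX hx, by rintro rfl; exact hmC hx⟩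
    have hle : C.ncard ≤ X.card - 1 := by
      have h1 := Set.ncard_le_ncard hsubC (Set.toFinite _)
      rwa [Set.ncard_diff (by simpa using hmX), Set.ncard_coe_finset, Set.ncard_singleton] at h1
    omega
  rcases hkey with hA | hB
  · exact hfinal Aset hAX ⟨ux, huA⟩ ⟨vx, by simpa using hvxX, hvB.2⟩ hA
  · refine hfinal Bset (fun x hx => hx.1.1) ⟨vx, hvB⟩ ⟨ux, by simpa using huxX, ?_⟩ hB
    intro hcon
    exact hcon.2 huA

/-- If `G` is a non-empty graph with minimum degree `d ≥ 6k` (`k ≥ 1`), then there are a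
non-empty set `X ⊆ V(G)` and a matching `M` (encoded by an injection `f` mapping each
vertex `y` of the coboundary `Y` of `X` to a neighbor `f y ∈ X`) from `Y` to `X`
saturating `Y`, such that `|Y| ≤ 3k` and `G[X ∪ Y]/M` is `k`-connected. -/
theorem exists_highly_connected_contraction (k : ℕ) (hk : 1 ≤ k)
    (V : Type) [Fintype V] [Nonempty V] (G : SimpleGraph V) (d : ℕ) (hd : 6 * k ≤ d)
    (hdeg : ∀ v : V, d ≤ (G.neighborSet v).ncard) :
    ∃ (X : Finset V) (f : V → V), X.Nonempty ∧
      (∀ y ∈ G.coboundary ↑X, G.Adj y (f y) ∧ f y ∈ X) ∧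
      Set.InjOn f (G.coboundary ↑X) ∧
      (G.coboundary ↑X).ncard ≤ 3 * k ∧
      (G.contractMatching X (G.coboundary ↑X) f).IsKConnected k := by
  classical
  have hdeg' : ∀ v : V, 6 * k ≤ (G.neighborSet v).ncard := fun v => le_trans hd (hdeg v)
  have hex : ∃ n, ∃ X : Finset V, X.card = n ∧ X.Nonempty ∧ (G.coboundary ↑X).ncard ≤ 3 * k := by
    refine ⟨_, Finset.univ, rfl, Finset.univ_nonempty, ?_⟩
    have h0 : G.coboundary (Set.univ : Set V) = ∅ := by
      ext w; simp [mem_coboundary]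
    rw [Finset.coe_univ, h0]
    simp
  obtain ⟨X, hXcard, hXne, hXcob⟩ := Nat.find_spec hex
  have hmin : ∀ X' : Finset V, X'.Nonempty → (G.coboundary ↑X').ncard ≤ 3 * k →
      X.card ≤ X'.card := by
    intro X' h1 h2
    rw [hXcard]
    exact Nat.find_min' hex ⟨X', rfl, h1, h2⟩
  clear hXcard
  have hXlb : 3 * k + 1 ≤ X.card := coboundary_card_lb k G hdeg' X hXne hXcob
  have hYfinite : (G.coboundary ↑X).Finite := Set.toFinite _
  set Yfin : Finset V := hYfinite.toFinset with hYfin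
  have hYmem : ∀ y : V, y ∈ Yfin ↔ y ∈ G.coboundary ↑X := fun y => Set.Finite.mem_toFinset _
  have hYcard : Yfin.card = (G.coboundary ↑X).ncard := (Set.ncard_eq_toFinset_card _ _).symm
  -- Hall condition
  have hall : ∀ s : Finset ↥Yfin,
      s.card ≤ (s.biUnion (fun y => G.neighborFinset y.val ∩ X)).card := by
    intro s
    set T : Finset V := s.biUnion (fun y => G.neighborFinset y.val ∩ X) with hT
    by_contra hlt
    push_neg at hlt
    have hTX : T ⊆ X := by
      intro x hx
      simp only [hT, Finset.mem_biUnion, Finset.mem_inter] at hx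
      obtain ⟨y, _, _, h⟩ := hx
      exact h
    have hsne : s.Nonempty := by
      rcases Finset.eq_empty_or_nonempty s with h | h
      · exfalso; subst h; simp at hlt
      · exact h
    have hScard : s.card ≤ 3 * k := by
      have h1 := Finset.card_le_card (Finset.subset_univ s)
      rw [Finset.card_univ, Fintype.card_coe] at h1
      omega
    have hTne : T.Nonempty := by
      obtain ⟨y, hy⟩ := hsne
      have hyY : (y : V) ∈ G.coboundary ↑X := (hYmem _).mp y.2
      obtain ⟨-, x, hxX, hadj⟩ := (mem_coboundary G ↑X y).mp hyY
      refine ⟨x, ?_⟩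
      simp only [hT, Finset.mem_biUnion, Finset.mem_inter]
      exact ⟨y, hy, by simpa [SimpleGraph.mem_neighborFinset] using hadj.symm, by simpa using hxX⟩
    set X' : Finset V := X \ T with hX'
    have hX'sub : G.coboundary ↑X' ⊆ (G.coboundary ↑X \ (Subtype.val '' (↑s : Set ↥Yfin))) ∪ ↑T := by
      intro w hw
      obtain ⟨hwn, x, hxX', hadj⟩ := (mem_coboundary G ↑X' w).mp hw
      have hxX'' : x ∈ X' := by simpa using hxX'
      have hxX : x ∈ X := (Finset.mem_sdiff.mp hxX'').1
      by_cases hwX : w ∈ X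
      · refine Or.inr ?_
        have hw' : w ∉ X' := by simpa using hwn
        simp only [hX', Finset.mem_sdiff] at hw'
        simpa using (by tauto : w ∈ T)
      · refine Or.inl ⟨(mem_coboundary G ↑X w).mpr
          ⟨by simpa using hwX, x, by simpa using hxX, hadj⟩, ?_⟩
        rintro ⟨y, hy, rfl⟩
        have hmem : x ∈ T := by
          simp only [hT, Finset.mem_biUnion, Finset.mem_inter]
          exact ⟨y, hy, by simpa [SimpleGraph.mem_neighborFinset] using hadj.symm, hxX⟩
        exact (Finset.mem_sdiff.mp hxX'').2 hmem
    have hSsub : (Subtype.val '' (↑s : Set ↥Yfin)) ⊆ G.coboundary ↑X := by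
      rintro w ⟨y, hy, rfl⟩
      exact (hYmem _).mp y.2
    have hSn : (Subtype.val '' (↑s : Set ↥Yfin)).ncard = s.card := by
      rw [Set.ncard_image_of_injective _ Subtype.val_injective, Set.ncard_coe_finset]
    have hX'cob : (G.coboundary ↑X').ncard ≤ 3 * k := by
      have h1 := Set.ncard_le_ncard hX'sub (Set.toFinite _)
      have h2 := Set.ncard_union_le
        (G.coboundary ↑X \ (Subtype.val '' (↑s : Set ↥Yfin))) (↑T : Set V)
      have h3 : (G.coboundary ↑X \ (Subtype.val '' (↑s : Set ↥Yfin))).ncard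
          = (G.coboundary ↑X).ncard - s.card := by
        rw [Set.ncard_diff hSsub, hSn]
      have h4 : (↑T : Set V).ncard = T.card := Set.ncard_coe_finset T
      have h5 : s.card ≤ (G.coboundary ↑X).ncard := by
        rw [← hSn]; exact Set.ncard_le_ncard hSsub (Set.toFinite _)
      have h6 : 1 ≤ s.card := hsne.card_pos
      omega
    have hX'card : X'.card = X.card - T.card := Finset.card_sdiff_of_subset hTX
    have hT1 : 1 ≤ T.card := hTne.card_pos
    have hTcard : T.card < s.card := hlt
    have hX'ne : X'.Nonempty := by
      rw [← Finset.card_pos, hX'card]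
      omega
    have hm := hmin X' hX'ne hX'cob
    omega
  obtain ⟨f0, hf0inj, hf0mem⟩ := (Finset.all_card_le_biUnion_card_iff_exists_injective _).mp hall
  set f : V → V := fun v => if h : v ∈ Yfin then f0 ⟨v, h⟩ else v with hfdef
  have hfadj : ∀ y ∈ G.coboundary ↑X, G.Adj y (f y) ∧ f y ∈ X := by
    intro y hy
    have hy' : y ∈ Yfin := (hYmem _).mpr hy
    have hm := hf0mem ⟨y, hy'⟩
    rw [Finset.mem_inter, SimpleGraph.mem_neighborFinset] at hm
    simp only [hfdef, dif_pos hy']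
    exact hm
  have hfinj : Set.InjOn f (G.coboundary ↑X) := by
    intro a ha b hb hab
    have ha' : a ∈ Yfin := (hYmem _).mpr ha
    have hb' : b ∈ Yfin := (hYmem _).mpr hb
    simp only [hfdef, dif_pos ha', dif_pos hb'] at hab
    exact congrArg Subtype.val (hf0inj hab)
  exact ⟨X, f, hXne, hfadj, hfinj, hXcob,
    contractMatching_kconnected k V G X f hmin hXlb hXcob hfadj hfinj⟩
end

section
/- Every graph G with no K_t minor has an independent set of size at least v(G)/(2(t − 1)). -/
open Real

set_option linter.unusedSectionVars false
set_option maxHeartbeats 1600000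

section Aux
open Finset
variable {V : Type} [Fintype V] [DecidableEq V] (G : SimpleGraph V)


def stepRel (S : Finset V) (a b : V) : Prop := G.Adj a b ∧ a ∈ S ∧ b ∈ S

def RS (S : Finset V) : V → V → Prop := Relation.ReflTransGen (stepRel G S)

lemma RS_symm {S : Finset V} {a b : V} (h : RS G S a b) : RS G S b a :=
  (@Relation.ReflTransGen.symmetric _ (stepRel G S) ⟨fun _ _ h => ⟨h.1.symm, h.2.2, h.2.1⟩⟩).symm _ _ h

lemma RS_mono {S T : Finset V} (hST : S ⊆ T) {a b : V} (h : RS G S a b) : RS G T a b :=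
  Relation.ReflTransGen.mono (r := stepRel G S) (p := stepRel G T)
    (fun _ _ hx => ⟨hx.1, hST hx.2.1, hST hx.2.2⟩) _ _ h

lemma RS_mem_right {S : Finset V} {a b : V} (h : RS G S a b) (ha : a ∈ S) : b ∈ S := by
  induction h with
  | refl => exact ha
  | tail _ h2 _ => exact h2.2.2

lemma reach_induce {S : Finset V} {a b : V} (h : RS G S a b) (ha : a ∈ S) :
    (G.induce (↑S : Set V)).Reachable ⟨a, ha⟩ ⟨b, RS_mem_right G h ha⟩ := by
  induction h with
  | refl => rfl
  | @tail b c h1 h2 ih =>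
      exact ih.trans (SimpleGraph.Adj.reachable (by exact h2.1))

lemma conn_induce {D : Finset V} {v : V} (hv : v ∈ D)
    (hconn : ∀ x ∈ D, RS G D v x) : (G.induce (↑D : Set V)).Connected := by
  rw [SimpleGraph.connected_iff]
  refine ⟨?_, ⟨⟨v, by simpa using hv⟩⟩⟩
  rintro ⟨x, hx⟩ ⟨y, hy⟩
  have hx' : x ∈ D := by simpa using hx
  have hy' : y ∈ D := by simpa using hy
  exact ((reach_induce G (RS_symm G (hconn x hx')) hx')).trans (reach_induce G (hconn y hy') hv)


def indepP (I : Finset V) : Prop := ∀ x ∈ I, ∀ y ∈ I, ¬ G.Adj x y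

open scoped Classical in
noncomputable def alpha (S : Finset V) : ℕ :=
  (S.powerset.filter (indepP G)).sup Finset.card

open scoped Classical in
lemma le_alpha {S I : Finset V} (hIS : I ⊆ S) (hI : indepP G I) : I.card ≤ alpha G S := by
  classical
  refine Finset.le_sup (f := Finset.card) ?_
  simp only [Finset.mem_filter, Finset.mem_powerset]
  exact ⟨hIS, by convert hI⟩

lemma exists_indep (S : Finset V) : ∃ I, I ⊆ S ∧ indepP G I ∧ I.card = alpha G S := by
  classical
  have hne : (S.powerset.filter (indepP G)).Nonempty := by
    refine ⟨∅, ?_⟩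
    simp [indepP]
  obtain ⟨I, hI, hcard⟩ := Finset.exists_mem_eq_sup _ hne Finset.card
  simp only [Finset.mem_filter, Finset.mem_powerset] at hI
  exact ⟨I, hI.1, hI.2, by rw [← hcard]; rfl⟩

lemma alpha_mono {S T : Finset V} (h : T ⊆ S) : alpha G T ≤ alpha G S := by
  obtain ⟨I, hIT, hI, hc⟩ := exists_indep G T
  rw [← hc]; exact le_alpha G (hIT.trans h) hI

lemma one_le_alpha {S : Finset V} (h : S.Nonempty) : 1 ≤ alpha G S := by
  obtain ⟨v, hv⟩ := h
  have := le_alpha G (I := {v}) (by simpa using hv) (by simp [indepP])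
  simpa using this

lemma alpha_add_le {S C : Finset V} (hCS : C ⊆ S)
    (hsep : ∀ x ∈ C, ∀ y ∈ S \ C, ¬ G.Adj x y) :
    alpha G C + alpha G (S \ C) ≤ alpha G S := by
  obtain ⟨I₁, hI₁s, hI₁, hc₁⟩ := exists_indep G C
  obtain ⟨I₂, hI₂s, hI₂, hc₂⟩ := exists_indep G (S \ C)
  classical
  have hdisj : Disjoint I₁ I₂ :=
    Finset.disjoint_left.mpr fun a ha ha2 => (Finset.mem_sdiff.mp (hI₂s ha2)).2 (hI₁s ha)
  have hunion : indepP G (I₁ ∪ I₂) := by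
    intro x hx y hy
    rcases Finset.mem_union.mp hx with hx | hx <;> rcases Finset.mem_union.mp hy with hy | hy
    · exact hI₁ x hx y hy
    · exact hsep x (hI₁s hx) y (hI₂s hy)
    · intro hadj; exact hsep y (hI₁s hy) x (hI₂s hx) hadj.symm
    · exact hI₂ x hx y hy
  have hsub : I₁ ∪ I₂ ⊆ S :=
    Finset.union_subset (hI₁s.trans hCS) (hI₂s.trans (Finset.sdiff_subset))
  have := le_alpha G hsub hunion
  rwa [Finset.card_union_of_disjoint hdisj, hc₁, hc₂] at this

lemma exists_dom (C : Finset V) (hCne : C.Nonempty)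
    (hCconn : ∀ x ∈ C, ∀ y ∈ C, RS G C x y) :
    ∃ D, D ⊆ C ∧ D.Nonempty ∧ (∀ x ∈ D, ∀ y ∈ D, RS G D x y) ∧
      (∀ u ∈ C, u ∉ D → ∃ d ∈ D, G.Adj u d) ∧ D.card + 1 ≤ 2 * alpha G C := by
  classical
  set F : Set (Finset V) := {D | D ⊆ C ∧ D.Nonempty ∧ (∀ x ∈ D, ∀ y ∈ D, RS G D x y) ∧
      ∃ I, I ⊆ D ∧ indepP G I ∧ D.card + 1 ≤ 2 * I.card} with hF
  obtain ⟨v, hv⟩ := hCne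
  have hFne : F.Nonempty := by
    refine ⟨{v}, by simpa using hv, ⟨v, by simp⟩, ?_, {v}, le_refl _, ?_, by simp⟩
    · intro x hx y hy
      simp only [Finset.mem_singleton] at hx hy
      subst hx; subst hy; exact Relation.ReflTransGen.refl
    · intro x hx y hy
      simp only [Finset.mem_singleton] at hx hy
      subst hx; subst hy; simp
  obtain ⟨D, hDF, hmax⟩ := Set.Finite.exists_maximalFor Finset.card F (Set.toFinite F) hFne
  obtain ⟨hDC, hDne, hDconn, I, hID, hIindep, hIcard⟩ := hDF
  refine ⟨D, hDC, hDne, hDconn, ?_, ?_⟩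
  swap
  · calc D.card + 1 ≤ 2 * I.card := hIcard
      _ ≤ 2 * alpha G C := by
          have := le_alpha G (hID.trans hDC) hIindep; omega
  -- domination
  by_contra hdom
  push_neg at hdom
  obtain ⟨u, huC, huD, hunb⟩ := hdom
  set ND : Set V := {y | y ∈ D ∨ ∃ d ∈ D, G.Adj d y} with hND
  have huND : u ∉ ND := by
    rintro (h | ⟨d, hd, hadj⟩)
    · exact huD h
    · exact hunb d hd hadj.symm
  obtain ⟨d₀, hd₀⟩ := hDne
  have hchain : RS G C d₀ u := hCconn d₀ (hDC hd₀) u huC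
  have pivot : ∃ y z, y ∈ C ∧ z ∈ C ∧ y ∈ ND ∧ z ∉ ND ∧ G.Adj y z := by
    have : ∀ a, RS G C a u → a ∈ ND →
        ∃ y z, y ∈ C ∧ z ∈ C ∧ y ∈ ND ∧ z ∉ ND ∧ G.Adj y z := by
      intro a hr
      induction hr using Relation.ReflTransGen.head_induction_on with
      | refl => intro ha; exact absurd ha huND
      | @head a c h' h ih =>
          intro ha
          by_cases hc : c ∈ ND
          · exact ih hc
          · exact ⟨a, c, h'.2.1, h'.2.2, ha, hc, h'.1⟩
    exact this d₀ hchain (Or.inl hd₀)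
  obtain ⟨y, z, hyC, hzC, hyND, hzND, hadj⟩ := pivot
  have hzD : z ∉ D := fun h => hzND (Or.inl h)
  have hzy : z ≠ y := fun h => hzND (h ▸ hyND)
  set D' : Finset V := insert z (insert y D) with hD'
  have hDD' : D ⊆ D' := (Finset.subset_insert _ _).trans (Finset.subset_insert _ _)
  have hyD' : y ∈ D' := by simp [hD']
  have hzD' : z ∈ D' := by simp [hD']
  -- hub connectivity towards y
  have hhub : ∀ x ∈ D', RS G D' y x := by
    intro x hx
    rcases Finset.mem_insert.mp hx with rfl | hx
    · exact Relation.ReflTransGen.single ⟨hadj, hyD', hzD'⟩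
    rcases Finset.mem_insert.mp hx with rfl | hx
    · exact Relation.ReflTransGen.refl
    · rcases hyND with hyD | ⟨d, hdD, hady⟩
      · exact RS_mono G hDD' (hDconn y hyD x hx)
      · exact Relation.ReflTransGen.head ⟨hady.symm, hyD', hDD' hdD⟩
          (RS_mono G hDD' (hDconn d hdD x hx))
  have hD'conn : ∀ a ∈ D', ∀ b ∈ D', RS G D' a b :=
    fun a ha b hb => (RS_symm G (hhub a ha)).trans (hhub b hb)
  have hcardD' : D'.card ≤ D.card + 2 := by
    calc D'.card ≤ (insert y D).card + 1 := Finset.card_insert_le _ _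
      _ ≤ D.card + 2 := by have := Finset.card_insert_le y D; omega
  have hzI : z ∉ I := fun h => hzD (hID h)
  have hIndep' : indepP G (insert z I) := by
    intro a ha b hb
    rcases Finset.mem_insert.mp ha with ha' | ha' <;>
      rcases Finset.mem_insert.mp hb with hb' | hb'
    · subst ha'; subst hb'; simp
    · subst ha'; exact fun h => hzND (Or.inr ⟨b, hID hb', h.symm⟩)
    · subst hb'; exact fun h => hzND (Or.inr ⟨a, hID ha', h⟩)
    · exact hIindep a ha' b hb'
  have hD'F : D' ∈ F := by
    refine ⟨?_, ⟨y, hyD'⟩, hD'conn, insert z I, ?_, hIndep', ?_⟩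
    · intro x hx
      rcases Finset.mem_insert.mp hx with rfl | hx
      · exact hzC
      rcases Finset.mem_insert.mp hx with rfl | hx
      · exact hyC
      · exact hDC hx
    · exact Finset.insert_subset hzD' (hID.trans hDD')
    · rw [Finset.card_insert_of_notMem hzI]; omega
  have hlt : D.card < D'.card := by
    refine Finset.card_lt_card ?_
    exact Finset.ssubset_iff_of_subset hDD' |>.mpr ⟨z, hzD', hzD⟩
  have := hmax hD'F (le_of_lt hlt)
  omega

lemma main_minor : ∀ n : ℕ, ∀ S : Finset V, S.card ≤ n → ∀ s : ℕ,
    2 * s * alpha G S < S.card →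
    ∃ X : Fin (s+1) → Finset V,
      (∀ i, X i ⊆ S) ∧ (∀ i, (X i).Nonempty) ∧
      (∀ i, ∀ x ∈ X i, ∀ y ∈ X i, RS G (X i) x y) ∧
      (∀ i j, i ≠ j → Disjoint (X i) (X j)) ∧
      (∀ i j, i ≠ j → ∃ u ∈ X i, ∃ w ∈ X j, G.Adj u w) := by
  intro n
  induction n using Nat.strong_induction_on with
  | _ n ih =>
  intro S hSn s hs
  have hSne : S.Nonempty := Finset.card_pos.mp (by omega)
  obtain ⟨v, hvS⟩ := hSne
  cases s with
  | zero =>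
      refine ⟨fun _ => {v}, fun _ => by simpa using hvS, fun _ => ⟨v, by simp⟩, ?_, ?_, ?_⟩
      · intro i x hx y hy
        simp only [Finset.mem_singleton] at hx hy
        subst hx; subst hy; exact Relation.ReflTransGen.refl
      · intro i j hij; exact absurd (by omega) hij
      · intro i j hij; exact absurd (by omega) hij
  | succ s' =>
  classical
  set C : Finset V := S.filter (fun x => RS G S v x) with hCdef
  have hCS : C ⊆ S := Finset.filter_subset _ _
  have hvC : v ∈ C := by
    rw [hCdef, Finset.mem_filter]; exact ⟨hvS, Relation.ReflTransGen.refl⟩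
  have hmemC : ∀ x, x ∈ C ↔ x ∈ S ∧ RS G S v x := by
    intro x; rw [hCdef, Finset.mem_filter]
  have hclosure : ∀ x ∈ C, ∀ y ∈ S, G.Adj x y → y ∈ C := by
    intro x hx y hy hadj
    rw [hmemC] at hx ⊢
    exact ⟨hy, hx.2.tail ⟨hadj, hx.1, hy⟩⟩
  have hsep : ∀ x ∈ C, ∀ y ∈ S \ C, ¬ G.Adj x y := by
    intro x hx y hy hadj
    exact (Finset.mem_sdiff.mp hy).2 (hclosure x hx y (Finset.mem_sdiff.mp hy).1 hadj)
  have hRStoC : ∀ b, RS G S v b → RS G C v b := by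
    intro b hb
    induction hb with
    | refl => exact Relation.ReflTransGen.refl
    | @tail b c h1 h2 ih2 =>
        have hbC : b ∈ C := RS_mem_right G ih2 hvC
        have hcC : c ∈ C := hclosure b hbC c h2.2.2 h2.1
        exact ih2.tail ⟨h2.1, hbC, hcC⟩
  have hCconn : ∀ x ∈ C, ∀ y ∈ C, RS G C x y := by
    intro x hx y hy
    exact (RS_symm G (hRStoC x ((hmemC x).mp hx).2)).trans (hRStoC y ((hmemC y).mp hy).2)
  by_cases hgood : 2 * (s' + 1) * alpha G C < C.card
  · -- good component: use dominating set
    obtain ⟨D, hDC, hDne, hDconn, hdom, hDcard⟩ := exists_dom G C ⟨v, hvC⟩ hCconn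
    set T : Finset V := C \ D with hTdef
    have hTC : T ⊆ C := Finset.sdiff_subset
    have hTcard : T.card + D.card = C.card := Finset.card_sdiff_add_card_eq_card hDC
    have halphaT : alpha G T ≤ alpha G C := alpha_mono G hTC
    have harith : 2 * s' * alpha G T < T.card := by
      have h1 : 2 * s' * alpha G T ≤ 2 * s' * alpha G C :=
        Nat.mul_le_mul_left _ halphaT
      have h2 : 2 * (s' + 1) * alpha G C = 2 * s' * alpha G C + 2 * alpha G C := by ring
      omega
    obtain ⟨d₀, hd₀⟩ := hDne
    have hTn : T.card < n := by
      have : T ⊂ S := by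
        refine Finset.ssubset_iff_of_subset (hTC.trans hCS) |>.mpr ⟨d₀, hCS (hDC hd₀), ?_⟩
        rw [hTdef]; simp [hd₀]
      have := Finset.card_lt_card this
      omega
    obtain ⟨X', hX'S, hX'ne, hX'conn, hX'disj, hX'adj⟩ :=
      ih T.card hTn T le_rfl s' harith
    refine ⟨Fin.cons D X', ?_, ?_, ?_, ?_, ?_⟩
    · intro i
      refine Fin.cases ?_ ?_ i
      · simpa using hDC.trans hCS
      · intro j; simpa using (hX'S j).trans (hTC.trans hCS)
    · intro i
      refine Fin.cases ?_ ?_ i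
      · simpa using ⟨d₀, hd₀⟩
      · intro j; simpa using hX'ne j
    · intro i
      refine Fin.cases ?_ ?_ i
      · simpa using hDconn
      · intro j; simpa using hX'conn j
    · have hdisjDT : ∀ j, Disjoint D (X' j) := by
        intro j
        refine Finset.disjoint_left.mpr fun a haD haX => ?_
        have := hX'S j haX
        rw [hTdef, Finset.mem_sdiff] at this
        exact this.2 haD
      intro i j
      induction i using Fin.cases with
      | zero =>
          induction j using Fin.cases with
          | zero => intro hij; exact absurd rfl hij
          | succ j' =>
              intro _
              simpa using hdisjDT j'
      | succ i' =>
          induction j using Fin.cases with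
          | zero =>
              intro _
              simpa using (hdisjDT i').symm
          | succ j' =>
              intro hij
              simpa using hX'disj i' j' (fun e => hij (congrArg Fin.succ e))
    · have hadjDT : ∀ j : Fin (s' + 1), ∃ x ∈ X' j, ∃ d ∈ D, G.Adj x d := by
        intro j
        obtain ⟨x, hx⟩ := hX'ne j
        have hxT := hX'S j hx
        rw [hTdef, Finset.mem_sdiff] at hxT
        obtain ⟨d, hd, hadj⟩ := hdom x hxT.1 hxT.2
        exact ⟨x, hx, d, hd, hadj⟩
      intro i j
      induction i using Fin.cases with
      | zero =>
          induction j using Fin.cases with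
          | zero => intro hij; exact absurd rfl hij
          | succ j' =>
              intro _
              obtain ⟨x, hx, d, hd, hadj⟩ := hadjDT j'
              simp only [Fin.cons_zero, Fin.cons_succ]
              exact ⟨d, hd, x, hx, hadj.symm⟩
      | succ i' =>
          induction j using Fin.cases with
          | zero =>
              intro _
              obtain ⟨x, hx, d, hd, hadj⟩ := hadjDT i'
              simp only [Fin.cons_zero, Fin.cons_succ]
              exact ⟨x, hx, d, hd, hadj⟩
          | succ j' =>
              intro hij
              simpa using hX'adj i' j' (fun e => hij (congrArg Fin.succ e))
  · -- bad component: recurse on S \ C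
    have hScard : (S \ C).card + C.card = S.card := Finset.card_sdiff_add_card_eq_card hCS
    have hadd := alpha_add_le G hCS hsep
    push_neg at hgood
    have harith : 2 * (s' + 1) * alpha G (S \ C) < (S \ C).card := by
      have h1 := Nat.mul_le_mul_left (2 * (s' + 1)) hadd
      have h2 : 2 * (s' + 1) * (alpha G C + alpha G (S \ C)) =
          2 * (s' + 1) * alpha G C + 2 * (s' + 1) * alpha G (S \ C) := by ring
      omega
    have hn : (S \ C).card < n := by
      have : S \ C ⊂ S := by
        refine Finset.ssubset_iff_of_subset Finset.sdiff_subset |>.mpr ⟨v, hvS, ?_⟩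
        simp [hvC]
      have := Finset.card_lt_card this
      omega
    obtain ⟨X', h1, h2, h3, h4, h5⟩ := ih (S \ C).card hn (S \ C) le_rfl (s' + 1) harith
    exact ⟨X', fun i => (h1 i).trans Finset.sdiff_subset, h2, h3, h4, h5⟩

end Aux

/-- Every graph `G` with no `K_t` minor has an independent set of size at least
`v(G)/(2(t-1))`. -/
theorem independent_set_of_Kt_minor_free (t : ℕ)
    (V : Type) [Fintype V] (G : SimpleGraph V)
    (h : ¬ G.HasMinor (⊤ : SimpleGraph (Fin t))) :
    ∃ I : Set V, I.Pairwise (fun u v => ¬ G.Adj u v) ∧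
      (Fintype.card V : ℝ) / (2 * ((t : ℝ) - 1)) ≤ (I.ncard : ℝ) := by
  classical
  letI : DecidableEq V := Classical.decEq V
  cases t with
  | zero =>
      exact absurd ⟨Fin.elim0, fun w => w.elim0, fun w => w.elim0,
        fun w₁ _ _ => w₁.elim0⟩ h
  | succ s =>
  have hkey : ¬ (2 * s * alpha G (Finset.univ : Finset V) < (Finset.univ : Finset V).card) := by
    intro hlt
    obtain ⟨X, hXS, hXne, hXconn, hXdisj, hXadj⟩ :=
      main_minor G (Finset.univ : Finset V).card (Finset.univ : Finset V) le_rfl s hlt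
    apply h
    refine ⟨fun i => ↑(X i), ?_, ?_, ?_⟩
    · intro i
      obtain ⟨xv, hxv⟩ := hXne i
      exact conn_induce G hxv (fun x hx => hXconn i xv hxv x hx)
    · intro i j hij
      exact Finset.disjoint_coe.mpr (hXdisj i j hij)
    · intro w₁ w₂ hadj
      obtain ⟨u, hu, w, hw, hadjG⟩ := hXadj w₁ w₂ (by simpa using hadj)
      exact ⟨u, Finset.mem_coe.mpr hu, w, Finset.mem_coe.mpr hw, hadjG⟩
  push_neg at hkey
  obtain ⟨I, _, hIind, hIcard⟩ := exists_indep G Finset.univ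
  have hN : Fintype.card V ≤ 2 * s * I.card := by
    rw [hIcard]; simpa [Finset.card_univ] using hkey
  refine ⟨↑I, ?_, ?_⟩
  · intro x hx y hy _
    exact hIind x (Finset.mem_coe.mp hx) y (Finset.mem_coe.mp hy)
  · rw [Set.ncard_coe_finset]
    rcases Nat.eq_zero_or_pos s with rfl | hspos
    · have : Fintype.card V = 0 := by omega
      rw [this]
      norm_num
    · have hpos : (0:ℝ) < 2 * ((↑(s+1):ℝ) - 1) := by
        push_cast
        have : (1:ℝ) ≤ (s:ℝ) := by exact_mod_cast hspos
        linarith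
      rw [div_le_iff₀ hpos]
      have hcast : (Fintype.card V : ℝ) ≤ 2 * (s:ℝ) * (I.card:ℝ) := by exact_mod_cast hN
      push_cast
      nlinarith [hcast]
end

section
/- There exists a constant C > 0 such that for all integers m ≥ 2 and r ≥ 1, the list chromatic number of the complete r-partite graph K_{m∗r} with m vertices in every part satisfies χ_ℓ(K_{m∗r}) ≤ C·r·log m. -/
open Real

/-- The complete `r`-partite graph with `m` vertices in each part: vertices are pairs in
`Fin r × Fin m`, and two vertices are adjacent iff they lie in different parts. -/
def completeMultipartite (r m : ℕ) : SimpleGraph (Fin r × Fin m) :=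
  SimpleGraph.comap Prod.fst ⊤

/- ### Auxiliary counting lemmas -/

open Finset in
lemma aux_card_pi {α β : Type*} [Fintype α] [DecidableEq α] [Fintype β] [DecidableEq β]
    (B : α → Finset β) :
    (Finset.univ.filter fun f : α → β => ∀ a, f a ∈ B a).card = ∏ a, (B a).card := by
  rw [← Fintype.card_piFinset]
  congr 1
  ext f
  simp [Fintype.mem_piFinset]

open Finset in
lemma aux_prod_card {α β : Type*} [Fintype α] [DecidableEq α] (S : Finset α)
    (B : α → Finset β) (c d : ℕ) (hc : ∀ a ∈ S, (B a).card = c)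
    (hd : ∀ a ∉ S, (B a).card = d) :
    ∏ a, (B a).card = c ^ S.card * d ^ (Fintype.card α - S.card) := by
  rw [← Finset.prod_mul_prod_compl S]
  have h1 : ∏ a ∈ S, (B a).card = c ^ S.card := by
    rw [Finset.prod_congr rfl hc, Finset.prod_const]
  have h2 : ∏ a ∈ Sᶜ, (B a).card = d ^ (Fintype.card α - S.card) := by
    rw [Finset.prod_congr rfl (fun a ha => hd a (Finset.mem_compl.mp ha)), Finset.prod_const,
      Finset.card_compl]
  rw [h1, h2]

lemma aux_card_snd {r : ℕ} (b : Bool) :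
    ((Finset.univ : Finset (Fin r × Bool)).filter fun x => x.2 = b).card = r := by
  rw [Finset.card_filter, Fintype.sum_prod_type]
  simp [Finset.card_filter]

lemma aux_markov {Ω V : Type*} [Fintype Ω] [Fintype V] [DecidableEq Ω]
    (P : V → Ω → Prop) [∀ v f, Decidable (P v f)] (t : ℕ) :
    (t + 1) * (Finset.univ.filter fun f : Ω =>
        t < (Finset.univ.filter fun v => P v f).card).card
      ≤ ∑ v : V, (Finset.univ.filter (P v ·)).card := by
  classical
  have h1 : ∑ v : V, (Finset.univ.filter (P v ·)).card
      = ∑ f : Ω, (Finset.univ.filter fun v => P v f).card := by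
    simp only [Finset.card_filter]
    rw [Finset.sum_comm]
  rw [h1]
  calc (t + 1) * (Finset.univ.filter fun f : Ω =>
        t < (Finset.univ.filter fun v => P v f).card).card
      = ∑ _f ∈ (Finset.univ.filter fun f : Ω =>
        t < (Finset.univ.filter fun v => P v f).card), (t+1) := by
        rw [Finset.sum_const, smul_eq_mul, mul_comm]
    _ ≤ ∑ f ∈ (Finset.univ.filter fun f : Ω =>
        t < (Finset.univ.filter fun v => P v f).card),
          (Finset.univ.filter fun v => P v f).card := by
        apply Finset.sum_le_sum
        intro f hf
        exact (Finset.mem_filter.mp hf).2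
    _ ≤ ∑ f : Ω, (Finset.univ.filter fun v => P v f).card :=
        Finset.sum_le_sum_of_subset (Finset.filter_subset _ _)

lemma aux_sum_choose (k t : ℕ) (h : 3 * t ≤ k) :
    ∑ j ∈ Finset.range t, k.choose j ≤ k.choose t := by
  induction t with
  | zero => simp
  | succ s ih =>
    have hs : 3 * s ≤ k := by omega
    have h2 : 2 * k.choose s ≤ k.choose (s+1) := by
      have hid := Nat.choose_succ_right_eq k s
      have hks : 2 * (s + 1) ≤ k - s := by omega
      have hge : k.choose (s+1) * (s+1) ≥ (2 * k.choose s) * (s+1) := by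
        rw [hid]
        calc (2 * k.choose s) * (s+1) = k.choose s * (2 * (s+1)) := by ring
          _ ≤ k.choose s * (k - s) := Nat.mul_le_mul_left _ hks
      exact Nat.le_of_mul_le_mul_right hge (Nat.succ_pos s)
    rw [Finset.sum_range_succ]
    calc ∑ j ∈ Finset.range s, k.choose j + k.choose s ≤ 2 * k.choose s := by
          have := ih hs; omega
      _ ≤ k.choose (s+1) := h2

/- ### Auxiliary analytic lemmas -/

lemma aux_pow_self_le (t : ℕ) : (t:ℝ)^t ≤ t.factorial * Real.exp t := by
  induction t with
  | zero => simp
  | succ s ih =>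
    have h1 : ((s:ℝ)+1)^s ≤ (s:ℝ)^s * Real.exp 1 := by
      rcases Nat.eq_zero_or_pos s with hs | hs
      · subst hs
        simpa using (Real.add_one_le_exp (1:ℝ)).trans (le_of_eq rfl)
      · have hsp : (0:ℝ) < s := by exact_mod_cast hs
        have h2 : (s:ℝ) + 1 ≤ (s:ℝ) * Real.exp (1/(s:ℝ)) := by
          calc (s:ℝ) + 1 = (s:ℝ) * (1/(s:ℝ) + 1) := by field_simp; ring
            _ ≤ (s:ℝ) * Real.exp (1/(s:ℝ)) := by
                exact mul_le_mul_of_nonneg_left (Real.add_one_le_exp _) (le_of_lt hsp)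
        calc ((s:ℝ)+1)^s ≤ ((s:ℝ) * Real.exp (1/(s:ℝ)))^s := by
              apply pow_le_pow_left₀ (by positivity) h2
          _ = (s:ℝ)^s * (Real.exp (1/(s:ℝ)))^s := mul_pow _ _ _
          _ = (s:ℝ)^s * Real.exp ((s:ℝ) * (1/(s:ℝ))) := by
              rw [← Real.exp_nat_mul]
          _ = (s:ℝ)^s * Real.exp 1 := by
              rw [mul_one_div, div_self (ne_of_gt hsp)]
    calc ((s+1:ℕ):ℝ)^(s+1) = ((s:ℝ)+1) * ((s:ℝ)+1)^s := by
          push_cast; rw [pow_succ]; ring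
      _ ≤ ((s:ℝ)+1) * ((s:ℝ)^s * Real.exp 1) := by
          exact mul_le_mul_of_nonneg_left h1 (by positivity)
      _ ≤ ((s:ℝ)+1) * ((s.factorial * Real.exp s) * Real.exp 1) := by
          apply mul_le_mul_of_nonneg_left _ (by positivity)
          exact mul_le_mul_of_nonneg_right ih (by positivity)
      _ = ((s+1).factorial : ℝ) * Real.exp ((s:ℝ)+1) := by
          rw [Nat.factorial_succ, Real.exp_add]
          push_cast
          ring
      _ = ((s+1).factorial : ℝ) * Real.exp ((s+1:ℕ):ℝ) := by push_cast; ring_nf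

lemma aux_exp_ge (m r Lt : ℕ) (hm : 2 ≤ m) (hr : 1 ≤ r) (hLm : Real.log m ≤ Lt) :
    4 * (m:ℝ) * r ≤ Real.exp (7 * (r * Lt : ℕ)) := by
  have hL1 : 1 ≤ Lt := by
    by_contra h
    push_neg at h
    interval_cases Lt
    have : (0:ℝ) < Real.log m := Real.log_pos (by exact_mod_cast hm)
    simp at hLm; linarith
  have hm0 : (0:ℝ) < m := by positivity
  have hmexp : (m:ℝ) ≤ Real.exp Lt := by
    calc (m:ℝ) = Real.exp (Real.log m) := (Real.exp_log hm0).symm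
      _ ≤ Real.exp Lt := Real.exp_le_exp.mpr hLm
  have h7 : 2 * Lt + 5 * r ≤ 7 * (r * Lt) := by nlinarith
  calc 4 * (m:ℝ) * r = (2*m) * (2*r) := by ring
    _ ≤ ((m:ℝ)*m) * (5*r+1) := by
        have h1 : 2*(m:ℝ) ≤ (m:ℝ)*m := by nlinarith [show (2:ℝ) ≤ m from by exact_mod_cast hm]
        have h2 : 2*(r:ℝ) ≤ 5*(r:ℝ)+1 := by
          have : (1:ℝ) ≤ r := by exact_mod_cast hr
          linarith
        apply mul_le_mul h1 h2 (by positivity) (by positivity)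
    _ ≤ (Real.exp Lt * Real.exp Lt) * Real.exp (5*r) := by
        apply mul_le_mul (mul_le_mul hmexp hmexp (by positivity) (by positivity))
        · have := Real.add_one_le_exp (5*(r:ℝ)); linarith
        · positivity
        · positivity
    _ = Real.exp (2 * Lt + 5 * r) := by
        rw [← Real.exp_add, ← Real.exp_add]; ring_nf
    _ ≤ Real.exp (7 * (r * Lt : ℕ)) := by
        apply Real.exp_le_exp.mpr
        exact_mod_cast (by exact_mod_cast Nat.cast_le.mpr h7 : ((2*Lt+5*r:ℕ):ℝ) ≤ ((7*(r*Lt):ℕ):ℝ))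

lemma aux_R1 (m r Lt : ℕ) (hm : 2 ≤ m) (hr : 1 ≤ r) (hL1 : 1 ≤ Lt) (hLm : Real.log m ≤ Lt) :
    2 * ((m:ℝ) * r) * (2*(r:ℝ)-1)^(16*r*Lt) ≤ ((r*Lt : ℕ)+1) * (2*(r:ℝ))^(16*r*Lt) := by
  have hr1 : (1:ℝ) ≤ r := by exact_mod_cast hr
  have h2r : (0:ℝ) < 2*r := by linarith
  set k := 16*r*Lt with hk
  have hq0 : (0:ℝ) ≤ 2*(r:ℝ)-1 := by linarith
  have hqlt : (2*(r:ℝ)-1) ≤ (2*r) * Real.exp (-(1/(2*r))) := by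
    have := Real.add_one_le_exp (-(1/(2*(r:ℝ))))
    have h := mul_le_mul_of_nonneg_left this (le_of_lt h2r)
    calc (2*(r:ℝ)-1) = (2*r) * (-(1/(2*(r:ℝ))) + 1) := by field_simp; ring
      _ ≤ (2*r) * Real.exp (-(1/(2*r))) := h
  have hpow : (2*(r:ℝ)-1)^k ≤ (2*(r:ℝ))^k * Real.exp (-(k/(2*r))) := by
    calc (2*(r:ℝ)-1)^k ≤ ((2*(r:ℝ)) * Real.exp (-(1/(2*r))))^k :=
          pow_le_pow_left₀ hq0 hqlt k
      _ = (2*(r:ℝ))^k * (Real.exp (-(1/(2*r))))^k := mul_pow _ _ _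
      _ = (2*(r:ℝ))^k * Real.exp (-(k/(2*r))) := by
          rw [← Real.exp_nat_mul]
          congr 1
          field_simp
  have hexpk : Real.exp (-(k/(2*(r:ℝ)))) = Real.exp (-(8*Lt)) := by
    congr 1
    rw [hk]
    push_cast
    field_simp
    ring
  have hmexp : (m:ℝ) ≤ Real.exp Lt := by
    calc (m:ℝ) = Real.exp (Real.log m) := (Real.exp_log (by positivity)).symm
      _ ≤ Real.exp Lt := Real.exp_le_exp.mpr hLm
  have key : 2 * ((m:ℝ) * r) * Real.exp (-(8*Lt)) ≤ (r*Lt : ℕ)+1 := by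
    have h1 : 2 * ((m:ℝ) * r) * Real.exp (-(8*Lt))
        ≤ 2 * (Real.exp Lt * r) * Real.exp (-(8*Lt)) := by
      apply mul_le_mul_of_nonneg_right _ (le_of_lt (Real.exp_pos _))
      have := mul_le_mul_of_nonneg_right hmexp (by linarith : (0:ℝ) ≤ r)
      linarith
    have h2 : 2 * (Real.exp Lt * (r:ℝ)) * Real.exp (-(8*Lt)) = 2 * r * Real.exp (-(7*Lt)) := by
      rw [show 2 * (Real.exp (Lt:ℝ) * (r:ℝ)) * Real.exp (-(8*Lt))
        = 2*r*(Real.exp Lt * Real.exp (-(8*Lt))) from by ring]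
      rw [← Real.exp_add]
      congr 2
      ring
    have h3 : Real.exp (-(7*(Lt:ℝ))) ≤ 1/2 := by
      rw [Real.exp_neg]
      rw [one_div, inv_le_inv₀ (Real.exp_pos _) (by norm_num)]
      have h7 : (1:ℝ) ≤ 7*Lt := by
        have : (1:ℝ) ≤ Lt := by exact_mod_cast hL1
        linarith
      calc (2:ℝ) ≤ Real.exp 1 := by
            have := Real.add_one_le_exp (1:ℝ); linarith
        _ ≤ Real.exp (7*Lt) := Real.exp_le_exp.mpr h7
    have h4 : 2 * (r:ℝ) * Real.exp (-(7*Lt)) ≤ r := by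
      have : 2 * (r:ℝ) * Real.exp (-(7*Lt)) ≤ 2 * r * (1/2) := by
        apply mul_le_mul_of_nonneg_left h3 (by linarith)
      linarith
    have h5 : (r:ℝ) ≤ (r*Lt:ℕ) + 1 := by
      push_cast
      have : (1:ℝ) ≤ Lt := by exact_mod_cast hL1
      nlinarith
    linarith [h1, h2 ▸ h1]
  calc 2 * ((m:ℝ) * r) * (2*(r:ℝ)-1)^k
      ≤ 2 * ((m:ℝ) * r) * ((2*(r:ℝ))^k * Real.exp (-(8*Lt))) := by
        apply mul_le_mul_of_nonneg_left _ (by positivity)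
        rw [← hexpk]
        exact hpow
    _ = (2 * ((m:ℝ) * r) * Real.exp (-(8*Lt))) * (2*(r:ℝ))^k := by ring
    _ ≤ ((r*Lt : ℕ)+1) * (2*(r:ℝ))^k := by
        apply mul_le_mul_of_nonneg_right key (by positivity)

lemma aux_R2 (m r Lt : ℕ) (hm : 2 ≤ m) (hr : 1 ≤ r) (hL1 : 1 ≤ Lt) (hLm : Real.log m ≤ Lt) :
    4 * ((m:ℝ) * r) * ((16*r*Lt).choose (r*Lt)) ≤ 2^(16*r*Lt) := by
  set t := r*Lt with ht
  have ht1 : 1 ≤ t := Nat.one_le_iff_ne_zero.mpr (by positivity)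
  have htR : (1:ℝ) ≤ t := by exact_mod_cast ht1
  have hchoose : ((16*r*Lt).choose t : ℝ) ≤ 16^t * Real.exp t := by
    have h1 : ((16*r*Lt).choose t : ℝ) ≤ ((16*r*Lt:ℕ):ℝ)^t / (t.factorial) :=
      Nat.choose_le_pow_div t (16*r*Lt)
    have h2 : ((16*r*Lt:ℕ):ℝ) = 16 * t := by push_cast [ht]; ring
    have h3 : (t:ℝ)^t ≤ t.factorial * Real.exp t := aux_pow_self_le t
    have hfpos : (0:ℝ) < t.factorial := by positivity
    rw [h2] at h1
    calc ((16*r*Lt).choose t : ℝ) ≤ (16*(t:ℝ))^t / t.factorial := h1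
      _ = 16^t * ((t:ℝ)^t / t.factorial) := by rw [mul_pow]; ring
      _ ≤ 16^t * Real.exp t := by
          apply mul_le_mul_of_nonneg_left _ (by positivity)
          rw [div_le_iff₀ hfpos]
          calc (t:ℝ)^t ≤ t.factorial * Real.exp t := h3
            _ = Real.exp t * t.factorial := by ring
  have hexp8 : Real.exp 1 ^ 8 ≤ 4096 := by
    have h := Real.exp_one_lt_d9
    calc Real.exp 1 ^ 8 ≤ 2.7182818286 ^ 8 := by
          apply pow_le_pow_left₀ (le_of_lt (Real.exp_pos 1)) (le_of_lt h)
      _ ≤ 4096 := by norm_num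
  have hmain : 4 * ((m:ℝ) * r) * (16^t * Real.exp t) ≤ 2^(16*r*Lt) := by
    have hk16 : (2:ℝ)^(16*r*Lt) = (2^16)^t := by
      rw [← pow_mul]
      congr 1
      rw [ht]; ring
    rw [hk16]
    have hsplit : ((2:ℝ)^16)^t = 16^t * (4096:ℝ)^t := by
      rw [← mul_pow]; norm_num
    rw [hsplit]
    have hexp7 : 4 * ((m:ℝ) * r) * Real.exp t ≤ Real.exp (8*t) := by
      have hge := aux_exp_ge m r Lt hm hr hLm
      rw [← ht] at hge
      calc 4 * ((m:ℝ) * r) * Real.exp t ≤ Real.exp (7*(t:ℕ)) * Real.exp t := by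
            apply mul_le_mul_of_nonneg_right _ (le_of_lt (Real.exp_pos _))
            calc 4 * ((m:ℝ) * r) = 4 * (m:ℝ) * r := by ring
              _ ≤ Real.exp (7*(t:ℕ)) := hge
        _ = Real.exp (7*(t:ℝ) + t) := by rw [← Real.exp_add]
        _ = Real.exp (8*t) := by ring_nf
    have he8t : Real.exp (8*(t:ℝ)) ≤ (4096:ℝ)^t := by
      calc Real.exp (8*(t:ℝ)) = (Real.exp 1 ^ 8)^t := by
            rw [← pow_mul, ← Real.exp_nat_mul]
            push_cast
            ring_nf
        _ ≤ 4096^t := pow_le_pow_left₀ (by positivity) hexp8 t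
    calc 4 * ((m:ℝ) * r) * (16^t * Real.exp t)
        = 16^t * (4 * ((m:ℝ) * r) * Real.exp t) := by ring
      _ ≤ 16^t * Real.exp (8*t) := by
          apply mul_le_mul_of_nonneg_left hexp7 (by positivity)
      _ ≤ 16^t * 4096^t := by
          apply mul_le_mul_of_nonneg_left he8t (by positivity)
  calc 4 * ((m:ℝ) * r) * ((16*r*Lt).choose t : ℝ)
      ≤ 4 * ((m:ℝ) * r) * (16^t * Real.exp t) := by
        apply mul_le_mul_of_nonneg_left hchoose (by positivity)
    _ ≤ 2^(16*r*Lt) := hmain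

/- ### The core list-colorability result -/

set_option maxHeartbeats 2000000 in
open Finset in
theorem aux_core (m r : ℕ) (hm : 2 ≤ m) (hr : 1 ≤ r) :
    (completeMultipartite r m).ListColorable (16 * r * (⌈Real.log m⌉₊ + 1)) := by
  classical
  set Lt : ℕ := ⌈Real.log m⌉₊ + 1 with hLt
  have hL1 : 1 ≤ Lt := by omega
  have hLm : Real.log m ≤ Lt := by
    rw [hLt]
    push_cast
    have := Nat.le_ceil (Real.log m)
    linarith
  set t : ℕ := r * Lt with ht
  set k : ℕ := 16 * r * Lt with hk
  have h3t : 3 * t ≤ k := by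
    rw [ht, hk, Nat.mul_assoc]
    exact Nat.mul_le_mul_right _ (by norm_num)
  intro L0 hL0
  choose L1 hL1sub hL1card using fun v => Finset.exists_subset_card_eq (hL0 v)
  set A : Finset ℕ := Finset.univ.biUnion L1 with hA
  have hL1A : ∀ v, L1 v ⊆ A := fun v => Finset.subset_biUnion_of_mem L1 (Finset.mem_univ v)
  set n : ℕ := A.card with hn
  let S : Fin r × Fin m → Finset {x // x ∈ A} :=
    fun v => Finset.univ.filter (fun a : {x // x ∈ A} => (a : ℕ) ∈ L1 v)
  have hSmem : ∀ v (a : {x // x ∈ A}), a ∈ S v ↔ (a : ℕ) ∈ L1 v := by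
    intro v a
    simp [S]
  have hScard : ∀ v, (S v).card = k := by
    intro v
    rw [← hL1card v]
    apply Finset.card_bij (fun (a : {x // x ∈ A}) _ => (a : ℕ))
    · intro a ha
      exact (Finset.mem_filter.mp ha).2
    · intro a _ b _ hab
      exact Subtype.ext hab
    · intro c hc
      exact ⟨⟨c, hL1A v hc⟩, Finset.mem_filter.mpr ⟨Finset.mem_univ _, hc⟩, rfl⟩
  have hkn : k ≤ n := by
    rw [← hScard ⟨⟨0, hr⟩, ⟨0, by omega⟩⟩, hn, ← Fintype.card_coe A]
    exact (Finset.card_le_card (Finset.subset_univ _)).trans (Finset.card_univ).le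
  let Good : ({x // x ∈ A} → Fin r × Bool) → Fin r × Fin m → Prop :=
    fun f v => ∃ a ∈ S v, f a = (v.1, false)
  let Few : ({x // x ∈ A} → Fin r × Bool) → Fin r × Fin m → Prop :=
    fun f v => ((S v).filter fun a => (f a).2 = true).card < t
  -- count of bad events per vertex
  have hbadv : ∀ v, (Finset.univ.filter fun f : {x // x ∈ A} → Fin r × Bool =>
      ¬ Good f v).card = (2*r-1)^k * (2*r)^(n-k) := by
    intro v
    have hiff : ∀ f : {x // x ∈ A} → Fin r × Bool, (¬ Good f v) ↔
        (∀ a, f a ∈ (if a ∈ S v then ({(v.1, false)}ᶜ : Finset (Fin r × Bool))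
          else Finset.univ)) := by
      intro f
      simp only [Good, not_exists]
      constructor
      · intro h a
        by_cases ha : a ∈ S v
        · simp only [ha, if_true, Finset.mem_compl, Finset.mem_singleton]
          exact fun hEq => (h a) ⟨ha, hEq⟩
        · simp [ha]
      · intro h a ⟨ha, hEq⟩
        have := h a
        simp only [ha, if_true, Finset.mem_compl, Finset.mem_singleton] at this
        exact this hEq
    rw [Finset.filter_congr (fun f _ => hiff f)]
    rw [aux_card_pi]
    rw [aux_prod_card (S v) _ (2*r-1) (2*r)
      (fun a ha => by simp only [ha, if_true]; rw [Finset.card_compl]; simp [Nat.mul_comm])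
      (fun a ha => by simp only [ha, if_false]; rw [Finset.card_univ]; simp [Nat.mul_comm])]
    rw [hScard, Fintype.card_coe, ← hn]
  -- count of few-backup events per vertex
  have hfewv : ∀ v, (Finset.univ.filter fun f : {x // x ∈ A} → Fin r × Bool =>
      Few f v).card ≤ k.choose t * (r^k * (2*r)^(n-k)) := by
    intro v
    set Sv := S v with hSv
    set P : Finset (Finset {x // x ∈ A}) := Sv.powerset.filter (fun W => W.card < t) with hP
    have hsplit : (Finset.univ.filter fun f : {x // x ∈ A} → Fin r × Bool => Few f v)
        = P.biUnion (fun W => Finset.univ.filter fun f : {x // x ∈ A} → Fin r × Bool =>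
            (Sv.filter fun a => (f a).2 = true) = W) := by
      ext f
      simp only [Finset.mem_filter, Finset.mem_biUnion, Finset.mem_univ, true_and, hP,
        Finset.mem_powerset, Few]
      constructor
      · intro hcard
        exact ⟨Sv.filter fun a => (f a).2 = true, ⟨Finset.filter_subset _ _, hcard⟩, rfl⟩
      · rintro ⟨W, ⟨_, hWc⟩, hW⟩
        rw [hW]; exact hWc
    rw [hsplit]
    have hdisj : ∀ W₁ ∈ P, ∀ W₂ ∈ P, W₁ ≠ W₂ →
        Disjoint (Finset.univ.filter fun f : {x // x ∈ A} → Fin r × Bool =>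
            (Sv.filter fun a => (f a).2 = true) = W₁)
          (Finset.univ.filter fun f : {x // x ∈ A} → Fin r × Bool =>
            (Sv.filter fun a => (f a).2 = true) = W₂) := by
      intro W₁ _ W₂ _ hne
      apply Finset.disjoint_left.mpr
      intro f h1 h2
      rw [Finset.mem_filter] at h1 h2
      exact hne (h1.2.symm.trans h2.2)
    rw [Finset.card_biUnion hdisj]
    have hfiber : ∀ W ∈ P, (Finset.univ.filter fun f : {x // x ∈ A} → Fin r × Bool =>
        (Sv.filter fun a => (f a).2 = true) = W).card = r^k * (2*r)^(n-k) := by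
      intro W hW
      obtain ⟨hWsub, _⟩ := Finset.mem_filter.mp hW
      rw [Finset.mem_powerset] at hWsub
      have hiff : ∀ f : {x // x ∈ A} → Fin r × Bool,
          ((Sv.filter fun a => (f a).2 = true) = W) ↔
          (∀ a, f a ∈ (if a ∈ Sv then
              (if a ∈ W then (Finset.univ.filter fun x : Fin r × Bool => x.2 = true)
                else (Finset.univ.filter fun x : Fin r × Bool => x.2 = false))
              else Finset.univ)) := by
        intro f
        constructor
        · intro hEq a
          by_cases ha : a ∈ Sv
          · by_cases haW : a ∈ W
            · simp only [ha, haW, if_true, Finset.mem_filter, Finset.mem_univ, true_and]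
              rw [← hEq] at haW
              exact (Finset.mem_filter.mp haW).2
            · simp only [ha, haW, if_true, if_false, Finset.mem_filter, Finset.mem_univ,
                true_and]
              rw [← hEq] at haW
              simp only [Finset.mem_filter, ha, true_and] at haW
              simpa using haW
          · simp [ha]
        · intro h
          ext a
          simp only [Finset.mem_filter]
          constructor
          · rintro ⟨ha, hflag⟩
            have := h a
            by_cases haW : a ∈ W
            · exact haW
            · simp only [ha, haW, if_true, if_false, Finset.mem_filter, Finset.mem_univ,
                true_and] at this
              rw [hflag] at this
              simp at this
          · intro haW
            have ha : a ∈ Sv := hWsub haW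
            have := h a
            simp only [ha, haW, if_true, Finset.mem_filter, Finset.mem_univ, true_and] at this
            exact ⟨ha, this⟩
      rw [Finset.filter_congr (fun f _ => hiff f)]
      rw [aux_card_pi]
      rw [aux_prod_card Sv _ r (2*r)
        (fun a ha => by
          simp only [ha, if_true]
          by_cases haW : a ∈ W <;> simp [haW, aux_card_snd])
        (fun a ha => by simp only [ha, if_false]; rw [Finset.card_univ]
                        simp [Fintype.card_prod, Nat.mul_comm])]
      rw [hSv, hScard, Fintype.card_coe, ← hn]
    rw [Finset.sum_congr rfl hfiber, Finset.sum_const, smul_eq_mul]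
    apply Nat.mul_le_mul_right
    have hPcard : P.card = ∑ j ∈ Finset.range t, k.choose j := by
      have hPeq : P = (Finset.range t).biUnion (fun j => Sv.powersetCard j) := by
        ext W
        simp only [hP, Finset.mem_filter, Finset.mem_powerset, Finset.mem_biUnion,
          Finset.mem_range, Finset.mem_powersetCard]
        constructor
        · rintro ⟨hsub, hlt⟩; exact ⟨W.card, hlt, hsub, rfl⟩
        · rintro ⟨j, hj, hsub, hcard⟩; exact ⟨hsub, hcard ▸ hj⟩
      rw [hPeq, Finset.card_biUnion]
      · apply Finset.sum_congr rfl
        intro j _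
        rw [Finset.card_powersetCard, hSv, hScard]
      · intro j₁ _ j₂ _ hne
        apply Finset.disjoint_left.mpr
        intro W h1 h2
        rw [Finset.mem_powersetCard] at h1 h2
        exact hne (h1.2 ▸ h2.2)
    rw [hPcard]
    exact aux_sum_choose k t h3t
  have hcardOmega : Fintype.card ({x // x ∈ A} → Fin r × Bool) = (2*r)^n := by
    rw [Fintype.card_fun, Fintype.card_prod, Fintype.card_bool, Fintype.card_coe]
    norm_num [Nat.mul_comm]
    rw [← hn]
  -- existence of a good random structure
  obtain ⟨f, hf1, hf2⟩ : ∃ f : {x // x ∈ A} → Fin r × Bool,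
      (Finset.univ.filter fun v => ¬ Good f v).card ≤ t ∧ ∀ v, ¬ Few f v := by
    set bad1 := Finset.univ.filter fun f : {x // x ∈ A} → Fin r × Bool =>
      t < (Finset.univ.filter fun v => ¬ Good f v).card with hbad1
    set bad2 := Finset.univ.filter fun f : {x // x ∈ A} → Fin r × Bool =>
      ∃ v, Few f v with hbad2
    have hm1 : (t + 1) * bad1.card ≤ (r * m) * ((2*r-1)^k * (2*r)^(n-k)) := by
      calc (t + 1) * bad1.card
          ≤ ∑ v : Fin r × Fin m, (Finset.univ.filter fun f : {x // x ∈ A} → Fin r × Bool =>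
              ¬ Good f v).card := aux_markov (fun v f => ¬ Good f v) t
        _ = (r * m) * ((2*r-1)^k * (2*r)^(n-k)) := by
            rw [Finset.sum_congr rfl (fun v _ => hbadv v), Finset.sum_const, smul_eq_mul,
              Finset.card_univ, Fintype.card_prod, Fintype.card_fin, Fintype.card_fin]
    have hm2 : bad2.card ≤ (r * m) * (k.choose t * (r^k * (2*r)^(n-k))) := by
      have hsub : bad2 ⊆ Finset.univ.biUnion
          (fun v : Fin r × Fin m => Finset.univ.filter
            fun f : {x // x ∈ A} → Fin r × Bool => Few f v) := by
        intro f hf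
        rw [hbad2, Finset.mem_filter] at hf
        obtain ⟨_, v, hv⟩ := hf
        exact Finset.mem_biUnion.mpr ⟨v, Finset.mem_univ v, Finset.mem_filter.mpr
          ⟨Finset.mem_univ f, hv⟩⟩
      calc bad2.card ≤ _ := Finset.card_le_card hsub
        _ ≤ ∑ v : Fin r × Fin m, (Finset.univ.filter
            fun f : {x // x ∈ A} → Fin r × Bool => Few f v).card := Finset.card_biUnion_le
        _ ≤ ∑ _v : Fin r × Fin m, k.choose t * (r^k * (2*r)^(n-k)) :=
            Finset.sum_le_sum (fun v _ => hfewv v)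
        _ = (r * m) * (k.choose t * (r^k * (2*r)^(n-k))) := by
            rw [Finset.sum_const, smul_eq_mul, Finset.card_univ, Fintype.card_prod,
              Fintype.card_fin, Fintype.card_fin]
    -- real arithmetic
    have h2r1 : 1 ≤ 2*r := by omega
    have hr1R : (1:ℝ) ≤ (r:ℝ) := by exact_mod_cast hr
    have h2rpos : (0:ℝ) < 2*(r:ℝ) := by linarith
    have hb1 : 2 * (bad1.card : ℝ) ≤ (2*(r:ℝ))^n := by
      have hR1 := aux_R1 m r Lt hm hr hL1 hLm
      rw [← hk, ← ht] at hR1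
      have hcast := (Nat.cast_le (α := ℝ)).mpr hm1
      push_cast [Nat.cast_sub h2r1] at hcast
      have hmul := mul_le_mul_of_nonneg_right hR1
        (show (0:ℝ) ≤ (2*(r:ℝ))^(n-k) from by positivity)
      have hsplitN : (2*(r:ℝ))^k * (2*(r:ℝ))^(n-k) = (2*(r:ℝ))^n := by
        rw [← pow_add]
        congr 1
        omega
      have hpos : (0:ℝ) < (t:ℝ)+1 := by positivity
      have e1 : ((t:ℝ)+1) * (2*(bad1.card:ℝ)) ≤ ((t:ℝ)+1) * ((2*(r:ℝ))^n) := by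
        calc ((t:ℝ)+1) * (2*(bad1.card:ℝ)) = 2*(((t:ℝ)+1) * (bad1.card:ℝ)) := by ring
          _ ≤ 2*((r:ℝ)*m*((2*(r:ℝ)-1)^k * (2*(r:ℝ))^(n-k))) := by linarith [hcast]
          _ = (2*((m:ℝ)*r)*(2*(r:ℝ)-1)^k) * (2*(r:ℝ))^(n-k) := by ring
          _ ≤ (((t:ℝ)+1)*(2*(r:ℝ))^k) * (2*(r:ℝ))^(n-k) := by
              apply mul_le_mul_of_nonneg_right _ (by positivity)
              exact_mod_cast hR1
          _ = ((t:ℝ)+1) * ((2*(r:ℝ))^n) := by rw [mul_assoc, hsplitN]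
      exact le_of_mul_le_mul_left e1 hpos
    have hb2 : 4 * (bad2.card : ℝ) ≤ (2*(r:ℝ))^n := by
      have hR2 := aux_R2 m r Lt hm hr hL1 hLm
      rw [← hk, ← ht] at hR2
      have hcast := (Nat.cast_le (α := ℝ)).mpr hm2
      push_cast at hcast
      have hmul := mul_le_mul_of_nonneg_right hR2
        (show (0:ℝ) ≤ (r:ℝ)^k * (2*(r:ℝ))^(n-k) from by positivity)
      have hsplitN : ((2:ℝ)^k * ((r:ℝ)^k * (2*(r:ℝ))^(n-k))) = (2*(r:ℝ))^n := by
        rw [← mul_assoc, ← mul_pow, ← pow_add]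
        congr 1
        omega
      calc 4*(bad2.card:ℝ)
          ≤ 4*((r:ℝ)*m*((k.choose t : ℝ) * ((r:ℝ)^k * (2*(r:ℝ))^(n-k)))) := by
            linarith [hcast]
        _ = (4*((m:ℝ)*r)*(k.choose t : ℝ)) * ((r:ℝ)^k * (2*(r:ℝ))^(n-k)) := by ring
        _ ≤ (2:ℝ)^k * ((r:ℝ)^k * (2*(r:ℝ))^(n-k)) := hmul
        _ = (2*(r:ℝ))^n := hsplitN
    have hfinal : bad1.card + bad2.card < Fintype.card ({x // x ∈ A} → Fin r × Bool) := by
      rw [hcardOmega]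
      have hNR : (0:ℝ) < (2*(r:ℝ))^n := pow_pos h2rpos n
      have hlt : (bad1.card:ℝ) + (bad2.card:ℝ) < (2*(r:ℝ))^n := by linarith [hb1, hb2]
      exact_mod_cast hlt
    by_contra hcon
    push_neg at hcon
    have hsub : (Finset.univ : Finset ({x // x ∈ A} → Fin r × Bool)) ⊆ bad1 ∪ bad2 := by
      intro f _
      by_cases hAf : (Finset.univ.filter fun v => ¬ Good f v).card ≤ t
      · obtain ⟨v, hv⟩ := hcon f hAf
        exact Finset.mem_union_right _ (Finset.mem_filter.mpr ⟨Finset.mem_univ f, v, hv⟩)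
      · exact Finset.mem_union_left _
          (Finset.mem_filter.mpr ⟨Finset.mem_univ f, lt_of_not_ge hAf⟩)
    have hcard := Finset.card_le_card hsub
    rw [Finset.card_univ] at hcard
    have hcub := Finset.card_union_le bad1 bad2
    omega
  -- build the coloring from f
  set Bset : Finset (Fin r × Fin m) := Finset.univ.filter (fun v => ¬ Good f v) with hBset
  have hBcard : Bset.card ≤ t := hf1
  have hHall : ∀ s : Finset {v // v ∈ Bset},
      s.card ≤ (s.biUnion (fun v => ((S v.1).filter fun a => (f a).2 = true))).card := by
    intro s
    rcases Finset.eq_empty_or_nonempty s with rfl | ⟨v₀, hv₀⟩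
    · simp
    · have h1 : s.card ≤ t := by
        calc s.card ≤ (Finset.univ : Finset {v // v ∈ Bset}).card :=
              Finset.card_le_card (Finset.subset_univ s)
          _ = Bset.card := by rw [Finset.card_univ, Fintype.card_coe]
          _ ≤ t := hBcard
      have h2 : t ≤ ((S v₀.1).filter fun a => (f a).2 = true).card :=
        le_of_not_gt (hf2 v₀.1)
      have h3 : ((S v₀.1).filter fun a => (f a).2 = true)
          ⊆ s.biUnion (fun v => ((S v.1).filter fun a => (f a).2 = true)) :=
        Finset.subset_biUnion_of_mem (fun v => ((S v.1).filter fun a => (f a).2 = true)) hv₀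
      exact h1.trans (h2.trans (Finset.card_le_card h3))
  obtain ⟨inj, hinjI, hinjMem⟩ :=
    (Finset.all_card_le_biUnion_card_iff_exists_injective
      (fun v : {v // v ∈ Bset} => ((S v.1).filter fun a => (f a).2 = true))).mp hHall
  refine ⟨fun v => if h : Good f v then ((h.choose : {x // x ∈ A}) : ℕ)
    else ((inj ⟨v, Finset.mem_filter.mpr ⟨Finset.mem_univ v, h⟩⟩ : {x // x ∈ A}) : ℕ), ?_, ?_⟩
  · intro v
    dsimp only
    by_cases h : Good f v
    · rw [dif_pos h]
      have hspec := h.choose_spec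
      have := (hSmem v h.choose).mp hspec.1
      exact hL1sub v this
    · rw [dif_neg h]
      have hmem := hinjMem ⟨v, Finset.mem_filter.mpr ⟨Finset.mem_univ v, h⟩⟩
      have := (Finset.mem_filter.mp hmem).1
      exact hL1sub v ((hSmem v _).mp this)
  · intro u v hadj hEq
    dsimp only at hEq
    have hne : u.1 ≠ v.1 := by
      simpa [completeMultipartite, SimpleGraph.comap_adj, SimpleGraph.top_adj] using hadj
    by_cases hu : Good f u <;> by_cases hv : Good f v
    · rw [dif_pos hu, dif_pos hv] at hEq
      have hEq2 : hu.choose = hv.choose := Subtype.coe_injective hEq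
      have h1 := hu.choose_spec.2
      have h2 := hv.choose_spec.2
      rw [hEq2, h2] at h1
      exact hne (congrArg Prod.fst h1).symm
    · rw [dif_pos hu, dif_neg hv] at hEq
      have hEq2 : hu.choose = inj ⟨v, Finset.mem_filter.mpr ⟨Finset.mem_univ v, hv⟩⟩ :=
        Subtype.coe_injective hEq
      have h1 := hu.choose_spec.2
      have h2 := (Finset.mem_filter.mp
        (hinjMem ⟨v, Finset.mem_filter.mpr ⟨Finset.mem_univ v, hv⟩⟩)).2
      rw [hEq2] at h1
      rw [h1] at h2
      simp at h2
    · rw [dif_neg hu, dif_pos hv] at hEq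
      have hEq2 : inj ⟨u, Finset.mem_filter.mpr ⟨Finset.mem_univ u, hu⟩⟩ = hv.choose :=
        Subtype.coe_injective hEq
      have h1 := hv.choose_spec.2
      have h2 := (Finset.mem_filter.mp
        (hinjMem ⟨u, Finset.mem_filter.mpr ⟨Finset.mem_univ u, hu⟩⟩)).2
      rw [hEq2, h1] at h2
      simp at h2
    · rw [dif_neg hu, dif_neg hv] at hEq
      have hEq2 := hinjI (Subtype.coe_injective hEq)
      have : u = v := congrArg Subtype.val hEq2
      exact hne (congrArg Prod.fst this)

/-- There is a constant `C > 0` such that for all `m ≥ 2` and `r ≥ 1`, the list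
chromatic number of the complete `r`-partite graph with parts of size `m` is at most
`C·r·log m`. -/
theorem list_chromatic_number_completeMultipartite :
    ∃ C : ℝ, 0 < C ∧ ∀ m r : ℕ, 2 ≤ m → 1 ≤ r →
      ((completeMultipartite r m).listChromaticNumber : ℝ) ≤ C * r * Real.log m := by
  refine ⟨64, by norm_num, ?_⟩
  intro m r hm hr
  have hmem := aux_core m r hm hr
  have hle : (completeMultipartite r m).listChromaticNumber ≤ 16 * r * (⌈Real.log m⌉₊ + 1) :=
    Nat.sInf_le hmem
  have hlogm : (0.6931471803 : ℝ) < Real.log m :=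
    lt_of_lt_of_le Real.log_two_gt_d9
      (Real.log_le_log (by norm_num) (by exact_mod_cast hm))
  have hceil : (⌈Real.log m⌉₊ : ℝ) < Real.log m + 1 :=
    Nat.ceil_lt_add_one (le_of_lt (lt_trans (by norm_num) hlogm))
  have hL4 : ((⌈Real.log m⌉₊ + 1 : ℕ) : ℝ) ≤ 4 * Real.log m := by
    push_cast
    nlinarith
  calc ((completeMultipartite r m).listChromaticNumber : ℝ)
      ≤ ((16 * r * (⌈Real.log m⌉₊ + 1) : ℕ) : ℝ) := by exact_mod_cast hle
    _ = 16 * (r:ℝ) * ((⌈Real.log m⌉₊ + 1 : ℕ) : ℝ) := by push_cast; ring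
    _ ≤ 16 * (r:ℝ) * (4 * Real.log m) := by
        apply mul_le_mul_of_nonneg_left hL4 (by positivity)
    _ = 64 * r * Real.log m := by ring
end
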